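/- arXiv:2012.05112 — 7 statements merged into one kernel-verified Lean document; each statement's English description precedes it below -/
import Mathlib

section
/- Let k, q ≥ 2 be integers and set f₁(k,q) = ((k−1)q+1)^{(k−1)q²+1}. Let T be a finite tree whose edges are labeled by elements of ℤ/qℤ, and let L be a set of leaves of T with |L| = f₁(k,q). Then there exist a subset L₀ ⊆ L with |L₀| = k and a residue a ∈ ℤ/qℤ such that for every three leaves x₁, x₂, x₃ ∈ L₀ there is a vertex v ∈ V(T) for which the three paths in T from v to x₁, x₂, x₃ are pairwise disjoint outside of v and each of these three paths has weight congruent to a modulo q. -/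
open SimpleGraph

/-- The weight of a walk in a graph whose edges are weighted by `w` (given as a
symmetric function on ordered pairs of vertices): the sum of the weights of the
traversed edges. -/
def walkWeight {V : Type*} {G : SimpleGraph V} {q : ℕ} (w : V → V → ZMod q)
    {u v : V} (p : G.Walk u v) : ZMod q :=
  (p.darts.map fun d => w d.toProd.1 d.toProd.2).sum

section Base
variable {V : Type} {T : SimpleGraph V}

noncomputable def tpath (hT : T.IsTree) (u v : V) : T.Walk u v :=
  (hT.existsUnique_path u v).exists.choose

variable (hT : T.IsTree)

lemma tpath_isPath (u v : V) : (tpath hT u v).IsPath :=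
  (hT.existsUnique_path u v).exists.choose_spec

lemma tpath_eq {u v : V} {p : T.Walk u v} (hp : p.IsPath) : p = tpath hT u v :=
  ((hT.existsUnique_path u v).unique hp (tpath_isPath hT u v))

lemma tpath_nil (v : V) : tpath hT v v = Walk.nil :=
  (tpath_eq hT (Walk.IsPath.nil)).symm

lemma tpath_reverse (u v : V) : tpath hT u v = (tpath hT v u).reverse :=
  (tpath_eq hT ((tpath_isPath hT v u).reverse)).symm

lemma mem_tpath_comm {u v z : V} (h : z ∈ (tpath hT u v).support) :
    z ∈ (tpath hT v u).support := by
  rw [tpath_reverse hT u v, Walk.support_reverse, List.mem_reverse] at h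
  exact h

lemma tpath_adj {u v : V} (h : T.Adj u v) : tpath hT u v = Walk.cons h Walk.nil := by
  refine (tpath_eq hT ?_).symm
  simp [Walk.isPath_def, h.ne]

lemma tpath_split {u v m : V} (hm : m ∈ (tpath hT u v).support) :
    tpath hT u v = (tpath hT u m).append (tpath hT m v) := by
  letI := Classical.decEq V
  have h1 : ((tpath hT u v).takeUntil m hm) = tpath hT u m :=
    tpath_eq hT ((tpath_isPath hT u v).takeUntil hm)
  have h2 : ((tpath hT u v).dropUntil m hm) = tpath hT m v :=
    tpath_eq hT ((tpath_isPath hT u v).dropUntil hm)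
  conv_lhs => rw [← Walk.take_spec (tpath hT u v) hm]
  rw [h1, h2]

lemma walk_eq_of_length_zero {u v : V} (p : T.Walk u v) (h : p.length = 0) : u = v := by
  cases p with
  | nil => rfl
  | cons h' p' => simp [Walk.length_cons] at h

lemma tpath_length_pos {u v : V} (h : u ≠ v) : 0 < (tpath hT u v).length :=
  Nat.pos_of_ne_zero fun h0 => h (walk_eq_of_length_zero _ h0)

lemma tpath_length_split {u v m : V} (hm : m ∈ (tpath hT u v).support) :
    (tpath hT u v).length = (tpath hT u m).length + (tpath hT m v).length := by
  rw [tpath_split hT hm, Walk.length_append]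

lemma tpath_antisymm {r a b : V} (ha : a ∈ (tpath hT r b).support)
    (hb : b ∈ (tpath hT r a).support) : a = b := by
  have h1 := tpath_length_split hT ha
  have h2 := tpath_length_split hT hb
  have h3 : (tpath hT a b).length = 0 := by
    have hba : (tpath hT b a).length = (tpath hT a b).length := by
      rw [tpath_reverse hT b a, Walk.length_reverse]
    omega
  exact walk_eq_of_length_zero _ h3

lemma between_trans {r a b z : V} (h1 : a ∈ (tpath hT r b).support)
    (h2 : z ∈ (tpath hT a b).support) : z ∈ (tpath hT r b).support := by
  rw [tpath_split hT h1, Walk.mem_support_append_iff]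
  exact Or.inr h2

lemma between_trans' {r a b z : V} (h1 : a ∈ (tpath hT r b).support)
    (h2 : z ∈ (tpath hT r a).support) : z ∈ (tpath hT r b).support := by
  rw [tpath_split hT h1, Walk.mem_support_append_iff]
  exact Or.inl h2

end Base

section Weight
variable {V : Type} {T : SimpleGraph V} {q : ℕ} (w : V → V → ZMod q)

lemma walkWeight_nil {v : V} : walkWeight w (Walk.nil : T.Walk v v) = 0 := rfl

lemma walkWeight_append {u v z : V} (p : T.Walk u v) (p' : T.Walk v z) :
    walkWeight w (p.append p') = walkWeight w p + walkWeight w p' := by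
  unfold walkWeight
  rw [Walk.darts_append, List.map_append, List.sum_append]

lemma walkWeight_reverse (hw : ∀ u v : V, w u v = w v u) {u v : V} (p : T.Walk u v) :
    walkWeight w p.reverse = walkWeight w p := by
  unfold walkWeight
  rw [Walk.darts_reverse, List.map_reverse, List.sum_reverse, List.map_map]
  congr 1
  apply List.map_congr_left
  intro d _
  exact (hw d.toProd.1 d.toProd.2).symm

end Weight

section Base2
variable {V : Type} {T : SimpleGraph V} (hT : T.IsTree) {q : ℕ} (w : V → V → ZMod q)

lemma tpath_weight_comm (hw : ∀ u v : V, w u v = w v u) (u v : V) :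
    walkWeight w (tpath hT u v) = walkWeight w (tpath hT v u) := by
  rw [tpath_reverse hT u v, walkWeight_reverse w hw]

lemma tpath_weight_split {u v m : V} (hm : m ∈ (tpath hT u v).support) :
    walkWeight w (tpath hT u v) = walkWeight w (tpath hT u m) + walkWeight w (tpath hT m v) := by
  rw [tpath_split hT hm, walkWeight_append]

/-- second vertex of the tree path from `u` to `v`. -/
noncomputable def tsnd (u v : V) : V := (tpath hT u v).getVert 1

lemma tsnd_adj {u v : V} (h : u ≠ v) : T.Adj u (tsnd hT u v) := by
  have hl : 0 < (tpath hT u v).length := tpath_length_pos hT h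
  have := (tpath hT u v).adj_getVert_succ hl
  rwa [Walk.getVert_zero] at this

lemma tsnd_ne {u v : V} (h : u ≠ v) : tsnd hT u v ≠ u :=
  fun he => (T.irrefl (he ▸ tsnd_adj hT h))

lemma tsnd_mem_support {u v : V} (h : u ≠ v) : tsnd hT u v ∈ (tpath hT u v).support := by
  rw [Walk.mem_support_iff_exists_getVert]
  exact ⟨1, rfl, tpath_length_pos hT h⟩

lemma tsnd_congr {u v m : V} (hm : m ∈ (tpath hT u v).support) (hmu : m ≠ u) :
    tsnd hT u v = tsnd hT u m := by
  have hsplit := tpath_split hT hm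
  have hlen : 0 < (tpath hT u m).length := tpath_length_pos hT (Ne.symm hmu)
  unfold tsnd
  rw [hsplit, Walk.getVert_append]
  by_cases h1 : 1 < (tpath hT u m).length
  · simp [h1]
  · have hlen1 : (tpath hT u m).length = 1 := by omega
    simp only [hlen1, lt_irrefl, if_false]
    rw [show (1:ℕ) - 1 = 0 from rfl, Walk.getVert_zero]
    rw [show (1:ℕ) = (tpath hT u m).length from hlen1.symm, Walk.getVert_length]

/-- `a` and `b` are separated at `v`: the tree paths from `v` to `a` and to `b`
meet only at `v`. -/
def sep (v a b : V) : Prop :=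
  ∀ z, z ∈ (tpath hT v a).support → z ∈ (tpath hT v b).support → z = v

lemma sep_symm {v a b : V} (h : sep hT v a b) : sep hT v b a :=
  fun z hz1 hz2 => h z hz2 hz1

lemma sep_of_tsnd_ne {v a b : V} (ha : a ≠ v) (hb : b ≠ v)
    (h : tsnd hT v a ≠ tsnd hT v b) : sep hT v a b := by
  intro z hza hzb
  by_contra hzv
  have h1 : tsnd hT v a = tsnd hT v z := tsnd_congr hT hza hzv
  have h2 : tsnd hT v b = tsnd hT v z := tsnd_congr hT hzb hzv
  exact h (h1.trans h2.symm)

lemma tsnd_ne_of_sep {v a b : V} (hsep : sep hT v a b) (ha : a ≠ v) (hb : b ≠ v) :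
    tsnd hT v a ≠ tsnd hT v b := by
  intro he
  have h1 : tsnd hT v a ∈ (tpath hT v a).support := tsnd_mem_support hT (Ne.symm ha)
  have h2 : tsnd hT v a ∈ (tpath hT v b).support := by
    rw [he]; exact tsnd_mem_support hT (Ne.symm hb)
  exact tsnd_ne hT (Ne.symm ha) (hsep _ h1 h2)

lemma sep_of_between {r x v : V} (h : v ∈ (tpath hT r x).support) : sep hT v r x := by
  intro z hzr hzx
  have hnodup : ((tpath hT r v).support ++ (tpath hT v x).support.tail).Nodup := by
    have := (tpath_isPath hT r x).support_nodup
    rw [tpath_split hT h, Walk.support_append] at this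
    exact this
  by_contra hzv
  have hz1 : z ∈ (tpath hT r v).support := mem_tpath_comm hT hzr
  have hz2 : z ∈ (tpath hT v x).support.tail := by
    have := (tpath hT v x).support_eq_cons
    rw [this] at hzx
    rcases List.mem_cons.mp hzx with h' | h'
    · exact absurd h' hzv
    · exact h'
  exact (List.disjoint_of_nodup_append hnodup) hz1 hz2

lemma sep_join {v a b : V} (hsep : sep hT v a b) :
    tpath hT a b = ((tpath hT v a).reverse).append (tpath hT v b) := by
  refine (tpath_eq hT ?_).symm
  rw [Walk.isPath_def, Walk.support_append, Walk.support_reverse]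
  have hna : (tpath hT v a).support.Nodup := (tpath_isPath hT v a).support_nodup
  have hnb : (tpath hT v b).support.Nodup := (tpath_isPath hT v b).support_nodup
  rw [List.nodup_append]
  refine ⟨List.nodup_reverse.mpr hna, hnb.tail, ?_⟩
  intro z hz1 z' hz2 hzz'
  subst hzz'
  have hz1' : z ∈ (tpath hT v a).support := List.mem_reverse.mp hz1
  have hz2' : z ∈ (tpath hT v b).support := by
    rw [(tpath hT v b).support_eq_cons]; exact List.mem_cons_of_mem _ hz2
  have hzv : z = v := hsep z hz1' hz2'
  have : v ∉ (tpath hT v b).support.tail := by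
    intro hmem
    have := (tpath_isPath hT v b).support_nodup
    rw [(tpath hT v b).support_eq_cons] at this
    exact (List.nodup_cons.mp this).1 hmem
  exact this (hzv ▸ hz2)

lemma sep_mem {v a b : V} (hsep : sep hT v a b) : v ∈ (tpath hT a b).support := by
  rw [sep_join hT hsep, Walk.mem_support_append_iff]
  exact Or.inl (by rw [Walk.support_reverse, List.mem_reverse]; exact Walk.start_mem_support _)

lemma sep_weight {v a b : V} (hsep : sep hT v a b) (hw : ∀ u v : V, w u v = w v u) :
    walkWeight w (tpath hT a b) = walkWeight w (tpath hT v a) + walkWeight w (tpath hT v b) := by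
  rw [sep_join hT hsep, walkWeight_append, walkWeight_reverse w hw]

lemma leaf_not_interior [Fintype V] [DecidableRel T.Adj] {x a b : V}
    (hdeg : T.degree x = 1) (hmem : x ∈ (tpath hT a b).support)
    (hxa : x ≠ a) (hxb : x ≠ b) : False := by
  letI := Classical.decEq V
  have hnodup : ((tpath hT a x).support ++ (tpath hT x b).support.tail).Nodup := by
    have := (tpath_isPath hT a b).support_nodup
    rw [tpath_split hT hmem, Walk.support_append] at this
    exact this
  set n₁ := tsnd hT x a with hn₁
  set n₂ := tsnd hT x b with hn₂
  have hadj1 : T.Adj x n₁ := tsnd_adj hT hxa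
  have hadj2 : T.Adj x n₂ := tsnd_adj hT hxb
  have hmem1 : n₁ ∈ (tpath hT a x).support :=
    mem_tpath_comm hT (tsnd_mem_support hT hxa)
  have hmem2 : n₂ ∈ (tpath hT x b).support.tail := by
    have h := tsnd_mem_support hT hxb
    rw [(tpath hT x b).support_eq_cons] at h
    rcases List.mem_cons.mp h with h' | h'
    · exact absurd h' (tsnd_ne hT hxb)
    · exact h'
  have hne : n₁ ≠ n₂ := fun he => (List.disjoint_of_nodup_append hnodup) hmem1 (he ▸ hmem2)
  have hsub : {n₁, n₂} ⊆ T.neighborFinset x := by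
    intro z hz
    rcases Finset.mem_insert.mp hz with h' | h'
    · rw [h']; exact (T.mem_neighborFinset x n₁).mpr hadj1
    · rw [Finset.mem_singleton] at h'; rw [h']; exact (T.mem_neighborFinset x n₂).mpr hadj2
  have h2 : ({n₁, n₂} : Finset V).card = 2 := Finset.card_pair hne
  have := Finset.card_le_card hsub
  rw [h2] at this
  rw [SimpleGraph.degree] at hdeg
  omega

end Base2

section Chain
variable {V : Type} {T : SimpleGraph V} (hT : T.IsTree)

lemma tsnd_of_adj {v v' : V} (h : T.Adj v v') : tsnd hT v v' = v' := by
  unfold tsnd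
  rw [tpath_adj hT h]
  rfl

lemma between_mid {r x v v' : V} (h1 : v ∈ (tpath hT r x).support)
    (h2 : v' ∈ (tpath hT v x).support) : v ∈ (tpath hT r v').support := by
  have hsplit : tpath hT r x = ((tpath hT r v).append (tpath hT v v')).append (tpath hT v' x) := by
    rw [tpath_split hT h1, tpath_split hT h2, ← Walk.append_assoc]
  have hpath : ((tpath hT r v).append (tpath hT v v')).IsPath := by
    have := tpath_isPath hT r x
    rw [hsplit] at this
    exact this.of_append_left
  have heq : (tpath hT r v).append (tpath hT v v') = tpath hT r v' := tpath_eq hT hpath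
  rw [← heq, Walk.mem_support_append_iff]
  exact Or.inl (Walk.end_mem_support _)

lemma between_lower {r z v v' : V} (hv : v ∈ (tpath hT r z).support)
    (hv' : v' ∈ (tpath hT r z).support) (hnot : v' ∉ (tpath hT r v).support) :
    v' ∈ (tpath hT v z).support := by
  rw [tpath_split hT hv, Walk.mem_support_append_iff] at hv'
  exact hv'.resolve_left hnot

/-- A chain of `n` "branching events" below `v`, relative to root `r`:
event vertices `u i` with side leaves `x i`. -/
def chainP (r : V) (n : ℕ) (v : V) (S : Finset V) : Prop :=
  ∃ u x : ℕ → V,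
    (∀ i, i < n → x i ∈ S) ∧
    (∀ i i', i < i' → i' < n → u i ∈ (tpath hT r (u i')).support ∧ u i ≠ u i') ∧
    (∀ i i', i < i' → i' < n → u i' ∈ (tpath hT (u i) (x i')).support) ∧
    (∀ i i', i < i' → i' < n → u i ∈ (tpath hT (u i') (x i)).support) ∧
    (∀ i, i < n → sep hT (u i) r (x i)) ∧
    (∀ i i', i < i' → i' < n → sep hT (u i) r (x i')) ∧
    (∀ i i', i < i' → i' < n → sep hT (u i) (x i) (x i')) ∧
    (∀ i, i < n → v ∈ (tpath hT r (u i)).support) ∧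
    (∀ i, i < n → u i ∈ (tpath hT v (x i)).support) ∧
    (∀ i, i < n → u i ≠ r) ∧
    (∀ i i', i < n → i' < n → x i' ≠ u i)

lemma chain_zero (r v : V) (S : Finset V) : chainP hT r 0 v S := by
  exact ⟨fun _ => v, fun _ => v, by omega, by omega, by omega, by omega, by omega,
    by omega, by omega, by omega, by omega, by omega, by omega⟩

lemma chain_one {r v : V} {S : Finset V} (hvr : v ≠ r)
    (hS : ∀ x ∈ S, x ≠ v ∧ v ∈ (tpath hT r x).support) (hne : S.Nonempty) :
    chainP hT r 1 v S := by
  obtain ⟨x₀, hx₀⟩ := hne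
  obtain ⟨hx₀v, hx₀b⟩ := hS x₀ hx₀
  refine ⟨fun _ => v, fun _ => x₀, fun i _ => hx₀, by omega, by omega, by omega,
    ?_, by omega, by omega, ?_, ?_, fun i _ => hvr, ?_⟩
  · intro i _; exact sep_of_between hT hx₀b
  · intro i _; exact Walk.end_mem_support _
  · intro i _; exact Walk.start_mem_support _
  · intro i i' _ _; exact hx₀v

lemma chain_extend {r v v' x₀ : V} {S S' : Finset V} {n : ℕ}
    (hvr : v ≠ r) (hS : ∀ x ∈ S, x ≠ v ∧ v ∈ (tpath hT r x).support)
    (hS' : S' ⊆ S) (hfiber : ∀ x ∈ S', tsnd hT v x = v')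
    (hadj : T.Adj v v')
    (hx₀S : x₀ ∈ S) (hx₀ : tsnd hT v x₀ ≠ v')
    (hS'ne : S'.Nonempty)
    (hch : chainP hT r n v' S') : chainP hT r (n + 1) v S := by
  obtain ⟨u, x, P1, P2, P3, P4, P5, P6, P7, P8, P9, P10, P13⟩ := hch
  have hv'v : v' ≠ v := hadj.ne'
  obtain ⟨xs, hxs⟩ := hS'ne
  -- basic facts
  have hfib_supp : ∀ y ∈ S', v' ∈ (tpath hT v y).support := fun y hy => by
    have := hfiber y hy
    rw [← this]
    exact tsnd_mem_support hT (Ne.symm (hS y (hS' hy)).1)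
  have hvv' : v ∈ (tpath hT r v').support :=
    between_mid hT (hS xs (hS' hxs)).2 (hfib_supp xs hxs)
  have hv'notrv : v' ∉ (tpath hT r v).support := fun hmem =>
    hv'v (tpath_antisymm hT hmem hvv')
  have hbelow_ne_v : ∀ z : V, v' ∈ (tpath hT r z).support → z ≠ v := by
    intro z hz hzv
    subst hzv
    exact hv'v (tpath_antisymm hT hz hvv')
  have hbelow_behind : ∀ z : V, v' ∈ (tpath hT r z).support → v ∈ (tpath hT r z).support :=
    fun z hz => between_trans' hT hz hvv'
  have hbelow_snd : ∀ z : V, v' ∈ (tpath hT r z).support → tsnd hT v z = v' := by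
    intro z hz
    have h1 : v' ∈ (tpath hT v z).support :=
      between_lower hT (hbelow_behind z hz) hz hv'notrv
    rw [tsnd_congr hT h1 hv'v, tsnd_of_adj hT hadj]
  have hx₀v : x₀ ≠ v := (hS x₀ hx₀S).1
  have hx₀_not_below : ∀ z : V, v' ∈ (tpath hT r z).support → x₀ ≠ z := by
    intro z hz he
    exact hx₀ (he ▸ hbelow_snd z hz)
  have hsep_x₀ : ∀ z : V, v' ∈ (tpath hT r z).support → sep hT v x₀ z := by
    intro z hz
    exact sep_of_tsnd_ne hT hx₀v (hbelow_ne_v z hz) (by rw [hbelow_snd z hz]; exact hx₀)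
  -- the u i's are below v'
  have hui_below : ∀ i, i < n → v' ∈ (tpath hT r (u i)).support := P8
  refine ⟨fun t => Nat.casesOn t v u, fun t => Nat.casesOn t x₀ x, ?_, ?_, ?_, ?_, ?_, ?_, ?_,
    ?_, ?_, ?_, ?_⟩
  · intro i hi
    cases i with
    | zero => exact hx₀S
    | succ t => exact hS' (P1 t (by omega))
  · intro i i' hii' hi'
    cases i with
    | zero =>
      cases i' with
      | zero => omega
      | succ t =>
        refine ⟨hbelow_behind _ (hui_below t (by omega)), ?_⟩
        exact Ne.symm (hbelow_ne_v _ (hui_below t (by omega)))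
    | succ t =>
      cases i' with
      | zero => omega
      | succ t' => exact P2 t t' (by omega) (by omega)
  · intro i i' hii' hi'
    cases i' with
    | zero => omega
    | succ t' =>
      cases i with
      | zero =>
        -- u t' ∈ supp (tpath v (x t'))
        exact between_trans hT (hfib_supp _ (P1 t' (by omega))) (P9 t' (by omega))
      | succ t => exact P3 t t' (by omega) (by omega)
  · intro i i' hii' hi'
    cases i' with
    | zero => omega
    | succ t' =>
      cases i with
      | zero =>
        -- v ∈ supp (tpath (u t') x₀)
        exact sep_mem hT (sep_symm hT (hsep_x₀ _ (hui_below t' (by omega))))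
      | succ t => exact P4 t t' (by omega) (by omega)
  · intro i hi
    cases i with
    | zero => exact sep_of_between hT (hS x₀ hx₀S).2
    | succ t => exact P5 t (by omega)
  · intro i i' hii' hi'
    cases i' with
    | zero => omega
    | succ t' =>
      cases i with
      | zero => exact sep_of_between hT (hS _ (hS' (P1 t' (by omega)))).2
      | succ t => exact P6 t t' (by omega) (by omega)
  · intro i i' hii' hi'
    cases i' with
    | zero => omega
    | succ t' =>
      cases i with
      | zero =>
        have hx' := P1 t' (by omega)
        refine sep_of_tsnd_ne hT hx₀v (hS _ (hS' hx')).1 ?_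
        show tsnd hT v x₀ ≠ tsnd hT v (x t')
        rw [hfiber _ hx']
        exact hx₀
      | succ t => exact P7 t t' (by omega) (by omega)
  · intro i hi
    cases i with
    | zero => exact Walk.end_mem_support _
    | succ t => exact hbelow_behind _ (hui_below t (by omega))
  · intro i hi
    cases i with
    | zero => exact Walk.start_mem_support _
    | succ t => exact between_trans hT (hfib_supp _ (P1 t (by omega))) (P9 t (by omega))
  · intro i hi
    cases i with
    | zero => exact hvr
    | succ t => exact P10 t (by omega)
  · intro i i' hi hi'
    cases i with
    | zero =>
      cases i' with
      | zero => exact hx₀v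
      | succ t' => exact (hS _ (hS' (P1 t' (by omega)))).1
    | succ t =>
      cases i' with
      | zero => exact hx₀_not_below _ (hui_below t (by omega))
      | succ t' => exact P13 t t' (by omega) (by omega)

lemma chain_rebase {r v v' : V} {S : Finset V} {n : ℕ}
    (hS : ∀ x ∈ S, x ≠ v ∧ v ∈ (tpath hT r x).support)
    (hfiber : ∀ x ∈ S, tsnd hT v x = v')
    (hadj : T.Adj v v')
    (hSne : S.Nonempty)
    (hch : chainP hT r n v' S) : chainP hT r n v S := by
  obtain ⟨u, x, P1, P2, P3, P4, P5, P6, P7, P8, P9, P10, P13⟩ := hch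
  have hv'v : v' ≠ v := hadj.ne'
  obtain ⟨xs, hxs⟩ := hSne
  have hfib_supp : ∀ y ∈ S, v' ∈ (tpath hT v y).support := fun y hy => by
    rw [← hfiber y hy]
    exact tsnd_mem_support hT (Ne.symm (hS y hy).1)
  have hvv' : v ∈ (tpath hT r v').support :=
    between_mid hT (hS xs hxs).2 (hfib_supp xs hxs)
  refine ⟨u, x, P1, P2, P3, P4, P5, P6, P7, ?_, ?_, P10, P13⟩
  · intro i hi
    exact between_trans' hT (P8 i hi) hvv'
  · intro i hi
    exact between_trans hT (hfib_supp _ (P1 i hi)) (P9 i hi)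

end Chain

section Main
variable {V : Type} {T : SimpleGraph V} {q : ℕ}

def trip (T : SimpleGraph V) (w : V → V → ZMod q) (a : ZMod q) (x₁ x₂ x₃ : V) : Prop :=
  ∃ (v : V) (p₁ : T.Walk v x₁) (p₂ : T.Walk v x₂) (p₃ : T.Walk v x₃),
    p₁.IsPath ∧ p₂.IsPath ∧ p₃.IsPath ∧
    walkWeight w p₁ = a ∧ walkWeight w p₂ = a ∧ walkWeight w p₃ = a ∧
    (∀ x, x ∈ p₁.support → x ∈ p₂.support → x = v) ∧
    (∀ x, x ∈ p₁.support → x ∈ p₃.support → x = v) ∧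
    (∀ x, x ∈ p₂.support → x ∈ p₃.support → x = v)

lemma trip_swap₁₂ {w : V → V → ZMod q} {a : ZMod q} {x₁ x₂ x₃ : V}
    (h : trip T w a x₁ x₂ x₃) : trip T w a x₂ x₁ x₃ := by
  obtain ⟨v, p₁, p₂, p₃, h1, h2, h3, h4, h5, h6, h7, h8, h9⟩ := h
  exact ⟨v, p₂, p₁, p₃, h2, h1, h3, h5, h4, h6, fun x hx hy => h7 x hy hx, h9, h8⟩

lemma trip_swap₂₃ {w : V → V → ZMod q} {a : ZMod q} {x₁ x₂ x₃ : V}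
    (h : trip T w a x₁ x₂ x₃) : trip T w a x₁ x₃ x₂ := by
  obtain ⟨v, p₁, p₂, p₃, h1, h2, h3, h4, h5, h6, h7, h8, h9⟩ := h
  exact ⟨v, p₁, p₃, p₂, h1, h3, h2, h4, h6, h5, h8, h7, fun x hx hy => h9 x hy hx⟩

def goalP (k : ℕ) (T : SimpleGraph V) (w : V → V → ZMod q) (L : Finset V) : Prop :=
  ∃ L₀ : Finset V, L₀ ⊆ L ∧ L₀.card = k ∧ ∃ a : ZMod q,
    ∀ x₁ ∈ L₀, ∀ x₂ ∈ L₀, ∀ x₃ ∈ L₀, x₁ ≠ x₂ → x₁ ≠ x₃ → x₂ ≠ x₃ →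
      trip T w a x₁ x₂ x₃

lemma goal_of_trips {k : ℕ} {w : V → V → ZMod q} {L J : Finset V} {a : ZMod q}
    (hJL : J ⊆ L) (hJcard : J.card = k)
    (h : ∀ x₁ ∈ J, ∀ x₂ ∈ J, ∀ x₃ ∈ J, x₁ ≠ x₂ → x₁ ≠ x₃ → x₂ ≠ x₃ → trip T w a x₁ x₂ x₃) :
    goalP k T w L :=
  ⟨J, hJL, hJcard, a, h⟩

lemma chain_to_goal (hT : T.IsTree) {k : ℕ} (hk : 2 ≤ k) (hq : 2 ≤ q)
    (w : V → V → ZMod q) (hw : ∀ u v : V, w u v = w v u) {L S : Finset V}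
    (hSL : S ⊆ L) {r v : V} (hch : chainP hT r ((k - 1) * q ^ 2 + 1) v S) :
    goalP k T w L := by
  classical
  haveI : NeZero q := ⟨by omega⟩
  obtain ⟨u, x, P1, P2, P3, P4, P5, P6, P7, _P8, _P9, P10, P13⟩ := hch
  set n := (k - 1) * q ^ 2 + 1 with hn
  set f : ℕ → ZMod q × ZMod q :=
    fun i => (walkWeight w (tpath hT r (u i)), walkWeight w (tpath hT (u i) (x i))) with hf
  have hcard : (Finset.univ : Finset (ZMod q × ZMod q)).card * (k - 1) < (Finset.range n).card := by
    rw [Finset.card_univ, Fintype.card_prod, ZMod.card, Finset.card_range]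
    have he : (k - 1) * q ^ 2 + 1 = q * q * (k - 1) + 1 := by ring
    omega
  obtain ⟨y, -, hy⟩ := Finset.exists_lt_card_fiber_of_mul_lt_card_of_maps_to
    (f := f) (fun i _ => Finset.mem_univ (f i)) hcard
  have hk' : k ≤ ((Finset.range n).filter fun i => f i = y).card := by omega
  obtain ⟨J, hJF, hJcard⟩ := Finset.exists_subset_card_eq hk'
  have hJmem : ∀ i ∈ J, i < n ∧ f i = y := by
    intro i hi
    have := hJF hi
    rw [Finset.mem_filter, Finset.mem_range] at this
    exact this
  -- injectivity of x on J-indices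
  have hxne : ∀ i i', i < i' → i' < n → x i ≠ x i' := by
    intro i i' hii' hi' he
    have hsep := P7 i i' hii' hi'
    have h1 : x i ∈ (tpath hT (u i) (x i)).support := Walk.end_mem_support _
    have h2 : x i ∈ (tpath hT (u i) (x i')).support := by
      rw [he]; exact Walk.end_mem_support _
    exact P13 i i (by omega) (by omega) (hsep _ h1 h2)
  have hinj : Set.InjOn x J := by
    intro i hi i' hi' he
    by_contra hne
    rcases Nat.lt_or_ge i i' with h | h
    · exact hxne i i' h (hJmem i' hi').1 he
    · have : i' < i := by omega
      exact hxne i' i this (hJmem i hi).1 he.symm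
  -- the common weights
  have hfy : ∀ i ∈ J, walkWeight w (tpath hT r (u i)) = y.1 ∧
      walkWeight w (tpath hT (u i) (x i)) = y.2 := by
    intro i hi
    have := (hJmem i hi).2
    rw [hf] at this
    exact ⟨congrArg Prod.fst this, congrArg Prod.snd this⟩
  have hzero : ∀ i i', i ∈ J → i' ∈ J → i < i' →
      walkWeight w (tpath hT (u i') (u i)) = 0 := by
    intro i i' hi hi' hii'
    have hmem := (P2 i i' hii' (hJmem i' hi').1).1
    have hsplit := tpath_weight_split hT w hmem (u := r) (v := u i')
    rw [(hfy i' hi').1, (hfy i hi).1] at hsplit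
    have : walkWeight w (tpath hT (u i) (u i')) = 0 := by
      have := hsplit.symm
      rwa [left_eq_add] at hsplit
    rw [tpath_weight_comm hT w hw]
    exact this
  have key : ∀ i ∈ J, ∀ j ∈ J, ∀ l ∈ J, i < j → j < l → trip T w y.2 (x i) (x j) (x l) := by
    intro i hi j hj l hl hij hjl
    have hjn := (hJmem j hj).1
    have hln := (hJmem l hl).1
    have hin := (hJmem i hi).1
    refine ⟨u j, tpath hT (u j) (x i), tpath hT (u j) (x j), tpath hT (u j) (x l),
      tpath_isPath hT _ _, tpath_isPath hT _ _, tpath_isPath hT _ _, ?_, ?_, ?_, ?_, ?_, ?_⟩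
    · -- weight of path to x i
      rw [tpath_weight_split hT w (P4 i j hij hjn), hzero i j hi hj hij, (hfy i hi).2, zero_add]
    · exact (hfy j hj).2
    · rw [tpath_weight_split hT w (P3 j l hjl hln)]
      have h0 : walkWeight w (tpath hT (u j) (u l)) = 0 := by
        have hmem := (P2 j l hjl hln).1
        have hsplit := tpath_weight_split hT w hmem (u := r) (v := u l)
        rw [(hfy l hl).1, (hfy j hj).1] at hsplit
        rwa [left_eq_add] at hsplit
      rw [h0, (hfy l hl).2, zero_add]
    · -- sep between path to x i and path to x j
      have hsnd : tsnd hT (u j) (x i) = tsnd hT (u j) r := by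
        have hm1 : u i ∈ (tpath hT (u j) (x i)).support := P4 i j hij hjn
        have hm2 : u i ∈ (tpath hT (u j) r).support :=
          mem_tpath_comm hT (P2 i j hij hjn).1
        rw [tsnd_congr hT hm1 (P2 i j hij hjn).2, tsnd_congr hT hm2 (P2 i j hij hjn).2]
      have hne2 : tsnd hT (u j) r ≠ tsnd hT (u j) (x j) :=
        tsnd_ne_of_sep hT (P5 j hjn) (Ne.symm (P10 j hjn)) (P13 j j hjn hjn)
      exact sep_of_tsnd_ne hT (P13 j i hjn hin) (P13 j j hjn hjn) (by rw [hsnd]; exact hne2)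
    · have hsnd : tsnd hT (u j) (x i) = tsnd hT (u j) r := by
        have hm1 : u i ∈ (tpath hT (u j) (x i)).support := P4 i j hij hjn
        have hm2 : u i ∈ (tpath hT (u j) r).support :=
          mem_tpath_comm hT (P2 i j hij hjn).1
        rw [tsnd_congr hT hm1 (P2 i j hij hjn).2, tsnd_congr hT hm2 (P2 i j hij hjn).2]
      have hne2 : tsnd hT (u j) r ≠ tsnd hT (u j) (x l) :=
        tsnd_ne_of_sep hT (P6 j l hjl hln) (Ne.symm (P10 j hjn)) (P13 j l hjn hln)
      exact sep_of_tsnd_ne hT (P13 j i hjn hin) (P13 j l hjn hln) (by rw [hsnd]; exact hne2)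
    · exact P7 j l hjl hln
  -- assemble
  refine goal_of_trips (a := y.2) (J := J.image x) ?_ ?_ ?_
  · intro z hz
    obtain ⟨i, hi, rfl⟩ := Finset.mem_image.mp hz
    exact hSL (P1 i (hJmem i hi).1)
  · rw [Finset.card_image_of_injOn hinj, hJcard]
  · intro y₁ hy₁ y₂ hy₂ y₃ hy₃ h12 h13 h23
    obtain ⟨i₁, hi₁, rfl⟩ := Finset.mem_image.mp hy₁
    obtain ⟨i₂, hi₂, rfl⟩ := Finset.mem_image.mp hy₂
    obtain ⟨i₃, hi₃, rfl⟩ := Finset.mem_image.mp hy₃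
    have d12 : i₁ ≠ i₂ := fun h => h12 (by rw [h])
    have d13 : i₁ ≠ i₃ := fun h => h13 (by rw [h])
    have d23 : i₂ ≠ i₃ := fun h => h23 (by rw [h])
    rcases Nat.lt_or_ge i₁ i₂ with h1 | h1 <;> rcases Nat.lt_or_ge i₁ i₃ with h2 | h2 <;>
      rcases Nat.lt_or_ge i₂ i₃ with h3 | h3
    · exact key i₁ hi₁ i₂ hi₂ i₃ hi₃ h1 h3
    · exact trip_swap₂₃ (key i₁ hi₁ i₃ hi₃ i₂ hi₂ (by omega) (by omega))
    · exact absurd h3 (by omega)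
    · exact trip_swap₂₃ (trip_swap₁₂ (key i₃ hi₃ i₁ hi₁ i₂ hi₂ (by omega) (by omega)))
    · exact trip_swap₁₂ (key i₂ hi₂ i₁ hi₁ i₃ hi₃ (by omega) (by omega))
    · exact absurd h2 (by omega)
    · exact trip_swap₁₂ (trip_swap₂₃ (key i₂ hi₂ i₃ hi₃ i₁ hi₁ (by omega) (by omega)))
    · exact trip_swap₁₂ (trip_swap₂₃ (trip_swap₁₂ (key i₃ hi₃ i₂ hi₂ i₁ hi₁ (by omega) (by omega))))

end Main

section Descent
variable {V : Type} [Fintype V] {T : SimpleGraph V} [DecidableRel T.Adj]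

lemma star_case [DecidableEq V] (hT : T.IsTree) {k q : ℕ} (hk : 2 ≤ k) (hq : 2 ≤ q)
    (w : V → V → ZMod q) {L S : Finset V} (hSL : S ⊆ L) (v : V)
    (hS : ∀ x ∈ S, x ≠ v)
    (hB : (k - 1) * q + 1 ≤ (S.image (fun x => tsnd hT v x)).card) :
    goalP k T w L := by
  classical
  haveI : NeZero q := ⟨by omega⟩
  set g : V → V := fun b => if h : ∃ x ∈ S, tsnd hT v x = b then h.choose else v with hg
  have hgspec : ∀ b ∈ S.image (fun x => tsnd hT v x), g b ∈ S ∧ tsnd hT v (g b) = b := by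
    intro b hb
    obtain ⟨x, hx, hxb⟩ := Finset.mem_image.mp hb
    have h : ∃ x ∈ S, tsnd hT v x = b := ⟨x, hx, hxb⟩
    rw [hg]
    simp only [dif_pos h]
    exact ⟨h.choose_spec.1, h.choose_spec.2⟩
  set C := (S.image (fun x => tsnd hT v x)).image g with hC
  have hCS : C ⊆ S := by
    intro z hz
    obtain ⟨b, hb, rfl⟩ := Finset.mem_image.mp hz
    exact (hgspec b hb).1
  have hCsnd : ∀ z ∈ C, ∀ z' ∈ C, tsnd hT v z = tsnd hT v z' → z = z' := by
    intro z hz z' hz'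
    obtain ⟨b, hb, rfl⟩ := Finset.mem_image.mp hz
    obtain ⟨b', hb', rfl⟩ := Finset.mem_image.mp hz'
    rw [(hgspec b hb).2, (hgspec b' hb').2]
    intro h; rw [h]
  have hCcard : (k - 1) * q + 1 ≤ C.card := by
    rw [hC, Finset.card_image_of_injOn]
    · exact hB
    · intro b hb b' hb' he
      rw [← (hgspec b hb).2, ← (hgspec b' hb').2, he]
  have hpig : (Finset.univ : Finset (ZMod q)).card * (k - 1) < C.card := by
    rw [Finset.card_univ, ZMod.card]
    have : q * (k - 1) < (k - 1) * q + 1 := by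
      rw [mul_comm]; omega
    omega
  obtain ⟨a, -, ha⟩ := Finset.exists_lt_card_fiber_of_mul_lt_card_of_maps_to
    (f := fun z => walkWeight w (tpath hT v z)) (fun i _ => Finset.mem_univ _) hpig
  have hk' : k ≤ (C.filter fun z => walkWeight w (tpath hT v z) = a).card := by omega
  obtain ⟨J, hJF, hJcard⟩ := Finset.exists_subset_card_eq hk'
  have hJmem : ∀ z ∈ J, z ∈ C ∧ walkWeight w (tpath hT v z) = a := by
    intro z hz
    have := hJF hz
    rw [Finset.mem_filter] at this
    exact this
  refine goal_of_trips (a := a) (J := J) (fun z hz => hSL (hCS (hJmem z hz).1)) hJcard ?_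
  intro y₁ hy₁ y₂ hy₂ y₃ hy₃ h12 h13 h23
  have hsep : ∀ z ∈ J, ∀ z' ∈ J, z ≠ z' → sep hT v z z' := by
    intro z hz z' hz' hne
    refine sep_of_tsnd_ne hT (hS _ (hCS (hJmem z hz).1)) (hS _ (hCS (hJmem z' hz').1)) ?_
    intro he
    exact hne (hCsnd z (hJmem z hz).1 z' (hJmem z' hz').1 he)
  exact ⟨v, tpath hT v y₁, tpath hT v y₂, tpath hT v y₃,
    tpath_isPath hT _ _, tpath_isPath hT _ _, tpath_isPath hT _ _,
    (hJmem y₁ hy₁).2, (hJmem y₂ hy₂).2, (hJmem y₃ hy₃).2,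
    hsep y₁ hy₁ y₂ hy₂ h12, hsep y₁ hy₁ y₃ hy₃ h13, hsep y₂ hy₂ y₃ hy₃ h23⟩

lemma descent (hT : T.IsTree) {k q : ℕ} (hk : 2 ≤ k) (hq : 2 ≤ q)
    (w : V → V → ZMod q) (hw : ∀ u v : V, w u v = w v u) (L : Finset V)
    (hleaf : ∀ x ∈ L, T.degree x = 1) (r : V) :
    ∀ m : ℕ, ∀ j : ℕ, ∀ v : V, ∀ S : Finset V,
      (∑ x ∈ S, (tpath hT v x).length) ≤ m → S ⊆ L → v ≠ r →
      (∀ x ∈ S, x ≠ v ∧ v ∈ (tpath hT r x).support) →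
      ((k - 1) * q + 1) ^ j ≤ S.card + 2 →
      goalP k T w L ∨ chainP hT r j v S := by
  classical
  intro m
  induction m using Nat.strong_induction_on with
  | _ m IH =>
    intro j v S hm hSL hvr hS hcard
    set M := (k - 1) * q + 1 with hM
    have hM3 : 3 ≤ M := by
      have : 1 * 2 ≤ (k - 1) * q := Nat.mul_le_mul (by omega) (by omega)
      omega
    obtain _ | _ | jj := j
    · exact Or.inr (chain_zero hT r v S)
    · have hSne : S.Nonempty := by
        rw [← Finset.card_pos]
        have hM1 : M ^ (0 + 1) ≤ S.card + 2 := hcard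
        rw [pow_one] at hM1
        omega
      exact Or.inr (chain_one hT hvr hS hSne)
    · have hcard2 : M ^ (jj + 2) ≤ S.card + 2 := hcard
      have hpow : M ^ 2 ≤ M ^ (jj + 2) := Nat.pow_le_pow_right (by omega) (by omega)
      have hM2 : 9 ≤ M ^ 2 := by
        have : 3 * 3 ≤ M * M := Nat.mul_le_mul hM3 hM3
        rw [pow_two]; omega
      have hS7 : 7 ≤ S.card := by omega
      have hSne : S.Nonempty := by rw [← Finset.card_pos]; omega
      set B := S.image (fun x => tsnd hT v x) with hB
      by_cases hBcard : M ≤ B.card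
      · exact Or.inl (star_case hT hk hq w hSL v (fun x hx => (hS x hx).1) hBcard)
      -- few branches: find the big fiber
      · have hBne : B.Nonempty := hSne.image _
        obtain ⟨b, hbB, hbmax⟩ := Finset.exists_max_image B
          (fun b => (S.filter (fun x => tsnd hT v x = b)).card) hBne
        set S' := S.filter (fun x => tsnd hT v x = b) with hS'
        have hS'S : S' ⊆ S := Finset.filter_subset _ _
        have hfiber : ∀ x ∈ S', tsnd hT v x = b := fun x hx => (Finset.mem_filter.mp hx).2
        obtain ⟨xb, hxbS, hxbsnd⟩ := Finset.mem_image.mp hbB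
        have hadj : T.Adj v b := hxbsnd ▸ tsnd_adj hT (Ne.symm (hS xb hxbS).1)
        have hbv : b ≠ v := hadj.ne'
        -- cardinality of the big fiber
        have hsum : S.card = ∑ b' ∈ B, (S.filter (fun x => tsnd hT v x = b')).card :=
          Finset.card_eq_sum_card_fiberwise (fun x hx => Finset.mem_image_of_mem _ hx)
        have hSB : S.card ≤ B.card * S'.card := by
          calc S.card = ∑ b' ∈ B, (S.filter (fun x => tsnd hT v x = b')).card := hsum
            _ ≤ B.card • S'.card := Finset.sum_le_card_nsmul _ _ _ (fun b' hb' => hbmax b' hb')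
            _ = B.card * S'.card := by rw [smul_eq_mul]
        have hBM : B.card ≤ M - 1 := by omega
        have h1 : M ^ (jj + 2) ≤ (M - 1) * S'.card + 2 := by
          have hmul : B.card * S'.card ≤ (M - 1) * S'.card :=
            Nat.mul_le_mul hBM (le_refl _)
          omega
        have hS'card : M ^ (jj + 1) ≤ S'.card + 2 := by
          have h2 : (M - 1) * S'.card + 2 ≤ (M - 1) * (S'.card + 2) := by
            have he : (M - 1) * (S'.card + 2) = (M - 1) * S'.card + (M - 1) * 2 := by ring
            omega
          have h3 : M * M ^ (jj + 1) ≤ (M - 1) * (S'.card + 2) := by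
            have he : M * M ^ (jj + 1) = M ^ (jj + 2) := by ring
            omega
          have h4 : (M - 1) * (S'.card + 2) < M * (S'.card + 2) :=
            Nat.mul_lt_mul_of_lt_of_le (by omega) (le_refl _) (by omega)
          have h5 : M ^ (jj + 1) < S'.card + 2 :=
            Nat.lt_of_mul_lt_mul_left (lt_of_le_of_lt h3 h4)
          omega
        have hS'2 : 2 ≤ S'.card := by
          by_contra hcon
          push_neg at hcon
          have hle : (M - 1) * S'.card ≤ (M - 1) * 1 := Nat.mul_le_mul (le_refl _) (by omega)
          have hMM : M ^ 2 = M * M := pow_two M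
          have h3M : 3 * M ≤ M * M := Nat.mul_le_mul hM3 (le_refl M)
          omega
        have hS'ne : S'.Nonempty := by rw [← Finset.card_pos]; omega
        -- b is not a leaf in S
        have hbS : b ∉ S := by
          intro hbmem
          have hbS' : b ∈ S' := by
            rw [hS', Finset.mem_filter]
            exact ⟨hbmem, tsnd_of_adj hT hadj⟩
          obtain ⟨x₂, hx₂S', hx₂b⟩ := Finset.exists_mem_ne (s := S') (by omega) b
          have hx₂mem : b ∈ (tpath hT v x₂).support := by
            rw [← hfiber x₂ hx₂S']
            exact tsnd_mem_support hT (Ne.symm (hS x₂ (hS'S hx₂S')).1)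
          exact leaf_not_interior hT (hleaf b (hSL hbmem)) hx₂mem hbv (Ne.symm hx₂b)
        have hfib_supp : ∀ y ∈ S', b ∈ (tpath hT v y).support := fun y hy => by
          rw [← hfiber y hy]
          exact tsnd_mem_support hT (Ne.symm (hS y (hS'S hy)).1)
        have hvb : v ∈ (tpath hT r b).support := by
          obtain ⟨xs, hxs⟩ := hS'ne
          exact between_mid hT (hS xs (hS'S hxs)).2 (hfib_supp xs hxs)
        have hbr : b ≠ r := by
          intro he
          subst he
          rw [tpath_nil hT] at hvb
          simp [Walk.support_nil] at hvb
          exact hvr hvb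
        have hS'inv : ∀ x ∈ S', x ≠ b ∧ b ∈ (tpath hT r x).support := by
          intro x hx
          refine ⟨fun he => hbS (he ▸ hS'S hx), ?_⟩
          exact between_trans hT (hS x (hS'S hx)).2 (hfib_supp x hx)
        -- measure decreases
        have hlen : ∀ x ∈ S', (tpath hT b x).length + 1 = (tpath hT v x).length := by
          intro x hx
          have := tpath_length_split hT (hfib_supp x hx)
          rw [tpath_adj hT hadj] at this
          simp [Walk.length_cons, Walk.length_nil] at this
          omega
        have hmeas : (∑ x ∈ S', (tpath hT b x).length) < ∑ x ∈ S, (tpath hT v x).length := by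
          calc (∑ x ∈ S', (tpath hT b x).length)
              < ∑ x ∈ S', (tpath hT v x).length := by
                apply Finset.sum_lt_sum_of_nonempty hS'ne
                intro x hx
                have := hlen x hx
                omega
            _ ≤ ∑ x ∈ S, (tpath hT v x).length :=
                Finset.sum_le_sum_of_subset hS'S
        by_cases hB1 : 2 ≤ B.card
        · -- an event happens at v
          obtain ⟨b₀, hb₀B, hb₀ne⟩ := Finset.exists_mem_ne (s := B) (by omega) b
          obtain ⟨x₀, hx₀S, hx₀snd⟩ := Finset.mem_image.mp hb₀B
          have hx₀ : tsnd hT v x₀ ≠ b := by rw [hx₀snd]; exact hb₀ne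
          rcases IH _ (lt_of_lt_of_le hmeas hm) (jj + 1) b S' le_rfl
            (hS'S.trans hSL) hbr hS'inv hS'card with hgoal | hch
          · exact Or.inl hgoal
          · exact Or.inr (chain_extend hT hvr hS hS'S hfiber hadj hx₀S hx₀ hS'ne hch)
        · -- single branch: pass through
          have hBone : B.card = 1 := by
            have : 0 < B.card := Finset.card_pos.mpr hBne
            omega
          have hallfib : ∀ x ∈ S, tsnd hT v x = b := by
            intro x hx
            have hmem : tsnd hT v x ∈ B := Finset.mem_image_of_mem _ hx
            have := Finset.card_le_one.mp (le_of_eq hBone) _ hmem _ hbB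
            exact this
          have hSS' : S' = S := by
            rw [hS']
            apply Finset.filter_true_of_mem
            exact hallfib
          rw [hSS'] at hmeas hS'inv
          rcases IH _ (lt_of_lt_of_le hmeas hm) (jj + 2) b S le_rfl
            hSL hbr hS'inv hcard2 with hgoal | hch
          · exact Or.inl hgoal
          · exact Or.inr (chain_rebase hT hS hallfib hadj hSne hch)

end Descent


/-- Key lemma:  with `f₁(k,q) = ((k-1)q+1)^((k-1)q²+1)`, for every tree `T` with edges
labeled by elements of `ℤ/q` and every set `L` of `f₁(k,q)` leaves of `T`, there are a
subset `L₀ ⊆ L` of `k` leaves and a residue `a ∈ ℤ/q` such that every three distinct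
leaves of `L₀` are joined to a common vertex `v` by three paths that are pairwise
disjoint outside of `v` and all have weight `a` modulo `q`. -/
theorem tree_leaves_common_branch_vertex
    (k q : ℕ) (hk : 2 ≤ k) (hq : 2 ≤ q)
    (V : Type) [Fintype V] (T : SimpleGraph V) [DecidableRel T.Adj]
    (hT : T.IsTree)
    (w : V → V → ZMod q) (hw : ∀ u v : V, w u v = w v u)
    (L : Finset V) (hleaf : ∀ x ∈ L, T.degree x = 1)
    (hcard : L.card = ((k - 1) * q + 1) ^ ((k - 1) * q ^ 2 + 1)) :
    ∃ L₀ : Finset V, L₀ ⊆ L ∧ L₀.card = k ∧ ∃ a : ZMod q,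
      ∀ x₁ ∈ L₀, ∀ x₂ ∈ L₀, ∀ x₃ ∈ L₀, x₁ ≠ x₂ → x₁ ≠ x₃ → x₂ ≠ x₃ →
        ∃ (v : V) (p₁ : T.Walk v x₁) (p₂ : T.Walk v x₂) (p₃ : T.Walk v x₃),
          p₁.IsPath ∧ p₂.IsPath ∧ p₃.IsPath ∧
          walkWeight w p₁ = a ∧ walkWeight w p₂ = a ∧ walkWeight w p₃ = a ∧
          (∀ x, x ∈ p₁.support → x ∈ p₂.support → x = v) ∧
          (∀ x, x ∈ p₁.support → x ∈ p₃.support → x = v) ∧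
          (∀ x, x ∈ p₂.support → x ∈ p₃.support → x = v) := by

  classical
  set M := (k - 1) * q + 1 with hM
  set N := (k - 1) * q ^ 2 + 1 with hN
  have hM3 : 3 ≤ M := by
    have : 1 * 2 ≤ (k - 1) * q := Nat.mul_le_mul (by omega) (by omega)
    omega
  have hLcard : M ^ N ≤ L.card := le_of_eq hcard.symm
  have hLpos : 0 < L.card := by
    have : 0 < M ^ N := Nat.pow_pos (by omega)
    omega
  obtain ⟨r, hrL⟩ := Finset.card_pos.mp hLpos
  have hrdeg : T.degree r = 1 := hleaf r hrL
  have hnbr_pos : 0 < (T.neighborFinset r).card := by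
    rw [← SimpleGraph.degree]; omega
  obtain ⟨v₀, hv₀⟩ := Finset.card_pos.mp hnbr_pos
  have hadj : T.Adj r v₀ := (T.mem_neighborFinset r v₀).mp hv₀
  have hv₀r : v₀ ≠ r := hadj.ne'
  set S₀ := (L.erase r).erase v₀ with hS₀
  have hS₀L : S₀ ⊆ L := (Finset.erase_subset _ _).trans (Finset.erase_subset _ _)
  have hS₀inv : ∀ x ∈ S₀, x ≠ v₀ ∧ v₀ ∈ (tpath hT r x).support := by
    intro x hx
    have hxv₀ : x ≠ v₀ := (Finset.mem_erase.mp hx).1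
    have hxr : x ≠ r := (Finset.mem_erase.mp (Finset.mem_erase.mp hx).2).1
    refine ⟨hxv₀, ?_⟩
    have hsnd_adj : T.Adj r (tsnd hT r x) := tsnd_adj hT (Ne.symm hxr)
    have hsnd_mem : tsnd hT r x ∈ T.neighborFinset r :=
      (T.mem_neighborFinset r _).mpr hsnd_adj
    have hone : (T.neighborFinset r).card ≤ 1 := by
      rw [← SimpleGraph.degree]; omega
    have : tsnd hT r x = v₀ := Finset.card_le_one.mp hone _ hsnd_mem _ hv₀
    rw [← this]
    exact tsnd_mem_support hT (Ne.symm hxr)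
  have hS₀card : M ^ N ≤ S₀.card + 2 := by
    have h1 : L.card - 1 ≤ (L.erase r).card := Finset.pred_card_le_card_erase
    have h2 : (L.erase r).card - 1 ≤ S₀.card := Finset.pred_card_le_card_erase
    omega
  rcases descent hT hk hq w hw L hleaf r _ N v₀ S₀ le_rfl hS₀L hv₀r hS₀inv hS₀card
    with hgoal | hch
  · exact hgoal
  · exact chain_to_goal hT hk hq w hw hS₀L hch
end

section
/- Let q ≥ 2 be an integer, and let Γ = (V,E) be a complete digraph on ⌈2q·ln q⌉ vertices whose edges carry weights w(e) ∈ ℤ/qℤ. Then Γ contains a directed cycle C whose total weight (the sum of the weights of its edges) is divisible by q. -/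
open Finset

section Engine

variable {V : Type} {G : Type} [AddCommGroup G]

/-- Existence of a zero-sum directed cycle. -/
def HasZC (w : V → V → G) : Prop :=
  ∃ (m : ℕ) (c : Fin (m + 2) → V), Function.Injective c ∧
    ∑ i : Fin (m + 2), w (c i) (c (i + 1)) = 0

/-- Weight of a path given by its sequence of vertices. -/
def psum (w : V → V → G) {t : ℕ} (p : Fin (t + 1) → V) : G :=
  ∑ i : Fin t, w (p i.castSucc) (p i.succ)

lemma fin_castSucc_add_one {n : ℕ} (i : Fin (n + 1)) :
    i.castSucc + 1 = i.succ := by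
  apply Fin.ext
  rw [Fin.val_add_one_of_lt (Fin.castSucc_lt_last i)]
  simp

lemma fin_ne_add_one {m : ℕ} (i : Fin (m + 2)) : i ≠ i + 1 := by
  intro h
  have h2 := congrArg Fin.val h
  rw [Fin.val_add_one] at h2
  split_ifs at h2 with hl
  · rw [hl] at h2; simp [Fin.last] at h2
  · omega

lemma vec2_inj {x y : V} (h : x ≠ y) : Function.Injective ![x, y] := by
  intro i j hij
  fin_cases i <;> fin_cases j <;> simp_all

lemma vec3_inj {x y z : V} (h1 : x ≠ y) (h2 : y ≠ z) (h3 : x ≠ z) :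
    Function.Injective ![x, y, z] := by
  intro i j hij
  fin_cases i <;> fin_cases j <;> simp_all

lemma cyc2_sum (w : V → V → G) (x y : V) :
    ∑ i : Fin 2, w (![x, y] i) (![x, y] (i + 1)) = w x y + w y x := by
  have e1 : ((0 : Fin 2) + 1) = 1 := by decide
  have e2 : ((1 : Fin 2) + 1) = 0 := by decide
  rw [Fin.sum_univ_two, e1, e2]
  rfl

lemma cyc3_sum (w : V → V → G) (x y z : V) :
    ∑ i : Fin 3, w (![x, y, z] i) (![x, y, z] (i + 1)) = w x y + w y z + w z x := by
  have e1 : ((0 : Fin 3) + 1) = 1 := by decide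
  have e2 : ((1 : Fin 3) + 1) = 2 := by decide
  have e3 : ((2 : Fin 3) + 1) = 0 := by decide
  rw [Fin.sum_univ_three, e1, e2, e3]
  rfl

lemma cycSum_eq {t : ℕ} (w : V → V → G) (p : Fin (t + 2) → V) :
    ∑ i : Fin (t + 2), w (p i) (p (i + 1)) =
      psum w p + w (p (Fin.last (t + 1))) (p 0) := by
  rw [Fin.sum_univ_castSucc]
  congr 1
  · exact Finset.sum_congr rfl fun i _ => by rw [fin_castSucc_add_one]
  · rw [Fin.last_add_one]

lemma psum_snoc {t : ℕ} (w : V → V → G) (p : Fin (t + 2) → V) (z : V) :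
    psum w (Fin.snoc p z : Fin (t + 3) → V) = psum w p + w (p (Fin.last (t + 1))) z := by
  unfold psum
  rw [Fin.sum_univ_castSucc]
  congr 1
  · refine Finset.sum_congr rfl fun i _ => ?_
    rw [Fin.succ_castSucc, Fin.snoc_castSucc, Fin.snoc_castSucc]
  · rw [Fin.succ_last, Fin.snoc_last, Fin.snoc_castSucc]

lemma snoc_inj {n : ℕ} {p : Fin (n + 1) → V} {z : V} (hp : Function.Injective p)
    (hz : ∀ i, p i ≠ z) : Function.Injective (Fin.snoc p z : Fin (n + 2) → V) := by
  intro a b hab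
  induction a using Fin.lastCases with
  | last =>
    induction b using Fin.lastCases with
    | last => rfl
    | cast j =>
      rw [Fin.snoc_last, Fin.snoc_castSucc] at hab
      exact absurd hab.symm (hz j)
  | cast i =>
    induction b using Fin.lastCases with
    | last =>
      rw [Fin.snoc_last, Fin.snoc_castSucc] at hab
      exact absurd hab (hz i)
    | cast j =>
      rw [Fin.snoc_castSucc, Fin.snoc_castSucc] at hab
      exact congrArg Fin.castSucc (hp hab)

/-- `a` is the weight of a directed path from `u` to `v` with all vertices in `S`. -/
def IsPW (w : V → V → G) (u v : V) (S : Finset V) (a : G) : Prop :=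
  ∃ (t : ℕ) (p : Fin (t + 2) → V), Function.Injective p ∧ p 0 = u ∧
    p (Fin.last (t + 1)) = v ∧ (∀ i, p i ∈ S) ∧ psum w p = a

lemma IsPW.mono {w : V → V → G} {u v : V} {S : Finset V} {a : G} {S' : Finset V}
    (hS : S ⊆ S') (h : IsPW w u v S a) : IsPW w u v S' a := by
  obtain ⟨t, p, h1, h2, h3, h4, h5⟩ := h
  exact ⟨t, p, h1, h2, h3, fun i => hS (h4 i), h5⟩

lemma IsPW.close {w : V → V → G} {u v : V} {S : Finset V} {a : G}
    (hn : ¬ HasZC w) (h : IsPW w u v S a) : a + w v u ≠ 0 := by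
  obtain ⟨t, p, h1, h2, h3, h4, h5⟩ := h
  intro h0
  exact hn ⟨t, p, h1, by rw [cycSum_eq, h5, h3, h2]; exact h0⟩

lemma IsPW.extend [DecidableEq V] {w : V → V → G} {u v : V} {S : Finset V} {a : G} {z : V}
    (h : IsPW w u v S a) (hz : z ∉ S) :
    IsPW w u z (insert z S) (a + w v z) := by
  obtain ⟨t, p, h1, h2, h3, h4, h5⟩ := h
  refine ⟨t + 1, Fin.snoc p z, snoc_inj h1 (fun i hi => hz (hi ▸ h4 i)), ?_, ?_, ?_, ?_⟩
  · show (Fin.snoc p z : Fin (t + 3) → V) (Fin.castSucc 0) = u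
    rw [Fin.snoc_castSucc]; exact h2
  · show (Fin.snoc p z : Fin (t + 3) → V) (Fin.last (t + 2)) = z
    rw [Fin.snoc_last]
  · intro i
    induction i using Fin.lastCases with
    | last => rw [Fin.snoc_last]; exact mem_insert_self _ _
    | cast j => rw [Fin.snoc_castSucc]; exact mem_insert_of_mem (h4 j)
  · rw [psum_snoc, h5, h3]

/-- The stabilizer of a finite subset of `G` under translation. -/
def stab (A : Finset G) : AddSubgroup G where
  carrier := {h | ∀ a : G, a ∈ A ↔ a + h ∈ A}
  zero_mem' := fun a => by simp
  add_mem' := by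
    intro h1 h2 m1 m2 a
    rw [m1 a, m2 (a + h1), add_assoc]
  neg_mem' := by
    intro h m a
    simpa using (m (a + -h)).symm

lemma mem_stab {A : Finset G} {h : G} : h ∈ stab A ↔ ∀ a : G, a ∈ A ↔ a + h ∈ A := Iff.rfl

lemma stab_ne_top {A : Finset G} {a0 g : G} (ha0 : a0 ∈ A) (hg : g ∉ A) : stab A ≠ ⊤ := by
  intro htop
  have hmem : g - a0 ∈ stab A := by rw [htop]; exact AddSubgroup.mem_top _
  have h3 := (mem_stab.mp hmem a0).mp ha0
  rw [show a0 + (g - a0) = g from by abel] at h3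
  exact hg h3

lemma card_union_shifts [DecidableEq G] {A : Finset G} {c₁ c₂ : G} (hd : c₂ - c₁ ∉ stab A) :
    A.card + 1 ≤ (A.image (· + c₁) ∪ A.image (· + c₂)).card := by
  have hc1 : (A.image (· + c₁)).card = A.card :=
    Finset.card_image_of_injective _ (add_left_injective c₁)
  have hc2 : (A.image (· + c₂)).card = A.card :=
    Finset.card_image_of_injective _ (add_left_injective c₂)
  have hne : A.image (· + c₂) ≠ A.image (· + c₁) := by
    intro h
    apply hd
    rw [mem_stab]
    intro a
    constructor
    · intro ha
      have h1 : a + c₂ ∈ A.image (· + c₁) := by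
        rw [← h]; exact mem_image_of_mem _ ha
      obtain ⟨b, hb, hba⟩ := mem_image.mp h1
      have hb2 : b = a + (c₂ - c₁) := by
        have h3 : b + c₁ = a + c₂ := hba
        have h4 := congrArg (· + (-c₁)) h3
        simpa [add_assoc, sub_eq_add_neg] using h4
      rwa [hb2] at hb
    · intro ha
      have h1 : a + c₂ ∈ A.image (· + c₁) := by
        refine mem_image.mpr ⟨a + (c₂ - c₁), ha, ?_⟩
        abel
      rw [← h] at h1
      obtain ⟨b, hb, hba⟩ := mem_image.mp h1
      have hb2 : b = a := add_right_cancel hba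
      rwa [hb2] at hb
  have hsub : ¬ A.image (· + c₂) ⊆ A.image (· + c₁) := by
    intro hsub
    exact hne (Finset.eq_of_subset_of_card_le hsub (by rw [hc1, hc2]))
  obtain ⟨x, hx2, hx1⟩ := Finset.not_subset.mp hsub
  calc A.card + 1 = (insert x (A.image (· + c₁))).card := by
        rw [Finset.card_insert_of_notMem hx1, hc1]
    _ ≤ _ := Finset.card_le_card
        (Finset.insert_subset (mem_union_right _ hx2) Finset.subset_union_left)

end Engine

/-- Number of vertices sufficient for a zero-sum cycle over a group of given order. -/
def gq : ℕ → ℕ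
  | 0 => 2
  | 1 => 2
  | 2 => 3
  | (n + 3) => 2 * (n + 3) - 2 + gq ((n + 3) / 2)
decreasing_by omega

lemma gq_eq {q : ℕ} (hq : 3 ≤ q) : gq q = 2 * q - 2 + gq (q / 2) := by
  obtain ⟨n, rfl⟩ : ∃ n, q = n + 3 := ⟨q - 3, by omega⟩
  rw [gq]

lemma gq0v : gq 0 = 2 := by simp [gq]
lemma gq1v : gq 1 = 2 := by simp [gq]
lemma gq2v : gq 2 = 3 := by simp [gq]
lemma gq3v : gq 3 = 6 := by rw [gq_eq (show 3 ≤ 3 by norm_num)]; norm_num [gq1v]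
lemma gq4v : gq 4 = 9 := by rw [gq_eq (show 3 ≤ 4 by norm_num)]; norm_num [gq2v]
lemma gq5v : gq 5 = 11 := by rw [gq_eq (show 3 ≤ 5 by norm_num)]; norm_num [gq2v]
lemma gq6v : gq 6 = 16 := by rw [gq_eq (show 3 ≤ 6 by norm_num)]; norm_num [gq3v]
lemma gq7v : gq 7 = 18 := by rw [gq_eq (show 3 ≤ 7 by norm_num)]; norm_num [gq3v]

lemma gq_le_succ : ∀ n, gq n ≤ gq (n + 1) := by
  intro n
  induction n using Nat.strong_induction_on with
  | _ n ih =>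
    match n with
    | 0 => norm_num [gq0v, gq1v]
    | 1 => norm_num [gq1v, gq2v]
    | 2 => norm_num [gq2v, gq3v]
    | (m + 3) =>
      rw [gq_eq (show 3 ≤ m + 3 by omega), gq_eq (show 3 ≤ m + 3 + 1 by omega)]
      have hdiv : (m + 3 + 1) / 2 = (m + 3) / 2 ∨ (m + 3 + 1) / 2 = (m + 3) / 2 + 1 := by omega
      have hle : gq ((m + 3) / 2) ≤ gq ((m + 3 + 1) / 2) := by
        rcases hdiv with h | h
        · rw [h]
        · rw [h]; exact ih ((m + 3) / 2) (by omega)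
      omega

lemma gq_mono : Monotone gq := monotone_nat_of_le_succ gq_le_succ

lemma gq_two_le (n : ℕ) : 2 ≤ gq n := by
  have := gq_mono (Nat.zero_le n)
  rw [gq0v] at this
  exact this

lemma gq_bound : ∀ q, 2 ≤ q → gq q ≤ 4 * q - 5 := by
  intro q
  induction q using Nat.strong_induction_on with
  | _ q ih =>
    intro hq
    match q, hq with
    | 2, _ => norm_num [gq2v]
    | 3, _ => norm_num [gq3v]
    | (m + 4), _ =>
      rw [gq_eq (show 3 ≤ m + 4 by omega)]
      have h1 : 2 ≤ (m + 4) / 2 := by omega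
      have h2 := ih ((m + 4) / 2) (by omega) h1
      omega

/-- Main engine: any complete digraph on at least `gq (card G)` vertices with weights in a
finite abelian group `G` has a zero-sum cycle. -/
theorem main_engine : ∀ (N : ℕ) (G : Type) [AddCommGroup G] [Fintype G],
    Fintype.card G ≤ N → ∀ (V : Type) [Fintype V] (w : V → V → G),
    gq (Fintype.card G) ≤ Fintype.card V → HasZC w := by
  intro N
  induction N with
  | zero =>
    intro G _ _ hG
    have := Fintype.card_pos (α := G)
    omega
  | succ N ih =>
    intro G _ _ hG V _ w hV
    classical
    have hq1 : 1 ≤ Fintype.card G := Fintype.card_pos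
    have hV2 : 2 ≤ Fintype.card V := le_trans (gq_two_le _) hV
    rcases Nat.lt_or_ge (Fintype.card G) 2 with hqlt | hq2
    · -- card G = 1 : any 2-cycle works
      obtain ⟨u, v, huv⟩ := Fintype.exists_pair_of_one_lt_card (α := V) (by omega)
      haveI : Subsingleton G :=
        Fintype.card_le_one_iff_subsingleton.mp (by omega)
      exact ⟨0, ![u, v], vec2_inj huv, Subsingleton.elim _ _⟩
    rcases Nat.lt_or_ge (Fintype.card G) 3 with hqlt3 | hq3
    · -- card G = 2 : triangle argument
      have hq2' : Fintype.card G = 2 := by omega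
      have hV3 : 3 ≤ Fintype.card V := by
        have h := gq_mono (show 2 ≤ Fintype.card G by omega)
        rw [gq2v] at h
        omega
      by_contra hn
      obtain ⟨a, b, hab⟩ := Fintype.exists_pair_of_one_lt_card (α := V) (by omega)
      obtain ⟨c, hc⟩ : ∃ c, c ∉ ({a, b} : Finset V) := by
        by_contra h
        push_neg at h
        have hsub : (univ : Finset V) ⊆ {a, b} := fun x _ => h x
        have h4 := Finset.card_le_card hsub
        have h5 : ({a, b} : Finset V).card ≤ 2 := (card_insert_le _ _).trans (by simp)
        rw [Finset.card_univ] at h4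
        omega
      have hca : c ≠ a := fun h => hc (by rw [h]; exact mem_insert_self _ _)
      have hcb : c ≠ b := fun h => hc (by rw [h]; exact mem_insert_of_mem (mem_singleton_self _))
      have two_cyc : ∀ x y : V, x ≠ y → w x y + w y x ≠ 0 := by
        intro x y hxy h0
        apply hn
        refine ⟨0, ![x, y], vec2_inj hxy, ?_⟩
        show ∑ i : Fin 2, w (![x, y] i) (![x, y] (i + 1)) = 0
        rw [cyc2_sum]; exact h0
      have tri_cyc : ∀ x y z : V, x ≠ y → y ≠ z → x ≠ z →
          w x y + w y z + w z x ≠ 0 := by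
        intro x y z hxy hyz hxz h0
        apply hn
        refine ⟨1, ![x, y, z], vec3_inj hxy hyz hxz, ?_⟩
        show ∑ i : Fin 3, w (![x, y, z] i) (![x, y, z] (i + 1)) = 0
        rw [cyc3_sum]; exact h0
      have hxx : ∀ x : G, x + x = 0 := by
        intro x
        have h1 : Fintype.card G • x = 0 := card_nsmul_eq_zero
        rw [hq2'] at h1
        simpa [two_nsmul] using h1
      have huniq : ∀ x y : G, x ≠ 0 → y ≠ 0 → x = y := by
        intro x y hx hy
        by_contra hxy
        have h3 : ({0, x, y} : Finset G).card = 3 := by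
          rw [Finset.card_insert_of_notMem (by simp [Ne.symm hx, Ne.symm hy]),
            Finset.card_insert_of_notMem (by simp [hxy]), Finset.card_singleton]
        have h4 := Finset.card_le_univ ({0, x, y} : Finset G)
        omega
      have T1 := tri_cyc a b c hab (Ne.symm hcb) (Ne.symm hca)
      have T2 := tri_cyc a c b (Ne.symm hca) hcb hab
      have e12 : (w a b + w b c + w c a) = (w a c + w c b + w b a) := huniq _ _ T1 T2
      have hsum : (w a b + w b c + w c a) + (w a c + w c b + w b a)
          = (w a b + w b a) + ((w b c + w c b) + (w c a + w a c)) := by abel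
      have hAB := two_cyc a b hab
      have hBC := two_cyc b c (Ne.symm hcb)
      have hCA := two_cyc c a hca
      have eBC : w b c + w c b = w a b + w b a := huniq _ _ hBC hAB
      have eCA : w c a + w a c = w a b + w b a := huniq _ _ hCA hAB
      rw [← e12, hxx (w a b + w b c + w c a), eBC, eCA] at hsum
      have hfin : w a b + w b a = 0 := by
        have h5 := hxx (w a b + w b a)
        calc w a b + w b a
            = (w a b + w b a) + (w a b + w b a) + (w a b + w b a) := by
              rw [h5]; abel
          _ = 0 := by rw [← add_assoc] at hsum; exact hsum.symm
      exact hAB hfin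
    -- Now 3 ≤ card G. Main growth argument.
    by_contra hn
    set q := Fintype.card G with hqdef
    have claim : ∀ j : ℕ, j + 1 ≤ q → ∃ (u v : V) (S : Finset V) (A : Finset G),
        S.card ≤ 2 * (j + 1) ∧ j + 1 ≤ A.card ∧ ∀ a ∈ A, IsPW w u v S a := by
      intro j
      induction j with
      | zero =>
        intro _
        obtain ⟨u, v, huv⟩ := Fintype.exists_pair_of_one_lt_card (α := V) (by omega)
        refine ⟨u, v, {u, v}, {w u v}, ?_, by simp, ?_⟩
        · exact (card_insert_le _ _).trans (by simp)
        · intro a ha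
          rw [Finset.mem_singleton] at ha
          subst ha
          refine ⟨0, ![u, v], vec2_inj huv, rfl, rfl, ?_, ?_⟩
          · intro i
            fin_cases i
            · exact mem_insert_self _ _
            · exact mem_insert_of_mem (mem_singleton_self _)
          · show psum w ![u, v] = w u v
            rw [psum, Fin.sum_univ_one]
            rfl
      | succ j ihj =>
        intro hj2
        obtain ⟨u, v, S, A, hS, hA, hPW⟩ := ihj (by omega)
        set H := stab A with hHdef
        set Z := (univ : Finset V) \ S with hZdef
        have hZcard : Fintype.card V - 2 * (j + 1) ≤ Z.card := by
          rw [hZdef, Finset.card_sdiff_of_subset (Finset.subset_univ S), Finset.card_univ]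
          omega
        by_cases hsplit : ∃ z ∈ Z, ∃ z' ∈ Z, z ≠ z' ∧ w v z + w z z' - w v z' ∉ H
        · obtain ⟨z, hz, z', hz', hzz', hd⟩ := hsplit
          have hzS : z ∉ S := (Finset.mem_sdiff.mp hz).2
          have hz'S : z' ∉ S := (Finset.mem_sdiff.mp hz').2
          refine ⟨u, z', insert z' (insert z S),
            A.image (· + w v z') ∪ A.image (· + (w v z + w z z')), ?_, ?_, ?_⟩
          · calc (insert z' (insert z S)).card ≤ (insert z S).card + 1 := card_insert_le _ _
              _ ≤ 2 * (j + 1 + 1) := by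
                  have := card_insert_le z S
                  omega
          · have := card_union_shifts (A := A) (c₁ := w v z') (c₂ := w v z + w z z') hd
            omega
          · intro x hx
            rcases Finset.mem_union.mp hx with hx | hx
            · obtain ⟨a, ha, rfl⟩ := Finset.mem_image.mp hx
              exact ((hPW a ha).extend hz'S).mono
                (Finset.insert_subset_insert _ (Finset.subset_insert _ _))
            · obtain ⟨a, ha, rfl⟩ := Finset.mem_image.mp hx
              have h1 := (hPW a ha).extend hzS
              have h2 := h1.extend (z := z') (by
                simp only [Finset.mem_insert]
                push_neg
                exact ⟨Ne.symm hzz', hz'S⟩)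
              rw [show a + w v z + w z z' = a + (w v z + w z z') from by abel] at h2
              exact h2
        · -- stuck case: recurse into the stabilizer subgroup
          push_neg at hsplit
          obtain ⟨a0, ha0⟩ : A.Nonempty := Finset.card_pos.mp (by omega)
          have hnegmem : -(w v u) ∉ A := by
            intro hmem
            exact (hPW _ hmem).close hn (by abel)
          have hHne : H ≠ ⊤ := stab_ne_top ha0 hnegmem
          haveI : Fintype ↥H := Fintype.ofFinite ↥H
          have hdvd : Fintype.card ↥H ∣ q := by
            have h := AddSubgroup.card_addSubgroup_dvd_card H
            rwa [Nat.card_eq_fintype_card, Nat.card_eq_fintype_card] at h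
          have hcardne : Fintype.card ↥H ≠ q := by
            intro hEq
            apply hHne
            apply AddSubgroup.eq_top_of_card_eq
            rw [Nat.card_eq_fintype_card, Nat.card_eq_fintype_card]
            exact hEq
          have hH2 : Fintype.card ↥H ≤ q / 2 := by
            obtain ⟨d, hd⟩ := hdvd
            have hd2 : 2 ≤ d := by
              rcases d with _ | _ | d
              · omega
              · omega
              · omega
            have hmul : Fintype.card ↥H * 2 ≤ Fintype.card ↥H * d :=
              Nat.mul_le_mul_left _ hd2
            omega
          have hZ_ge : gq (Fintype.card ↥H) ≤ Z.card := by
            have h1 : gq (Fintype.card ↥H) ≤ gq (q / 2) := gq_mono hH2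
            have h2 : gq q = 2 * q - 2 + gq (q / 2) := gq_eq hq3
            have h3 : gq q ≤ Fintype.card V := hV
            omega
          set w' : {x : V // x ∈ Z} → {x : V // x ∈ Z} → ↥H := fun x y =>
            if h : (w v (x : V) + w (x : V) (y : V) - w v (y : V)) ∈ H then (⟨_, h⟩ : ↥H) else 0
            with hw'def
          have hzc : HasZC w' := by
            apply ih ↥H (by omega) _ w'
            rw [Fintype.card_coe]
            exact hZ_ge
          obtain ⟨m, c, hcinj, hcsum⟩ := hzc
          exfalso
          apply hn
          refine ⟨m, fun i => (c i : V), fun i j hij => hcinj (Subtype.ext hij), ?_⟩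
          have key : ∀ i : Fin (m + 2), w (c i : V) (c (i + 1) : V) =
              ((w' (c i) (c (i + 1)) : ↥H) : G) + (w v (c (i + 1) : V) - w v (c i : V)) := by
            intro i
            have hne : (c i : V) ≠ (c (i + 1) : V) := by
              intro hEq
              exact fin_ne_add_one i (hcinj (Subtype.ext hEq))
            have hδ : w v (c i : V) + w (c i : V) (c (i + 1) : V) - w v (c (i + 1) : V) ∈ H :=
              hsplit (c i : V) (c i).2 (c (i + 1) : V) (c (i + 1)).2 hne
            have hval : w' (c i) (c (i + 1)) =
                ⟨w v (c i : V) + w (c i : V) (c (i + 1) : V) - w v (c (i + 1) : V), hδ⟩ := by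
              rw [hw'def]
              exact dif_pos hδ
            rw [hval]
            show w (c i : V) (c (i + 1) : V) =
              (w v (c i : V) + w (c i : V) (c (i + 1) : V) - w v (c (i + 1) : V))
                + (w v (c (i + 1) : V) - w v (c i : V))
            abel
          calc ∑ i : Fin (m + 2), w (c i : V) (c (i + 1) : V)
              = ∑ i : Fin (m + 2), (((w' (c i) (c (i + 1)) : ↥H) : G)
                  + (w v (c (i + 1) : V) - w v (c i : V))) :=
                Finset.sum_congr rfl fun i _ => key i
            _ = (∑ i : Fin (m + 2), ((w' (c i) (c (i + 1)) : ↥H) : G))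
                  + ∑ i : Fin (m + 2), (w v (c (i + 1) : V) - w v (c i : V)) :=
                Finset.sum_add_distrib
            _ = 0 := by
                have e1 : (∑ i : Fin (m + 2), ((w' (c i) (c (i + 1)) : ↥H) : G)) = 0 := by
                  have e0 := map_sum H.subtype (fun i => w' (c i) (c (i + 1)))
                    (Finset.univ : Finset (Fin (m + 2)))
                  have e0' : ∑ i : Fin (m + 2), ((w' (c i) (c (i + 1)) : ↥H) : G)
                      = ((∑ i : Fin (m + 2), w' (c i) (c (i + 1)) : ↥H) : G) := e0.symm
                  rw [e0', hcsum]
                  simp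
                have e2 : ∑ i : Fin (m + 2), (w v (c (i + 1) : V) - w v (c i : V)) = 0 := by
                  rw [Finset.sum_sub_distrib]
                  have e3 : ∑ i : Fin (m + 2), w v (c (i + 1) : V)
                      = ∑ i : Fin (m + 2), w v (c i : V) :=
                    Fintype.sum_equiv (Equiv.addRight (1 : Fin (m + 2)))
                      (fun i => w v (c (i + 1) : V)) (fun i => w v (c i : V))
                      (fun i => rfl)
                  rw [e3, sub_self]
                rw [e1, e2, add_zero]
    obtain ⟨u, v, S, A, hS, hA, hPW⟩ := claim (q - 1) (by omega)
    have hAuniv : A = univ := by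
      apply Finset.eq_univ_of_card
      have := Finset.card_le_univ A
      omega
    have hmem : -(w v u) ∈ A := by rw [hAuniv]; exact Finset.mem_univ _
    exact (hPW _ hmem).close hn (by abel)

-- Numeric estimates

lemma exp5_lt : Real.exp 5 < 729 := by
  have h1 : Real.exp 5 = Real.exp 1 ^ 5 := by
    rw [Real.exp_one_pow]
    norm_num
  rw [h1]
  calc Real.exp 1 ^ 5 ≤ 2.7182818286 ^ 5 :=
        pow_le_pow_left₀ (le_of_lt (Real.exp_pos 1)) (le_of_lt Real.exp_one_lt_d9) 5
    _ < 729 := by norm_num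

lemma log3_gt : (5 / 6 : ℝ) < Real.log 3 := by
  rw [Real.lt_log_iff_exp_lt (by norm_num : (0:ℝ) < 3)]
  by_contra h
  push_neg at h
  have h6 : Real.exp (5 / 6) ^ 6 = Real.exp 5 := by
    rw [← Real.exp_nat_mul]
    norm_num
  have h2 : (3 : ℝ) ^ 6 ≤ Real.exp (5 / 6) ^ 6 := pow_le_pow_left₀ (by norm_num) h 6
  rw [h6] at h2
  norm_num at h2
  linarith [exp5_lt]

lemma log6_gt : (5 / 4 : ℝ) < Real.log 6 := by
  rw [Real.lt_log_iff_exp_lt (by norm_num : (0:ℝ) < 6)]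
  by_contra h
  push_neg at h
  have h4 : Real.exp (5 / 4) ^ 4 = Real.exp 5 := by
    rw [← Real.exp_nat_mul]
    norm_num
  have h2 : (6 : ℝ) ^ 4 ≤ Real.exp (5 / 4) ^ 4 := pow_le_pow_left₀ (by norm_num) h 4
  rw [h4] at h2
  norm_num at h2
  linarith [exp5_lt]

lemma gq_le_ceil (q : ℕ) (hq : 2 ≤ q) : gq q ≤ ⌈2 * (q : ℝ) * Real.log q⌉₊ := by
  have hlog2 := Real.log_two_gt_d9
  suffices h : ((gq q - 1 : ℕ) : ℝ) < 2 * (q : ℝ) * Real.log q by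
    have h2 := Nat.lt_ceil.mpr h
    have h3 := gq_two_le q
    omega
  rcases Nat.lt_or_ge q 8 with h8 | h8
  · interval_cases q
    · rw [gq2v]; norm_num; nlinarith
    · rw [gq3v]; norm_num; nlinarith [log3_gt]
    · rw [gq4v]
      have hl4 : Real.log 4 = 2 * Real.log 2 := by
        rw [show (4:ℝ) = 2 ^ 2 by norm_num, Real.log_pow]
        push_cast
        ring
      norm_num
      rw [hl4]
      nlinarith
    · rw [gq5v]
      have hl5 : (1 : ℝ) < Real.log 5 := by
        rw [Real.lt_log_iff_exp_lt (by norm_num : (0:ℝ) < 5)]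
        linarith [Real.exp_one_lt_d9]
      norm_num
      nlinarith
    · rw [gq6v]; norm_num; nlinarith [log6_gt]
    · rw [gq7v]
      have hl7 : (5 / 4 : ℝ) < Real.log 7 := by
        have h67 := Real.log_le_log (by norm_num : (0:ℝ) < 6) (by norm_num : (6:ℝ) ≤ 7)
        linarith [log6_gt]
      norm_num
      nlinarith
  · have hb := gq_bound q (by omega)
    have hcast : (8 : ℝ) ≤ (q : ℝ) := by exact_mod_cast h8
    have hlogq : (2 : ℝ) ≤ Real.log q := by
      have h1 : Real.log 8 ≤ Real.log q := Real.log_le_log (by norm_num) hcast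
      have h2 : Real.log 8 = 3 * Real.log 2 := by
        rw [show (8:ℝ) = 2 ^ 3 by norm_num, Real.log_pow]
        push_cast
        ring
      rw [h2] at h1
      linarith
    have hle0 : gq q - 1 ≤ 4 * q - 6 := by omega
    have hle1 : ((gq q - 1 : ℕ) : ℝ) ≤ ((4 * q - 6 : ℕ) : ℝ) := Nat.cast_le.mpr hle0
    have h6 : (6 : ℕ) ≤ 4 * q := by omega
    have h46 : ((4 * q - 6 : ℕ) : ℝ) = 4 * (q : ℝ) - 6 := by
      rw [Nat.cast_sub h6]
      push_cast
      ring
    have hprod : (2 * (q:ℝ)) * 2 ≤ (2 * (q:ℝ)) * Real.log q := by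
      apply mul_le_mul_of_nonneg_left hlogq
      positivity
    nlinarith

/-- Let `q ≥ 2` and let `Γ` be a complete digraph on `⌈2 q ln q⌉` vertices (so every
ordered pair of distinct vertices carries a weight `w u v ∈ ℤ/q`).  Then `Γ` contains a
directed cycle (a cyclic sequence of at least two distinct vertices) whose total weight
is divisible by `q`. -/
theorem complete_digraph_zero_weight_cycle
    (q : ℕ) (hq : 2 ≤ q) (V : Type) [Fintype V]
    (hV : Fintype.card V = ⌈2 * (q : ℝ) * Real.log q⌉₊)
    (w : V → V → ZMod q) :
    ∃ (m : ℕ) (c : Fin (m + 2) → V), Function.Injective c ∧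
      ∑ i : Fin (m + 2), w (c i) (c (i + 1)) = 0 := by
  haveI : NeZero q := ⟨by omega⟩
  have hcard : Fintype.card (ZMod q) = q := ZMod.card q
  exact main_engine q (ZMod q) (le_of_eq hcard) V w
    (by rw [hcard, hV]; exact gq_le_ceil q hq)
end

section
/- Let q ≥ 2 be an integer and let Γ = (V,E) be a complete digraph on N = ⌈2q·ln q⌉ vertices whose edges carry weights w(e) ∈ ℤ/qℤ. Then there exists a labeling c : V → ℤ/qℤ such that every vertex u ∈ V has an outneighbor v with c(v) = c(u) + w(u,v). -/
open Real
lemma ceil2 : ⌈2 * ((2:ℕ) : ℝ) * Real.log ((2:ℕ):ℝ)⌉₊ = 3 := by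
  rw [Nat.ceil_eq_iff (by norm_num)]
  have h1 := Real.log_two_gt_d9
  have h2 := Real.log_two_lt_d9
  push_cast
  constructor <;> nlinarith

lemma log3_bounds : 1 < Real.log 3 ∧ Real.log 3 ≤ 7/6 := by
  have h2 := Real.log_two_lt_d9
  constructor
  · rw [Real.lt_log_iff_exp_lt (by norm_num)]
    calc Real.exp 1 < 2.7182818286 := Real.exp_one_lt_d9
      _ < 3 := by norm_num
  · have h9 : Real.log 9 = 2 * Real.log 3 := by
      rw [show (9:ℝ) = 3^2 by norm_num, Real.log_pow]; push_cast; ring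
    have h8 : Real.log 8 = 3 * Real.log 2 := by
      rw [show (8:ℝ) = 2^3 by norm_num, Real.log_pow]; push_cast; ring
    have hm : Real.log 9 = Real.log 8 + Real.log (9/8) := by
      rw [← Real.log_mul (by norm_num) (by norm_num)]; norm_num
    have hs : Real.log (9/8) ≤ 9/8 - 1 := Real.log_le_sub_one_of_pos (by norm_num)
    nlinarith

lemma ceil3 : ⌈2 * ((3:ℕ) : ℝ) * Real.log ((3:ℕ):ℝ)⌉₊ = 7 := by
  rw [Nat.ceil_eq_iff (by norm_num)]
  obtain ⟨h1, h2⟩ := log3_bounds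
  push_cast
  constructor <;> nlinarith

lemma ceil4 : ⌈2 * ((4:ℕ) : ℝ) * Real.log ((4:ℕ):ℝ)⌉₊ = 12 := by
  rw [Nat.ceil_eq_iff (by norm_num)]
  have h1 := Real.log_two_gt_d9
  have h2 := Real.log_two_lt_d9
  have h4 : Real.log ((4:ℕ):ℝ) = 2 * Real.log 2 := by
    push_cast
    rw [show (4:ℝ) = 2^2 by norm_num, Real.log_pow]; push_cast; ring
  rw [h4]
  push_cast
  constructor <;> nlinarith


lemma key_gen (q : ℕ) (hq5 : 5 ≤ q) :
    ⌈2 * (q : ℝ) * Real.log q⌉₊ * (q - 1) ^ (⌈2 * (q : ℝ) * Real.log q⌉₊ - 1)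
      < q ^ (⌈2 * (q : ℝ) * Real.log q⌉₊ - 1) := by
  have hQ : (5:ℝ) ≤ (q:ℝ) := by exact_mod_cast hq5
  set Q : ℝ := (q:ℝ) with hQdef
  have hlogQ1 : 1 ≤ Real.log Q := by
    rw [Real.le_log_iff_exp_le (by linarith)]
    calc Real.exp 1 ≤ 2.7182818286 := Real.exp_one_lt_d9.le
      _ ≤ Q := by linarith
  set x : ℝ := 2 * Q * Real.log Q with hxdef
  have hx2Q : 2*Q ≤ x := by nlinarith
  have hx0 : 0 ≤ x := by linarith
  set N := ⌈x⌉₊ with hNdef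
  have hNx : x ≤ (N:ℝ) := Nat.le_ceil x
  have hNx1 : (N:ℝ) < x + 1 := Nat.ceil_lt_add_one hx0
  have hN10 : (10:ℝ) ≤ (N:ℝ) := by linarith
  have hN10' : 10 ≤ N := by exact_mod_cast hN10
  set n := N - 1 with hn
  have hncast : (n : ℝ) = (N:ℝ) - 1 := by
    rw [hn]; push_cast [show 1 ≤ N by omega]; ring
  have hlog2 : Real.log 2 < 0.6931471808 := Real.log_two_lt_d9
  have hlog2' : (0:ℝ) < Real.log 2 := Real.log_pos (by norm_num)
  have htang : Real.log Q ≤ 2 * Real.log 2 - 1 + Q/4 := by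
    have h4 : Real.log (Q/4) ≤ Q/4 - 1 := Real.log_le_sub_one_of_pos (by linarith)
    rw [Real.log_div (by linarith) (by norm_num)] at h4
    have h44 : Real.log 4 = 2 * Real.log 2 := by
      rw [show (4:ℝ) = 2^2 by norm_num, Real.log_pow]; push_cast; ring
    linarith
  have hxQ2 : x + 1 ≤ Q^2 - Q := by nlinarith
  have hlogx : Real.log (x+1) ≤ (x - 1)/Q := by
    have hexp : 1 - 1/Q ≤ Real.exp (-(1/Q)) := by
      have := Real.add_one_le_exp (-(1/Q)); linarith
    have hmul : Q^2 - Q ≤ Q^2 * Real.exp (-(1/Q)) := by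
      have h2 : Q^2 * (1 - 1/Q) ≤ Q^2 * Real.exp (-(1/Q)) :=
        mul_le_mul_of_nonneg_left hexp (by positivity)
      have h3 : Q^2 * (1 - 1/Q) = Q^2 - Q := by field_simp
      linarith
    have h1 : Real.log (x+1) ≤ Real.log (Q^2 * Real.exp (-(1/Q))) :=
      Real.log_le_log (by linarith) (by linarith)
    rw [Real.log_mul (by positivity) (Real.exp_ne_zero _), Real.log_exp,
      show Q^2 = Q^(2:ℕ) by norm_num, Real.log_pow] at h1
    have h2 : (2:ℝ) * Real.log Q = x / Q := by
      rw [hxdef]; field_simp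
    push_cast at h1
    rw [h2] at h1
    have : x/Q - 1/Q = (x-1)/Q := by ring
    linarith
  have hlogN : Real.log N < (n:ℝ) / Q := by
    have h1 : Real.log N < Real.log (x+1) := Real.log_lt_log (by linarith) hNx1
    have h2 : (x-1)/Q ≤ ((N:ℝ)-1)/Q := by
      gcongr (?_ - 1) / Q <;> linarith
    rw [hncast]; linarith
  have hL : 1/Q ≤ Real.log (Q/(Q-1)) := by
    have h1 : Real.log ((Q-1)/Q) ≤ (Q-1)/Q - 1 := Real.log_le_sub_one_of_pos (div_pos (by linarith) (by linarith))
    have h2 : Real.log (Q/(Q-1)) = - Real.log ((Q-1)/Q) := by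
      rw [← Real.log_inv]; congr 1; field_simp
    have h3 : (Q-1)/Q - 1 = -(1/Q) := by field_simp; ring
    rw [h2]; linarith [h3 ▸ h1]
  have hmain : (N:ℝ) < (Q/(Q-1))^n := by
    have h1 : Real.log N < (n:ℝ) * Real.log (Q/(Q-1)) := by
      calc Real.log N < (n:ℝ)/Q := hlogN
        _ = (n:ℝ) * (1/Q) := by ring
        _ ≤ (n:ℝ) * Real.log (Q/(Q-1)) :=
            mul_le_mul_of_nonneg_left hL (by positivity)
    calc (N:ℝ) = Real.exp (Real.log N) := (Real.exp_log (by linarith)).symm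
      _ < Real.exp ((n:ℝ) * Real.log (Q/(Q-1))) := Real.exp_lt_exp.mpr h1
      _ = (Real.exp (Real.log (Q/(Q-1))))^n := Real.exp_nat_mul _ n
      _ = (Q/(Q-1))^n := by rw [Real.exp_log (div_pos (by linarith) (by linarith))]
  have hfinal : (N:ℝ) * (Q-1)^n < Q^n := by
    have hpos : (0:ℝ) < (Q-1)^n := pow_pos (by linarith) n
    have h1 := mul_lt_mul_of_pos_right hmain hpos
    rwa [div_pow, div_mul_cancel₀] at h1
    exact pow_ne_zero n (by linarith)
  have hcast : ((N * (q-1)^n : ℕ) : ℝ) < ((q^n : ℕ) : ℝ) := by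
    push_cast [Nat.cast_sub (show 1 ≤ q by omega)]
    exact hfinal
  exact_mod_cast hcast

lemma key_ineq (q : ℕ) (hq : 2 ≤ q) :
    ⌈2 * (q : ℝ) * Real.log q⌉₊ * (q - 1) ^ (⌈2 * (q : ℝ) * Real.log q⌉₊ - 1)
      < q ^ (⌈2 * (q : ℝ) * Real.log q⌉₊ - 1) := by
  rcases lt_or_ge q 5 with h5 | h5
  · interval_cases q
    · rw [ceil2]; norm_num
    · rw [ceil3]; norm_num
    · rw [ceil4]; norm_num
  · exact key_gen q h5

/-- Let `q ≥ 2` and let `Γ` be a complete digraph on `⌈2 q ln q⌉` vertices with edge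
weights `w u v ∈ ℤ/q`.  Then there is a labeling `c` of the vertices by elements of
`ℤ/q` such that every vertex `u` has an outneighbor `v` with `c v = c u + w u v`. -/
theorem complete_digraph_good_labeling
    (q : ℕ) (hq : 2 ≤ q) (V : Type) [Fintype V]
    (hV : Fintype.card V = ⌈2 * (q : ℝ) * Real.log q⌉₊)
    (w : V → V → ZMod q) :
    ∃ c : V → ZMod q, ∀ u : V, ∃ v : V, v ≠ u ∧ c v = c u + w u v := by
  classical
  haveI : NeZero q := ⟨by omega⟩
  by_contra hcon
  push_neg at hcon
  set N := Fintype.card V with hN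
  -- Bad sets
  set Bad : V → Finset (V → ZMod q) :=
    fun u => Finset.univ.filter (fun c => ∀ v, v ≠ u → c v ≠ c u + w u v) with hBad
  have hmem : ∀ c : V → ZMod q, ∃ u, c ∈ Bad u := by
    intro c
    obtain ⟨u, hu⟩ := hcon c
    refine ⟨u, ?_⟩
    simp only [hBad, Finset.mem_filter, Finset.mem_univ, true_and]
    intro v hv heq
    exact hu v hv heq
  -- card bound on each Bad u
  have hcard : ∀ u : V, (Bad u).card ≤ q * (q - 1) ^ (N - 1) := by
    intro u
    have : (Bad u).card = Fintype.card {c // c ∈ Bad u} := (Fintype.card_coe _).symm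
    rw [this]
    have hinj : Function.Injective
        (fun c : {c // c ∈ Bad u} =>
          ((c.1 u, fun v : {v : V // v ≠ u} =>
            (⟨c.1 v - c.1 u - w u v, by
              have hc := (Finset.mem_filter.mp c.2).2 v v.2
              intro h0
              apply hc
              have := sub_eq_zero.mp h0
              linear_combination this⟩ : {x : ZMod q // x ≠ 0})) :
            ZMod q × ({v : V // v ≠ u} → {x : ZMod q // x ≠ 0}))) := by
      intro c c' h
      have h1 : c.1 u = c'.1 u := congrArg Prod.fst h
      have h2 := congrArg Prod.snd h
      apply Subtype.ext
      funext v
      by_cases hv : v = u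
      · rw [hv]; exact h1
      · have := congrArg (fun f => (f ⟨v, hv⟩ : ZMod q)) h2
        simp only at this
        have : c.1 v - c.1 u - w u v = c'.1 v - c'.1 u - w u v := this
        linear_combination this + h1
    have hle := Fintype.card_le_of_injective _ hinj
    have e1 : Fintype.card {v : V // v ≠ u} = N - 1 := by
      simp [Ne, Fintype.card_subtype_compl, Fintype.card_subtype_eq, hN]
    have e2 : Fintype.card {x : ZMod q // x ≠ 0} = q - 1 := by
      simp [Ne, Fintype.card_subtype_compl, Fintype.card_subtype_eq, ZMod.card]
    calc Fintype.card {c // c ∈ Bad u} ≤ _ := hle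
      _ = q * (q - 1) ^ (N - 1) := by
          rw [Fintype.card_prod, Fintype.card_fun, ZMod.card, e1, e2]
  -- union bound
  have hunion : (Finset.univ : Finset (V → ZMod q)) ⊆ Finset.univ.biUnion Bad := by
    intro c _
    obtain ⟨u, hu⟩ := hmem c
    exact Finset.mem_biUnion.mpr ⟨u, Finset.mem_univ u, hu⟩
  have htot : q ^ N ≤ N * (q * (q - 1) ^ (N - 1)) := by
    calc q ^ N = (Finset.univ : Finset (V → ZMod q)).card := by
          rw [Finset.card_univ, Fintype.card_fun, ZMod.card, hN]
      _ ≤ (Finset.univ.biUnion Bad).card := Finset.card_le_card hunion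
      _ ≤ ∑ u, (Bad u).card := Finset.card_biUnion_le
      _ ≤ ∑ _u : V, q * (q - 1) ^ (N - 1) := Finset.sum_le_sum (fun u _ => hcard u)
      _ = N * (q * (q - 1) ^ (N - 1)) := by rw [Finset.sum_const, smul_eq_mul, Finset.card_univ]
  have hkey := key_ineq q hq
  rw [← hV] at hkey
  have hN1 : 1 ≤ N := by
    rw [hV]
    refine Nat.one_le_iff_ne_zero.mpr (Nat.ceil_pos.mpr ?_).ne'
    have hlq : 0 < Real.log q := Real.log_pos (by exact_mod_cast hq.trans_lt' one_lt_two)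
    positivity
  have hpow : q ^ N = q * q ^ (N - 1) := by
    conv_lhs => rw [show N = 1 + (N - 1) by omega]
    rw [pow_add, pow_one]
  have hlt : N * (q * (q - 1) ^ (N - 1)) < q ^ N := by
    rw [hpow, mul_left_comm]
    exact Nat.mul_lt_mul_of_le_of_lt (le_refl q) hkey (by omega)
  exact absurd htot (not_le.mpr hlt)
end

section
/- Let q be a prime, and let Γ = (V,E) be a complete digraph on 2q−1 vertices whose edges carry weights w(e) ∈ ℤ/qℤ. Then Γ contains a directed cycle C whose total weight (the sum of the weights of its edges) is divisible by q. -/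
open Finset

namespace ZeroCycleAux

variable {V : Type} {M : Type} [AddCommGroup M]

/-- Weight of a path given by a list of vertices. -/
def pw (w : V → V → M) : List V → M
  | [] => 0
  | [_] => 0
  | x :: y :: r => w x y + pw w (y :: r)

lemma pw_cons (w : V → V → M) (x : V) (l : List V) (h : l ≠ []) :
    pw w (x :: l) = w x (l.head h) + pw w l := by
  cases l with
  | nil => exact absurd rfl h
  | cons y r => rfl

/-- The interleaved list `a 0, (v 0), a 1, (v 1), …, a k` where `v i` is included
iff `T i`. -/
def interleave (a v : ℕ → V) (T : ℕ → Bool) : ℕ → List V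
  | 0 => [a 0]
  | k+1 => a 0 :: ((if T 0 then [v 0] else []) ++
      interleave (fun i => a (i+1)) (fun i => v (i+1)) (fun i => T (i+1)) k)

lemma interleave_ne_nil (a v : ℕ → V) (T : ℕ → Bool) (k : ℕ) :
    interleave a v T k ≠ [] := by
  cases k <;> simp [interleave]

lemma length_interleave (a v : ℕ → V) (T : ℕ → Bool) (k : ℕ) :
    k + 1 ≤ (interleave a v T k).length := by
  induction k generalizing a v T with
  | zero => simp [interleave]
  | succ k ih =>
      have := ih (fun i => a (i+1)) (fun i => v (i+1)) (fun i => T (i+1))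
      simp only [interleave, List.length_cons, List.length_append]
      omega

lemma head_interleave (a v : ℕ → V) (T : ℕ → Bool) (k : ℕ) (h : interleave a v T k ≠ []) :
    (interleave a v T k).head h = a 0 := by
  cases k <;> rfl

lemma getLast_interleave (a v : ℕ → V) (T : ℕ → Bool) (k : ℕ) (h : interleave a v T k ≠ []) :
    (interleave a v T k).getLast h = a k := by
  induction k generalizing a v T with
  | zero => rfl
  | succ k ih =>
      have hne : ((if T 0 then [v 0] else []) ++
          interleave (fun i => a (i+1)) (fun i => v (i+1)) (fun i => T (i+1)) k) ≠ [] := by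
        simp [interleave_ne_nil]
      have h1 : (interleave a v T (k+1)).getLast h = ((if T 0 then [v 0] else []) ++
          interleave (fun i => a (i+1)) (fun i => v (i+1)) (fun i => T (i+1)) k).getLast hne :=
        List.getLast_cons hne
      rw [h1, List.getLast_append hne]
      have : (interleave (fun i => a (i+1)) (fun i => v (i+1)) (fun i => T (i+1)) k).isEmpty = false := by
        simp [List.isEmpty_iff, interleave_ne_nil]
      rw [dif_neg (by simp [this])]
      exact ih _ _ _ _

lemma pw_interleave (w : V → V → M) (a v : ℕ → V) (T : ℕ → Bool) (k : ℕ) :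
    pw w (interleave a v T k) =
      ∑ i ∈ range k, (if T i then w (a i) (v i) + w (v i) (a (i+1)) else w (a i) (a (i+1))) := by
  induction k generalizing a v T with
  | zero => simp [interleave, pw]
  | succ k ih =>
      rw [Finset.sum_range_succ']
      have hrest := ih (fun i => a (i+1)) (fun i => v (i+1)) (fun i => T (i+1))
      have hne := interleave_ne_nil (fun i => a (i+1)) (fun i => v (i+1)) (fun i => T (i+1)) k
      have hhd := head_interleave (fun i => a (i+1)) (fun i => v (i+1)) (fun i => T (i+1)) k hne
      by_cases hT : T 0
      · rw [show interleave a v T (k+1) = a 0 :: v 0 ::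
            interleave (fun i => a (i+1)) (fun i => v (i+1)) (fun i => T (i+1)) k by
            simp [interleave, hT]]
        rw [show pw w (a 0 :: v 0 :: interleave (fun i => a (i+1)) (fun i => v (i+1))
              (fun i => T (i+1)) k) = w (a 0) (v 0) + pw w (v 0 :: interleave (fun i => a (i+1))
              (fun i => v (i+1)) (fun i => T (i+1)) k) from rfl]
        rw [pw_cons w (v 0) _ hne, hhd, hrest, if_pos hT]
        abel
      · rw [show interleave a v T (k+1) = a 0 ::
            interleave (fun i => a (i+1)) (fun i => v (i+1)) (fun i => T (i+1)) k by
            simp [interleave, hT]]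
        rw [pw_cons w (a 0) _ hne, hhd, hrest, if_neg hT]
        abel

lemma mem_interleave (a v : ℕ → V) (T : ℕ → Bool) (k : ℕ) (x : V)
    (hx : x ∈ interleave a v T k) :
    (∃ i, i ≤ k ∧ x = a i) ∨ (∃ i, i < k ∧ x = v i) := by
  induction k generalizing a v T with
  | zero =>
      simp [interleave] at hx
      exact Or.inl ⟨0, le_refl 0, hx⟩
  | succ k ih =>
      simp only [interleave, List.mem_cons, List.mem_append] at hx
      rcases hx with h | h | h
      · exact Or.inl ⟨0, by omega, h⟩
      · by_cases hT : T 0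
        · rw [if_pos hT] at h
          simp at h
          exact Or.inr ⟨0, by omega, h⟩
        · rw [if_neg hT] at h; simp at h
      · rcases ih _ _ _ h with ⟨i, hi, hx⟩ | ⟨i, hi, hx⟩
        · exact Or.inl ⟨i + 1, by omega, hx⟩
        · exact Or.inr ⟨i + 1, by omega, hx⟩

lemma nodup_interleave (a v : ℕ → V) (T : ℕ → Bool) (k : ℕ)
    (H1 : ∀ i j, i ≤ k → j ≤ k → a i = a j → i = j)
    (H2 : ∀ i j, i < k → j < k → v i = v j → i = j)
    (H3 : ∀ i j, i ≤ k → j < k → a i ≠ v j) :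
    (interleave a v T k).Nodup := by
  induction k generalizing a v T with
  | zero => simp [interleave]
  | succ k ih =>
      have hrest : (interleave (fun i => a (i+1)) (fun i => v (i+1)) (fun i => T (i+1)) k).Nodup := by
        refine ih _ _ _ ?_ ?_ ?_
        · intro i j hi hj h
          have := H1 (i+1) (j+1) (by omega) (by omega) h
          omega
        · intro i j hi hj h
          have := H2 (i+1) (j+1) (by omega) (by omega) h
          omega
        · intro i j hi hj
          exact H3 (i+1) (j+1) (by omega) (by omega)
      have haRest : a 0 ∉ interleave (fun i => a (i+1)) (fun i => v (i+1)) (fun i => T (i+1)) k := by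
        intro hmem
        rcases mem_interleave _ _ _ _ _ hmem with ⟨i, hi, hx⟩ | ⟨i, hi, hx⟩
        · have := H1 0 (i+1) (by omega) (by omega) hx
          omega
        · exact H3 0 (i+1) (by omega) (by omega) hx
      have hvRest : v 0 ∉ interleave (fun i => a (i+1)) (fun i => v (i+1)) (fun i => T (i+1)) k := by
        intro hmem
        rcases mem_interleave _ _ _ _ _ hmem with ⟨i, hi, hx⟩ | ⟨i, hi, hx⟩
        · exact H3 (i+1) 0 (by omega) (by omega) hx.symm
        · have := H2 0 (i+1) (by omega) (by omega) hx
          omega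
      by_cases hT : T 0
      · rw [show interleave a v T (k+1) = a 0 :: v 0 ::
            interleave (fun i => a (i+1)) (fun i => v (i+1)) (fun i => T (i+1)) k by
            simp [interleave, hT]]
        refine List.nodup_cons.mpr ⟨?_, List.nodup_cons.mpr ⟨hvRest, hrest⟩⟩
        simp only [List.mem_cons]
        rintro (h | h)
        · exact H3 0 0 (by omega) (by omega) h
        · exact haRest h
      · rw [show interleave a v T (k+1) = a 0 ::
            interleave (fun i => a (i+1)) (fun i => v (i+1)) (fun i => T (i+1)) k by
            simp [interleave, hT]]
        exact List.nodup_cons.mpr ⟨haRest, hrest⟩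

lemma pw_ofFn (w : V → V → M) : ∀ (n : ℕ) (c : Fin (n + 2) → V),
    pw w (List.ofFn c) = ∑ j : Fin (n + 1), w (c j.castSucc) (c j.succ) := by
  intro n
  induction n with
  | zero =>
      intro c
      rw [List.ofFn_succ, List.ofFn_succ, List.ofFn_zero]
      show w (c 0) (c (Fin.succ 0)) + 0 = ∑ j : Fin 1, w (c j.castSucc) (c j.succ)
      rw [Fin.sum_univ_one, add_zero]
      rfl
  | succ n ih =>
      intro c
      have hlen : (List.ofFn (fun i : Fin (n+2) => c i.succ)).length = n + 2 :=
        List.length_ofFn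
      have hne : List.ofFn (fun i : Fin (n+2) => c i.succ) ≠ [] := by
        intro h
        rw [h] at hlen
        simp at hlen
      rw [List.ofFn_succ, pw_cons w (c 0) _ hne, List.head_ofFn, ih (fun i => c i.succ)]
      rw [Fin.sum_univ_succ (f := fun j : Fin (n+2) => w (c j.castSucc) (c j.succ))]
      congr 1

lemma castSucc_add_one {n : ℕ} (j : Fin (n + 1)) :
    (j.castSucc : Fin (n + 2)) + 1 = j.succ := by
  apply Fin.ext
  rw [Fin.add_def]
  simp only [Fin.coe_castSucc, Fin.val_one, Fin.val_succ]
  exact Nat.mod_eq_of_lt (by omega)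

lemma cycSum (w : V → V → M) (n : ℕ) (c : Fin (n + 2) → V) :
    ∑ i : Fin (n + 2), w (c i) (c (i + 1)) =
      pw w (List.ofFn c) + w (c (Fin.last (n + 1))) (c 0) := by
  rw [Fin.sum_univ_castSucc (f := fun i : Fin (n+2) => w (c i) (c (i+1)))]
  rw [Fin.last_add_one, pw_ofFn]
  congr 1
  refine Finset.sum_congr rfl fun j _ => ?_
  rw [castSucc_add_one]

lemma exists_cycle_of_list (w : V → V → M) (l : List V) (hn : l.Nodup) (h2 : 2 ≤ l.length)
    (hne : l ≠ [])
    (hz : pw w l + w (l.getLast hne) (l.head hne) = 0) :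
    ∃ (m : ℕ) (c : Fin (m + 2) → V), Function.Injective c ∧
      ∑ i : Fin (m + 2), w (c i) (c (i + 1)) = 0 := by
  obtain ⟨m, hm⟩ : ∃ m, l.length = m + 2 := ⟨l.length - 2, by omega⟩
  refine ⟨m, fun i => l.get (Fin.cast hm.symm i), ?_, ?_⟩
  · exact fun i j h => Fin.cast_injective _ (List.nodup_iff_injective_get.mp hn h)
  · have hofn : List.ofFn (fun i : Fin (m+2) => l.get (Fin.cast hm.symm i)) = l := by
      apply List.ext_get (by simp [hm])
      intro n h1 h2'
      rw [List.get_ofFn]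
      exact congrArg l.get (by apply Fin.ext; simp)
    have hlast : l.get (Fin.cast hm.symm (Fin.last (m+1))) = l.getLast hne := by
      rw [List.getLast_eq_getElem]
      simp [List.get_eq_getElem, hm]
    have hhead : l.get (Fin.cast hm.symm 0) = l.head hne := by
      rw [List.head_eq_getElem]
      simp [List.get_eq_getElem]
    have hc := cycSum w m (fun i : Fin (m+2) => l.get (Fin.cast hm.symm i))
    rw [hc, hofn, hlast, hhead]
    exact hz

lemma subset_sum_cover (q : ℕ) (hq : q.Prime) (k : ℕ) (hk : q ≤ k + 1)
    (δ : ℕ → ZMod q) (hδ : ∀ i < k, δ i ≠ 0) (t : ZMod q) :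
    ∃ T ∈ (range k).powerset, ∑ i ∈ T, δ i = t := by
  haveI : Fact q.Prime := ⟨hq⟩
  set A : ℕ → Finset (ZMod q) := fun n => (range n).powerset.image (fun s => ∑ i ∈ s, δ i) with hA
  have hzero : ∀ n, (0 : ZMod q) ∈ A n := by
    intro n
    refine Finset.mem_image.mpr ⟨∅, by simp, by simp⟩
  have hmono : ∀ n, A n ⊆ A (n + 1) := by
    intro n x hx
    obtain ⟨s, hs, hsum⟩ := Finset.mem_image.mp hx
    exact Finset.mem_image.mpr ⟨s, Finset.mem_powerset.mpr
      ((Finset.mem_powerset.mp hs).trans (by intro y hy; simp at hy ⊢; omega)), hsum⟩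
  have hshift : ∀ n, n < k → ∀ x ∈ A n, x + δ n ∈ A (n + 1) := by
    intro n hn x hx
    obtain ⟨s, hs, hsum⟩ := Finset.mem_image.mp hx
    have hns : n ∉ s := fun h => by
      have := Finset.mem_powerset.mp hs h
      simp at this
    refine Finset.mem_image.mpr ⟨insert n s, Finset.mem_powerset.mpr ?_, ?_⟩
    · intro y hy
      rcases Finset.mem_insert.mp hy with rfl | hy
      · simp
      · have := Finset.mem_powerset.mp hs hy
        simp at this ⊢; omega
    · rw [Finset.sum_insert hns, hsum]
      ring
  have hcard : ∀ n ≤ k, min q (n + 1) ≤ (A n).card := by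
    intro n
    induction n with
    | zero =>
        intro _
        have : (0 : ZMod q) ∈ A 0 := hzero 0
        have : 1 ≤ (A 0).card := Finset.card_pos.mpr ⟨0, this⟩
        omega
    | succ n ih =>
        intro hn1
        have hn : n < k := by omega
        have ihc := ih (by omega)
        by_cases hclosed : ∀ x ∈ A n, x + δ n ∈ A n
        · -- A n is closed under adding δ n, hence it is everything
          have huniv : A n = Finset.univ := by
            have hsmul : ∀ m : ℕ, (m • δ n : ZMod q) ∈ A n := by
              intro m
              induction m with
              | zero => simpa using hzero n
              | succ m ihm =>
                  have : (m + 1) • δ n = m • δ n + δ n := by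
                    rw [succ_nsmul]
                  rw [this]
                  exact hclosed _ ihm
            apply Finset.eq_univ_iff_forall.mpr
            intro z
            have hδn : δ n ≠ 0 := hδ n hn
            have heq : ((z * (δ n)⁻¹).val : ℕ) • δ n = z := by
              rw [nsmul_eq_mul]
              rw [ZMod.natCast_val, ZMod.cast_id]
              rw [mul_assoc, inv_mul_cancel₀ hδn, mul_one]
            exact heq ▸ hsmul _
          have : (A (n+1)).card ≥ (A n).card := Finset.card_le_card (hmono n)
          rw [huniv] at this
          simp [Finset.card_univ, ZMod.card] at this
          omega
        · push_neg at hclosed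
          obtain ⟨x, hx, hxn⟩ := hclosed
          have hins : insert (x + δ n) (A n) ⊆ A (n + 1) := by
            intro y hy
            rcases Finset.mem_insert.mp hy with rfl | hy
            · exact hshift n hn x hx
            · exact hmono n hy
          have : (A n).card + 1 ≤ (A (n+1)).card := by
            have := Finset.card_le_card hins
            rwa [Finset.card_insert_of_notMem hxn] at this
          omega
  have hk' : min q (k + 1) = q := by omega
  have : (A k).card = q := by
    have h1 := hcard k (le_refl k)
    rw [hk'] at h1
    have h2 : (A k).card ≤ Fintype.card (ZMod q) := Finset.card_le_univ _
    rw [ZMod.card] at h2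
    omega
  have huniv : A k = Finset.univ := Finset.eq_univ_of_card _ (by rw [this, ZMod.card])
  have : t ∈ A k := huniv ▸ Finset.mem_univ t
  obtain ⟨T, hT, hsum⟩ := Finset.mem_image.mp this
  exact ⟨T, hT, hsum⟩

section Build

variable {V : Type} {q : ℕ} (w : V → V → ZMod q) (t t' : ℕ → V) (L : V)

/-- The sequence of "hub" vertices, chosen greedily. -/
def buildA : ℕ → V
  | 0 => L
  | i+1 =>
      if w (buildA i) (t i) + w (t i) (t' i) - w (buildA i) (t' i) ≠ 0 then t' i else t i

/-- The sequence of "spare" vertices, chosen greedily. -/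
def buildV (i : ℕ) : V :=
  if w (buildA w t t' L i) (t i) + w (t i) (t' i) - w (buildA w t t' L i) (t' i) ≠ 0 then
    t i else t' i

lemma buildA_zero : buildA w t t' L 0 = L := rfl

lemma build_spec (i : ℕ) :
    (buildV w t t' L i = t i ∧ buildA w t t' L (i+1) = t' i) ∨
    (buildV w t t' L i = t' i ∧ buildA w t t' L (i+1) = t i) := by
  by_cases h : w (buildA w t t' L i) (t i) + w (t i) (t' i) - w (buildA w t t' L i) (t' i) ≠ 0
  · left
    constructor
    · rw [buildV, if_pos h]
    · show (if _ ≠ 0 then t' i else t i) = t' i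
      rw [if_pos h]
  · right
    constructor
    · rw [buildV, if_neg h]
    · show (if _ ≠ 0 then t' i else t i) = t i
      rw [if_neg h]

lemma build_delta_ne_zero (i : ℕ) (h2 : w (t i) (t' i) + w (t' i) (t i) ≠ 0) :
    w (buildA w t t' L i) (buildV w t t' L i) +
      w (buildV w t t' L i) (buildA w t t' L (i+1)) -
      w (buildA w t t' L i) (buildA w t t' L (i+1)) ≠ 0 := by
  by_cases h : w (buildA w t t' L i) (t i) + w (t i) (t' i) - w (buildA w t t' L i) (t' i) ≠ 0
  · have h1 : buildV w t t' L i = t i := by rw [buildV, if_pos h]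
    have h2' : buildA w t t' L (i+1) = t' i := by
      show (if _ ≠ 0 then t' i else t i) = t' i
      rw [if_pos h]
    rw [h1, h2']
    exact h
  · have h0 : w (buildA w t t' L i) (t i) + w (t i) (t' i) - w (buildA w t t' L i) (t' i) = 0 :=
      not_not.mp h
    have h1 : buildV w t t' L i = t' i := by rw [buildV, if_neg h]
    have h2' : buildA w t t' L (i+1) = t i := by
      show (if _ ≠ 0 then t' i else t i) = t i
      rw [if_neg h]
    rw [h1, h2']
    intro hc
    apply h2
    linear_combination hc + h0

end Build

end ZeroCycleAux

open ZeroCycleAux in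
/-- Let `q` be a prime and let `Γ` be a complete digraph on `2q - 1` vertices (so every
ordered pair of distinct vertices carries a weight `w u v ∈ ℤ/q`).  Then `Γ` contains a
directed cycle (a cyclic sequence of at least two distinct vertices) whose total weight
is divisible by `q`. -/
theorem complete_digraph_zero_weight_cycle_prime
    (q : ℕ) (hq : q.Prime) (V : Type) [Fintype V]
    (hV : Fintype.card V = 2 * q - 1)
    (w : V → V → ZMod q) :
    ∃ (m : ℕ) (c : Fin (m + 2) → V), Function.Injective c ∧
      ∑ i : Fin (m + 2), w (c i) (c (i + 1)) = 0 := by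
  by_cases hex : ∃ x y : V, x ≠ y ∧ w x y + w y x = 0
  · obtain ⟨x, y, hxy, h0⟩ := hex
    refine ⟨0, fun i => if i = 0 then x else y, ?_, ?_⟩
    · intro i j hij
      fin_cases i <;> fin_cases j <;> simp_all
    · rw [Fin.sum_univ_two]
      norm_num
      exact h0
  · push_neg at hex
    classical
    have hq2 : 2 ≤ q := hq.two_le
    set k := q - 1 with hkdef
    have hk1 : 1 ≤ k := by omega
    have hcard : Fintype.card V = 2 * k + 1 := by omega
    let e : V ≃ Fin (2*k+1) := Fintype.equivFinOfCardEq hcard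
    let f : ℕ → V := fun i => e.symm ⟨i % (2*k+1), Nat.mod_lt _ (by omega)⟩
    have hfinj : ∀ i j, i < 2*k+1 → j < 2*k+1 → f i = f j → i = j := by
      intro i j hi hj h
      have h2 := e.symm.injective h
      have h3 : i % (2*k+1) = j % (2*k+1) := congrArg Fin.val h2
      rwa [Nat.mod_eq_of_lt hi, Nat.mod_eq_of_lt hj] at h3
    let t : ℕ → V := fun i => f (2*i)
    let t' : ℕ → V := fun i => f (2*i+1)
    let L : V := f (2*k)
    have htt' : ∀ i, i < k → t i ≠ t' i := by
      intro i hi h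
      have := hfinj (2*i) (2*i+1) (by omega) (by omega) h
      omega
    have h2cyc : ∀ i, i < k → w (t i) (t' i) + w (t' i) (t i) ≠ 0 := fun i hi =>
      hex _ _ (htt' i hi)
    set a : ℕ → V := buildA w t t' L with haDef
    set v : ℕ → V := buildV w t t' L with hvDef
    have hspec : ∀ i, (v i = t i ∧ a (i+1) = t' i) ∨ (v i = t' i ∧ a (i+1) = t i) :=
      fun i => build_spec w t t' L i
    have ha0 : a 0 = L := rfl
    have hδ : ∀ i, i < k →
        w (a i) (v i) + w (v i) (a (i+1)) - w (a i) (a (i+1)) ≠ 0 := fun i hi =>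
      build_delta_ne_zero w t t' L i (h2cyc i hi)
    -- index representations
    have ra : ∀ i, i ≤ k → ∃ d, d < 2*k+1 ∧ a i = f d ∧
        ((i = 0 ∧ d = 2*k) ∨ (1 ≤ i ∧ (d = 2*(i-1) ∨ d = 2*(i-1)+1))) := by
      intro i hi
      match i with
      | 0 => exact ⟨2*k, by omega, ha0, Or.inl ⟨rfl, rfl⟩⟩
      | Nat.succ i' =>
          rcases hspec i' with ⟨_, h2⟩ | ⟨_, h2⟩
          · exact ⟨2*i'+1, by omega, h2, Or.inr ⟨by omega, Or.inr (by omega)⟩⟩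
          · exact ⟨2*i', by omega, h2, Or.inr ⟨by omega, Or.inl (by omega)⟩⟩
    have rv : ∀ i, i < k → ∃ d, d < 2*k+1 ∧ v i = f d ∧ (d = 2*i ∨ d = 2*i+1) := by
      intro i hi
      rcases hspec i with ⟨h1, _⟩ | ⟨h1, _⟩
      · exact ⟨2*i, by omega, h1, Or.inl rfl⟩
      · exact ⟨2*i+1, by omega, h1, Or.inr rfl⟩
    have H1 : ∀ i j, i ≤ k → j ≤ k → a i = a j → i = j := by
      intro i j hi hj hij
      obtain ⟨d, hd, had, hcase⟩ := ra i hi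
      obtain ⟨d', hd', had', hcase'⟩ := ra j hj
      have : d = d' := hfinj d d' hd hd' (by rw [← had, ← had', hij])
      omega
    have H2 : ∀ i j, i < k → j < k → v i = v j → i = j := by
      intro i j hi hj hij
      obtain ⟨d, hd, hvd, hcase⟩ := rv i hi
      obtain ⟨d', hd', hvd', hcase'⟩ := rv j hj
      have : d = d' := hfinj d d' hd hd' (by rw [← hvd, ← hvd', hij])
      omega
    have H3 : ∀ i j, i ≤ k → j < k → a i ≠ v j := by
      intro i j hi hj hij
      by_cases hij' : i = j + 1
      · subst hij'
        rcases hspec j with ⟨h1, h2⟩ | ⟨h1, h2⟩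
        · rw [h1, h2] at hij
          exact htt' j hj hij.symm
        · rw [h1, h2] at hij
          exact htt' j hj hij
      · obtain ⟨d, hd, had, hcase⟩ := ra i hi
        obtain ⟨d', hd', hvd', hcase'⟩ := rv j hj
        have : d = d' := hfinj d d' hd hd' (by rw [← had, ← hvd', hij])
        omega
    -- subset sums of the deltas cover everything
    let δf : ℕ → ZMod q := fun i =>
      w (a i) (v i) + w (v i) (a (i+1)) - w (a i) (a (i+1))
    obtain ⟨T, hTmem, hTsum⟩ := subset_sum_cover q hq k (by omega) δf hδ
      (-((∑ i ∈ Finset.range k, w (a i) (a (i+1))) + w (a k) (a 0)))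
    have hTsub : T ⊆ Finset.range k := Finset.mem_powerset.mp hTmem
    let Tb : ℕ → Bool := fun i => decide (i ∈ T)
    have hnodup : (interleave a v Tb k).Nodup := nodup_interleave a v Tb k H1 H2 H3
    have hne : interleave a v Tb k ≠ [] := interleave_ne_nil a v Tb k
    have hlen : 2 ≤ (interleave a v Tb k).length :=
      le_trans (by omega) (length_interleave a v Tb k)
    refine exists_cycle_of_list w (interleave a v Tb k) hnodup hlen hne ?_
    rw [pw_interleave, getLast_interleave, head_interleave]
    have hsplit : ∀ i ∈ Finset.range k,
        (if Tb i then w (a i) (v i) + w (v i) (a (i+1)) else w (a i) (a (i+1))) =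
          w (a i) (a (i+1)) + (if i ∈ T then δf i else 0) := by
      intro i _
      by_cases h : i ∈ T
      · rw [if_pos (by simpa [Tb] using h), if_pos h]
        show _ = _ + δf i
        simp only [δf]
        ring
      · rw [if_neg (by simpa [Tb] using h), if_neg h, add_zero]
    rw [Finset.sum_congr rfl hsplit, Finset.sum_add_distrib, Finset.sum_ite_mem,
      Finset.inter_eq_right.mpr hTsub]
    linear_combination hTsum
end

section
/- Let q be a prime and let Γ = (V,E) be a complete digraph on 2q−1 vertices whose edges carry weights w(e) ∈ ℤ/qℤ, and suppose that there is no pair of distinct vertices u, v with w(u,v) = −w(v,u) in ℤ/qℤ. Then for every integer k with 0 ≤ k < q there exist distinct vertices x₀, x₁, y₁, x₂, y₂, …, x_k, y_k in Γ and a set S ⊆ ℤ/qℤ of k+1 distinct residues such that for every s ∈ S there is a directed path P_s from x₀ to x_k of total weight s modulo q, where P_s is the concatenation of k subpaths p₁, p₂, …, p_k in this order, and each p_i is either the single edge x_{i−1}x_i or the two-edge path x_{i−1} y_i x_i. -/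
/-- Let `q` be a prime and `Γ` a complete digraph on `2q - 1` vertices with edge weights
in `ℤ/q`, such that no two distinct vertices `u, v` satisfy `w u v = - w v u`.  Then for
every `k < q` there are distinct vertices `x₀, x₁, y₁, …, x_k, y_k` and a set `S` of
`k + 1` residues modulo `q` such that for every `s ∈ S` there is a directed path from
`x₀` to `x_k` of total weight `s`, consisting of `k` consecutive subpaths, the `i`-th of
which is either the single edge `x_{i-1} x_i` or the two-edge path `x_{i-1} y_i x_i`. -/
theorem complete_digraph_many_path_weights
    (q : ℕ) (hq : q.Prime) (V : Type) [Fintype V]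
    (hV : Fintype.card V = 2 * q - 1)
    (w : V → V → ZMod q)
    (hw : ∀ u v : V, u ≠ v → w u v ≠ - w v u)
    (k : ℕ) (hk : k < q) :
    ∃ (x : Fin (k + 1) → V) (y : Fin k → V),
      Function.Injective (Sum.elim x y) ∧
      ∃ S : Finset (ZMod q), S.card = k + 1 ∧
        ∀ s ∈ S, ∃ ε : Fin k → Bool,
          ∑ i : Fin k,
            (if ε i then w (x i.castSucc) (y i) + w (y i) (x i.succ)
             else w (x i.castSucc) (x i.succ)) = s := by
  classical
  haveI : Fact q.Prime := ⟨hq⟩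
  have hq2 : 2 ≤ q := hq.two_le
  -- an injective family of 2k+1 vertices
  have hcard : Fintype.card (Fin (2 * k + 1)) ≤ Fintype.card V := by
    simp only [Fintype.card_fin, hV]; omega
  obtain ⟨e⟩ := Function.Embedding.nonempty_of_card_le hcard
  set g : ℕ → V := fun n => e ⟨n % (2 * k + 1), Nat.mod_lt _ (by omega)⟩ with hgdef
  have hg : ∀ m n, m ≤ 2 * k → n ≤ 2 * k → g m = g n → m = n := by
    intro m n hm hn h
    have h2 := e.injective h
    simp only [Fin.mk.injEq] at h2
    rwa [Nat.mod_eq_of_lt (by omega), Nat.mod_eq_of_lt (by omega)] at h2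
  -- the recursive construction of the x-vertices
  set X : ℕ → V := fun n => Nat.rec (g 0)
    (fun n a => if w a (g (2 * n + 2)) + w (g (2 * n + 2)) (g (2 * n + 1)) ≠ w a (g (2 * n + 1))
      then g (2 * n + 1) else g (2 * n + 2)) n with hXdef
  set Y : ℕ → V := fun n =>
    if w (X n) (g (2 * n + 2)) + w (g (2 * n + 2)) (g (2 * n + 1)) ≠ w (X n) (g (2 * n + 1))
      then g (2 * n + 2) else g (2 * n + 1) with hYdef
  have hXs : ∀ n, X (n + 1) =
      if w (X n) (g (2 * n + 2)) + w (g (2 * n + 2)) (g (2 * n + 1)) ≠ w (X n) (g (2 * n + 1))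
      then g (2 * n + 1) else g (2 * n + 2) := fun n => rfl
  have hYs : ∀ n, Y n =
      if w (X n) (g (2 * n + 2)) + w (g (2 * n + 2)) (g (2 * n + 1)) ≠ w (X n) (g (2 * n + 1))
      then g (2 * n + 2) else g (2 * n + 1) := fun n => rfl
  -- locating each X n among the g's
  have hXi : ∀ n, ∃ m, m ≤ 2 * n ∧ 2 * n ≤ m + 1 ∧ X n = g m := by
    intro n
    induction n with
    | zero => exact ⟨0, by omega, by omega, rfl⟩
    | succ n ih =>
      rw [hXs n]
      split
      · exact ⟨2 * n + 1, by omega, by omega, rfl⟩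
      · exact ⟨2 * n + 2, by omega, by omega, rfl⟩
  have hYi : ∀ n, Y n = g (2 * n + 1) ∨ Y n = g (2 * n + 2) := by
    intro n
    rw [hYs n]
    split
    · exact Or.inr rfl
    · exact Or.inl rfl
  -- the pair at step n
  have hpair : ∀ n, n < k → X (n + 1) ≠ Y n := by
    intro n hn
    have hne : g (2 * n + 1) ≠ g (2 * n + 2) := by
      intro h; have := hg _ _ (by omega) (by omega) h; omega
    rw [hXs n, hYs n]
    split
    · exact hne
    · exact hne.symm
  set x : Fin (k + 1) → V := fun i => X i.1 with hxdef
  set y : Fin k → V := fun j => Y j.1 with hydef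
  refine ⟨x, y, ?_, ?_⟩
  · -- injectivity
    rintro (i | i) (j | j) h <;> simp only [Sum.elim_inl, Sum.elim_inr, hxdef, hydef] at h ⊢
    · obtain ⟨m, hm1, hm2, hm3⟩ := hXi i.1
      obtain ⟨m', hm1', hm2', hm3'⟩ := hXi j.1
      have heq : g m = g m' := by rw [← hm3, ← hm3']; exact h
      have hik : i.1 ≤ k := by omega
      have hjk : j.1 ≤ k := by omega
      have := hg _ _ (by omega) (by omega) heq
      exact congrArg Sum.inl (Fin.ext (by omega))
    · exfalso
      obtain ⟨m, hm1, hm2, hm3⟩ := hXi i.1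
      have hik : i.1 ≤ k := by omega
      have hjk : j.1 < k := j.2
      rcases hYi j.1 with hy | hy
      · have heq : g m = g (2 * j.1 + 1) := by rw [← hm3, ← hy]; exact h
        have := hg _ _ (by omega) (by omega) heq
        have hij : i.1 = j.1 + 1 := by omega
        exact hpair j.1 hjk (by rw [← hij]; exact h)
      · have heq : g m = g (2 * j.1 + 2) := by rw [← hm3, ← hy]; exact h
        have := hg _ _ (by omega) (by omega) heq
        have hij : i.1 = j.1 + 1 := by omega
        exact hpair j.1 hjk (by rw [← hij]; exact h)
    · exfalso
      obtain ⟨m, hm1, hm2, hm3⟩ := hXi j.1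
      have hjk : j.1 ≤ k := by omega
      have hik : i.1 < k := i.2
      rcases hYi i.1 with hy | hy
      · have heq : g m = g (2 * i.1 + 1) := by rw [← hm3, ← hy]; exact h.symm
        have := hg _ _ (by omega) (by omega) heq
        have hij : j.1 = i.1 + 1 := by omega
        exact hpair i.1 hik (by rw [← hij]; exact h.symm)
      · have heq : g m = g (2 * i.1 + 2) := by rw [← hm3, ← hy]; exact h.symm
        have := hg _ _ (by omega) (by omega) heq
        have hij : j.1 = i.1 + 1 := by omega
        exact hpair i.1 hik (by rw [← hij]; exact h.symm)
    · have hik : i.1 < k := i.2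
      have hjk : j.1 < k := j.2
      rcases hYi i.1 with hy | hy <;> rcases hYi j.1 with hy' | hy' <;>
        [skip; skip; skip; skip] <;>
      · have heq := h
        rw [hy, hy'] at heq
        have := hg _ _ (by omega) (by omega) heq
        exact congrArg Sum.inr (Fin.ext (by omega))
  · -- the set of weights
    set d : Fin k → ZMod q := fun i =>
      (w (x i.castSucc) (y i) + w (y i) (x i.succ)) - w (x i.castSucc) (x i.succ) with hddef
    have hd : ∀ i, d i ≠ 0 := by
      intro i
      have hik : i.1 < k := i.2
      have huv : g (2 * i.1 + 1) ≠ g (2 * i.1 + 2) := by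
        intro h; have := hg _ _ (by omega) (by omega) h; omega
      have hxc : x i.castSucc = X i.1 := rfl
      have hxs : x i.succ = X (i.1 + 1) := rfl
      have hyi : y i = Y i.1 := rfl
      rw [hddef]
      simp only [hxc, hxs, hyi, hXs i.1, hYs i.1]
      split
      · next hcond =>
        intro h
        rw [sub_eq_zero] at h
        exact hcond h
      · next hcond =>
        push_neg at hcond
        intro h
        rw [sub_eq_zero] at h
        exact hw (g (2 * i.1 + 1)) (g (2 * i.1 + 2)) huv (by linear_combination h + hcond)
    -- deviations
    set d' : ℕ → ZMod q := fun n => if h : n < k then d ⟨n, h⟩ else 1 with hd'def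
    have hd' : ∀ n, d' n ≠ 0 := by
      intro n; rw [hd'def]; dsimp only; split
      · exact hd _
      · exact one_ne_zero
    set A : ℕ → Finset (ZMod q) := fun n => Nat.rec ({0} : Finset (ZMod q))
      (fun n s => s ∪ s.image (· + d' n)) n with hAdef
    have hA0 : A 0 = {0} := rfl
    have hAs : ∀ n, A (n + 1) = A n ∪ (A n).image (· + d' n) := fun n => rfl
    have hAne : ∀ n, (A n).Nonempty := by
      intro n
      induction n with
      | zero => exact ⟨0, by simp [hA0]⟩
      | succ n ih => rw [hAs]; exact ih.mono Finset.subset_union_left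
    have hgrow : ∀ n, n ≤ k → n + 1 ≤ (A n).card := by
      intro n
      induction n with
      | zero => intro _; simp [hA0]
      | succ n ih =>
        intro hn
        have ihc := ih (by omega)
        by_cases hcl : ∀ a ∈ A n, a + d' n ∈ A n
        · -- closed under adding d' n ⇒ A n = univ
          obtain ⟨a, ha⟩ := hAne n
          have hmul : ∀ m : ℕ, a + (m : ZMod q) * d' n ∈ A n := by
            intro m
            induction m with
            | zero => simpa using ha
            | succ m ihm =>
              have h2 := hcl _ ihm
              have h3 : a + ((m : ℕ) + 1 : ZMod q) * d' n
                  = a + (m : ZMod q) * d' n + d' n := by ring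
              rw [show ((m + 1 : ℕ) : ZMod q) = ((m : ℕ) + 1 : ZMod q) by push_cast; ring, h3]
              exact h2
          have huniv : A n = Finset.univ := by
            apply Finset.eq_univ_of_forall
            intro z
            have hdn := hd' n
            have hz : z = a + ((((z - a) * (d' n)⁻¹).val : ℕ) : ZMod q) * d' n := by
              rw [ZMod.natCast_zmod_val]
              field_simp
              ring
            rw [hz]
            exact hmul _
          have hcq : (A n).card = q := by rw [huniv, Finset.card_univ, ZMod.card]
          rw [hAs]
          calc n + 1 + 1 ≤ q := by omega
            _ = (A n).card := hcq.symm
            _ ≤ (A n ∪ (A n).image (· + d' n)).card :=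
              Finset.card_le_card Finset.subset_union_left
        · push_neg at hcl
          obtain ⟨a, ha, hna⟩ := hcl
          rw [hAs]
          have hsub : insert (a + d' n) (A n) ⊆ A n ∪ (A n).image (· + d' n) := by
            intro z hz
            rcases Finset.mem_insert.1 hz with rfl | hz
            · exact Finset.mem_union_right _ (Finset.mem_image_of_mem _ ha)
            · exact Finset.mem_union_left _ hz
          calc n + 1 + 1 ≤ (A n).card + 1 := by omega
            _ = (insert (a + d' n) (A n)).card := (Finset.card_insert_of_notMem hna).symm
            _ ≤ _ := Finset.card_le_card hsub
    have hmem : ∀ n, n ≤ k → ∀ s ∈ A n, ∃ ε : Fin k → Bool,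
        (∀ i : Fin k, ε i = true → i.1 < n) ∧ ∑ i, (if ε i then d i else 0) = s := by
      intro n
      induction n with
      | zero =>
        intro _ s hs
        rw [hA0, Finset.mem_singleton] at hs
        subst hs
        exact ⟨fun _ => false, fun i h => by simp at h, by simp⟩
      | succ n ih =>
        intro hn s hs
        rw [hAs, Finset.mem_union] at hs
        rcases hs with hs | hs
        · obtain ⟨ε, hε1, hε2⟩ := ih (by omega) s hs
          exact ⟨ε, fun i h => Nat.lt_succ_of_lt (hε1 i h), hε2⟩
        · obtain ⟨t, ht, rfl⟩ := Finset.mem_image.1 hs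
          obtain ⟨ε, hε1, hε2⟩ := ih (by omega) t ht
          have hnk : n < k := by omega
          refine ⟨Function.update ε ⟨n, hnk⟩ true, ?_, ?_⟩
          · intro i hi
            rcases eq_or_ne i ⟨n, hnk⟩ with rfl | hne
            · simp
            · rw [Function.update_of_ne hne] at hi
              exact Nat.lt_succ_of_lt (hε1 i hi)
          · have hεn : ε ⟨n, hnk⟩ = false := by
              by_contra hc
              have h2 := hε1 ⟨n, hnk⟩ (by simpa using hc)
              simp only at h2; omega
            have hfun : ∀ i : Fin k,
                (if Function.update ε ⟨n, hnk⟩ true i = true then d i else 0)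
                = Function.update (fun i => if ε i = true then d i else 0)
                    ⟨n, hnk⟩ (d ⟨n, hnk⟩) i := by
              intro i
              rcases eq_or_ne i ⟨n, hnk⟩ with rfl | hne
              · simp
              · simp [Function.update_of_ne hne]
            rw [Finset.sum_congr rfl (fun i _ => hfun i),
              Finset.sum_update_of_mem (Finset.mem_univ _)]
            have hrest : ∑ i ∈ Finset.univ \ {(⟨n, hnk⟩ : Fin k)},
                (if ε i then d i else 0) = t := by
              rw [← hε2]
              rw [Finset.sum_eq_sum_sdiff_singleton_add (Finset.mem_univ (⟨n, hnk⟩ : Fin k))]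
              simp [hεn]
            rw [hrest, hd'def]
            dsimp only
            rw [dif_pos hnk]
            ring
    obtain ⟨S₀, hS₀sub, hS₀card⟩ := Finset.exists_subset_card_eq (hgrow k le_rfl)
    set c : ZMod q := ∑ i : Fin k, w (x i.castSucc) (x i.succ) with hcdef
    refine ⟨S₀.image (c + ·), ?_, ?_⟩
    · rw [Finset.card_image_of_injective _ (add_right_injective c), hS₀card]
    · intro s hs
      obtain ⟨t, ht, rfl⟩ := Finset.mem_image.1 hs
      obtain ⟨ε, -, hε2⟩ := hmem k le_rfl t (hS₀sub ht)
      refine ⟨ε, ?_⟩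
      have hterm : ∀ i : Fin k,
          (if ε i then w (x i.castSucc) (y i) + w (y i) (x i.succ)
            else w (x i.castSucc) (x i.succ))
          = w (x i.castSucc) (x i.succ) + (if ε i then d i else 0) := by
        intro i
        rw [hddef]
        by_cases h : ε i <;> simp [h]
      rw [Finset.sum_congr rfl (fun i _ => hterm i), Finset.sum_add_distrib, hε2, hcdef]
end

section
/- Let q be a prime and let Γ = (V,E) be a complete digraph on 2q−1 vertices whose edges carry weights w(e) ∈ ℤ/qℤ, and suppose that there is no pair of distinct vertices u, v with w(u,v) = −w(v,u) in ℤ/qℤ. Then there exist two distinct vertices x and y in Γ such that for every residue s ∈ ℤ/qℤ there is a simple directed path from x to y whose total weight is congruent to s modulo q. -/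
open Pointwise

section
variable {q : ℕ} {V : Type} (w : V → V → ZMod q)

def pw : V → List V → ZMod q
  | _, [] => 0
  | u, a :: l => w u a + pw a l

def good : V → List (V × V) → Prop
  | _, [] => True
  | u, (z, v) :: L => (w u z + w z v ≠ w u v) ∧ good v L

def FF : V → List (V × V) → Finset (ZMod q)
  | _, [] => {0}
  | u, (z, v) :: L => ({w u v, w u z + w z v} : Finset (ZMod q)) + FF v L

lemma FF_nonempty : ∀ (L : List (V × V)) (u : V), (FF w u L).Nonempty := by
  intro L
  induction L with
  | nil => intro u; exact ⟨0, by simp [FF]⟩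
  | cons p L ih =>
    intro u
    obtain ⟨z, v⟩ := p
    exact Finset.Nonempty.add (by simp [Finset.insert_nonempty]) (ih v)

lemma FF_card (hq : q.Prime) : ∀ (L : List (V × V)) (u : V), good w u L →
    min q (L.length + 1) ≤ (FF w u L).card := by
  intro L
  induction L with
  | nil =>
    intro u _
    have h : (FF w u []).card = 1 := by simp [FF]
    rw [h]
    simpa using min_le_right q 1
  | cons p L ih =>
    intro u hg
    obtain ⟨z, v⟩ := p
    obtain ⟨h1, h2⟩ := hg
    have hpair : ({w u v, w u z + w z v} : Finset (ZMod q)).card = 2 :=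
      Finset.card_pair (Ne.symm h1)
    have hcd := ZMod.cauchy_davenport hq (s := {w u v, w u z + w z v}) (t := FF w v L)
      (by simp [Finset.insert_nonempty]) (FF_nonempty w L v)
    have hih := ih v h2
    rw [hpair] at hcd
    show min q (L.length + 1 + 1) ≤ (FF w u ((z, v) :: L)).card
    have : FF w u ((z, v) :: L) = ({w u v, w u z + w z v} : Finset (ZMod q)) + FF w v L := rfl
    rw [this]
    omega

end

def expandP {V : Type} : List ((V × V) × Bool) → List V
  | [] => []
  | ((z, v), b) :: L => (if b then [z, v] else [v]) ++ expandP L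

def flatP {V : Type} : List (V × V) → List V
  | [] => []
  | (z, v) :: L => z :: v :: flatP L

section
variable {q : ℕ} {V : Type} (w : V → V → ZMod q)

variable [DecidableEq V]

set_option linter.unusedSectionVars false in
lemma pick (hw : ∀ u v : V, u ≠ v → w u v ≠ - w v u)
    (u : V) (pool : Finset V) (h2 : 2 ≤ pool.card) :
    ∃ z ∈ pool, ∃ v ∈ pool, z ≠ v ∧ w u z + w z v ≠ w u v := by
  obtain ⟨z, hz, v, hv, hzv⟩ := Finset.one_lt_card.mp h2
  by_cases h1 : w u z + w z v ≠ w u v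
  · exact ⟨z, hz, v, hv, hzv, h1⟩
  by_cases h2' : w u v + w v z ≠ w u z
  · exact ⟨v, hv, z, hz, hzv.symm, h2'⟩
  push_neg at h1 h2'
  exfalso
  apply hw z v hzv
  have : w z v = - w v z := by linear_combination h1 + h2'
  exact this


set_option linter.unusedSectionVars false in
lemma buildL (hw : ∀ u v : V, u ≠ v → w u v ≠ - w v u) :
    ∀ (k : ℕ) (u : V) (pool : Finset V), u ∉ pool → pool.card = 2 * k →
    ∃ L : List (V × V), L.length = k ∧ good w u L ∧ (u :: flatP L).Nodup ∧
      ∀ x ∈ flatP L, x ∈ pool := by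
  intro k
  induction k with
  | zero => intro u pool _ _; exact ⟨[], rfl, trivial, by simp [flatP], by simp [flatP]⟩
  | succ n ih =>
    intro u pool hu hcard
    obtain ⟨z, hz, v, hv, hzv, hkey⟩ := pick w hw u pool (by omega)
    set pool' := (pool.erase z).erase v with hp'
    have hvz : v ∉ pool' := Finset.notMem_erase _ _
    have hcard' : pool'.card = 2 * n := by
      rw [hp', Finset.card_erase_of_mem (Finset.mem_erase.mpr ⟨hzv.symm, hv⟩),
        Finset.card_erase_of_mem hz]
      omega
    obtain ⟨L', hlen, hgood, hnd, hsub⟩ := ih v pool' hvz hcard'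
    have hsub' : ∀ x ∈ flatP L', x ∈ pool := fun x hx =>
      Finset.mem_of_mem_erase (Finset.mem_of_mem_erase (hsub x hx))
    have hzL : z ∉ flatP L' := fun h => (Finset.mem_erase.mp (Finset.mem_of_mem_erase (hsub z h))).1 rfl
    have hvL : v ∉ flatP L' := fun h => (Finset.mem_erase.mp (hsub v h)).1 rfl
    refine ⟨(z, v) :: L', by simp [hlen], ⟨hkey, hgood⟩, ?_, ?_⟩
    · show (u :: z :: v :: flatP L').Nodup
      refine List.nodup_cons.mpr ⟨?_, List.nodup_cons.mpr ⟨?_, hnd⟩⟩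
      · simp only [List.mem_cons]
        push_neg
        exact ⟨fun h => hu (h ▸ hz), fun h => hu (h ▸ hv), fun h => hu (hsub' u h)⟩
      · simp only [List.mem_cons]
        push_neg
        exact ⟨hzv, hzL⟩
    · intro x hx
      simp only [flatP, List.mem_cons] at hx
      rcases hx with rfl | rfl | h
      · exact hz
      · exact hv
      · exact hsub' x h


lemma mem_FF : ∀ (L : List (V × V)) (u : V) (s : ZMod q), s ∈ FF w u L →
    ∃ ε : List Bool, ε.length = L.length ∧ pw w u (expandP (L.zip ε)) = s := by
  intro L
  induction L with
  | nil =>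
    intro u s hs
    simp [FF] at hs
    exact ⟨[], rfl, by simp [expandP, pw, hs]⟩
  | cons p L ih =>
    intro u s hs
    obtain ⟨z, v⟩ := p
    rw [show FF w u ((z, v) :: L) = ({w u v, w u z + w z v} : Finset (ZMod q)) + FF w v L
      from rfl, Finset.mem_add] at hs
    obtain ⟨a, ha, b, hb, hab⟩ := hs
    obtain ⟨ε, hlen, hpw⟩ := ih v b hb
    simp only [Finset.mem_insert, Finset.mem_singleton] at ha
    rcases ha with rfl | rfl
    · refine ⟨false :: ε, by simp [hlen], ?_⟩
      show pw w u (v :: expandP (L.zip ε)) = s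
      rw [show pw w u (v :: expandP (L.zip ε)) = w u v + pw w v (expandP (L.zip ε)) from rfl,
        hpw, hab]
    · refine ⟨true :: ε, by simp [hlen], ?_⟩
      show pw w u (z :: v :: expandP (L.zip ε)) = s
      rw [show pw w u (z :: v :: expandP (L.zip ε))
          = w u z + (w z v + pw w v (expandP (L.zip ε))) from rfl, hpw, ← hab]
      ring

lemma expandP_sublist : ∀ (L : List (V × V)) (ε : List Bool),
    List.Sublist (expandP (L.zip ε)) (flatP L) := by
  intro L
  induction L with
  | nil => intro ε; exact List.nil_sublist _
  | cons p L ih =>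
    intro ε
    obtain ⟨z, v⟩ := p
    cases ε with
    | nil => exact List.nil_sublist _
    | cons b ε =>
      show List.Sublist ((if b then [z, v] else [v]) ++ expandP (L.zip ε)) (z :: v :: flatP L)
      cases b
      · exact List.Sublist.cons z (List.Sublist.cons₂ v (ih ε))
      · exact List.Sublist.cons₂ z (List.Sublist.cons₂ v (ih ε))

lemma expandP_ne_nil {V : Type} : ∀ (L : List (V × V)) (ε : List Bool),
    L ≠ [] → ε.length = L.length → expandP (L.zip ε) ≠ [] := by
  intro L ε hL hlen
  cases L with
  | nil => exact absurd rfl hL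
  | cons p L =>
    obtain ⟨z, v⟩ := p
    cases ε with
    | nil => simp at hlen
    | cons b ε =>
      show (if b then [z, v] else [v]) ++ expandP (L.zip ε) ≠ []
      cases b <;> simp

lemma expandP_getLast? {V : Type} : ∀ (L : List (V × V)) (ε : List Bool),
    ε.length = L.length → (expandP (L.zip ε)).getLast? = (flatP L).getLast? := by
  intro L
  induction L with
  | nil => intro ε _; rfl
  | cons p L ih =>
    intro ε hlen
    obtain ⟨z, v⟩ := p
    cases ε with
    | nil => simp at hlen
    | cons b ε =>
      simp only [List.length_cons] at hlen
      show ((if b then [z, v] else [v]) ++ expandP (L.zip ε)).getLast? = (z :: v :: flatP L).getLast?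
      by_cases hL : L = []
      · subst hL
        have : ε = [] := by simpa using hlen
        subst this
        cases b <;> rfl
      · have h1 : expandP (L.zip ε) ≠ [] := expandP_ne_nil L ε hL (by omega)
        have h2 : flatP L ≠ [] := by cases L with | nil => exact absurd rfl hL | cons p L => obtain ⟨a, c⟩ := p; simp [flatP]
        rw [List.getLast?_append_of_ne_nil _ h1, ih ε (by omega)]
        rw [show (z :: v :: flatP L) = [z, v] ++ flatP L from rfl,
          List.getLast?_append_of_ne_nil _ h2]

lemma sum_consec : ∀ (l : List V) (a : V),
    ∑ i : Fin l.length, w ((a :: l).get i.castSucc) ((a :: l).get i.succ) = pw w a l := by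
  intro l
  induction l with
  | nil => intro a; simp [pw]
  | cons b l ih =>
    intro a
    show ∑ i : Fin (l.length + 1),
        w ((a :: b :: l).get i.castSucc) ((a :: b :: l).get i.succ) = pw w a (b :: l)
    rw [Fin.sum_univ_succ]
    have key : ∀ i : Fin l.length,
        w ((a :: b :: l).get (Fin.castSucc (Fin.succ i)))
          ((a :: b :: l).get (Fin.succ (Fin.succ i)))
        = w ((b :: l).get i.castSucc) ((b :: l).get i.succ) := by
      intro i
      congr 1
    rw [Finset.sum_congr rfl (fun i _ => key i), ih b]
    show w a b + pw w b l = pw w a (b :: l)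
    rfl

end

/-- Let `q` be a prime and `Γ` a complete digraph on `2q - 1` vertices with edge weights
in `ℤ/q`, such that no two distinct vertices `u, v` satisfy `w u v = - w v u`.  Then
there are two distinct vertices `x, y` such that for every residue `s ∈ ℤ/q` there is a
simple directed path from `x` to `y` of total weight `s`. -/
theorem complete_digraph_all_path_weights
    (q : ℕ) (hq : q.Prime) (V : Type) [Fintype V]
    (hV : Fintype.card V = 2 * q - 1)
    (w : V → V → ZMod q)
    (hw : ∀ u v : V, u ≠ v → w u v ≠ - w v u) :
    ∃ x y : V, x ≠ y ∧ ∀ s : ZMod q,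
      ∃ (m : ℕ) (c : Fin (m + 1) → V), Function.Injective c ∧
        c 0 = x ∧ c (Fin.last m) = y ∧
        ∑ i : Fin m, w (c i.castSucc) (c i.succ) = s := by
  classical
  have hq2 := hq.two_le
  haveI : NeZero q := ⟨hq.ne_zero⟩
  have hVpos : 0 < Fintype.card V := by omega
  haveI : Nonempty V := Fintype.card_pos_iff.mp hVpos
  obtain ⟨x⟩ := ‹Nonempty V›
  have hxp : x ∉ Finset.univ.erase x := Finset.notMem_erase x _
  have hcard : (Finset.univ.erase x).card = 2 * (q - 1) := by
    rw [Finset.card_erase_of_mem (Finset.mem_univ x), Finset.card_univ, hV]; omega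
  obtain ⟨L, hlen, hgood, hnodup, hsub⟩ := buildL w hw (q - 1) x _ hxp hcard
  have hLne : L ≠ [] := by
    intro h; rw [h] at hlen; simp only [List.length_nil] at hlen; omega
  have hflatne : flatP L ≠ ([] : List V) := by
    cases L with
    | nil => exact absurd rfl hLne
    | cons p L => obtain ⟨a, c⟩ := p; simp [flatP]
  set y := (flatP L).getLast hflatne with hy
  have hymem : y ∈ flatP L := List.getLast_mem hflatne
  have hxy : x ≠ y := fun h => (List.nodup_cons.mp hnodup).1 (h ▸ hymem)
  refine ⟨x, y, hxy, fun s => ?_⟩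
  have hFmem : s ∈ FF w x L := by
    have h1 := FF_card w hq L x hgood
    rw [hlen] at h1
    have h2 : min q (q - 1 + 1) = q := by omega
    rw [h2] at h1
    have h3 : (FF w x L) = Finset.univ := by
      apply Finset.eq_univ_of_card
      rw [ZMod.card q]
      have := Finset.card_le_univ (FF w x L)
      rw [ZMod.card q] at this
      omega
    rw [h3]; exact Finset.mem_univ s
  obtain ⟨ε, hεlen, hpw⟩ := mem_FF w L x s hFmem
  have hene : expandP (L.zip ε) ≠ ([] : List V) := expandP_ne_nil L ε hLne hεlen
  have hnd : (x :: expandP (L.zip ε) : List V).Nodup :=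
    hnodup.sublist (List.Sublist.cons₂ x (expandP_sublist L ε))
  refine ⟨(expandP (L.zip ε) : List V).length,
    fun i => (x :: expandP (L.zip ε) : List V).get i, ?_, ?_, ?_, ?_⟩
  · exact List.nodup_iff_injective_get.mp hnd
  · rfl
  · show (x :: expandP (L.zip ε) : List V).get (Fin.last _) = y
    have h1 : (x :: expandP (L.zip ε) : List V).get (Fin.last _)
        = (x :: expandP (L.zip ε) : List V).getLast (List.cons_ne_nil _ _) := by
      rw [List.getLast_eq_getElem]
      simp
    rw [h1, List.getLast_cons hene]
    have h2 := expandP_getLast? (V := V) L ε hεlen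
    rw [List.getLast?_eq_getLast_of_ne_nil hene, List.getLast?_eq_getLast_of_ne_nil hflatne] at h2
    exact Option.some.inj h2
  · exact (sum_consec w _ x).trans hpw
end

section
/- For every integer q ≥ 2, setting g = 2·⌈2q·ln q⌉, the following holds: every graph G containing the complete graph K_g as a minor, whose edges carry weights in ℤ/qℤ, contains a cycle whose total weight (the sum of the weights of its edges) is congruent to 0 modulo q. -/
open SimpleGraph

/-- A graph `G` contains the complete graph `K_n` as a minor. -/
def HasCliqueMinor {V : Type*} (G : SimpleGraph V) (n : ℕ) : Prop :=
  ∃ B : Fin n → Set V,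
    (∀ i, (B i).Nonempty) ∧
    (∀ i, (G.induce (B i)).Connected) ∧
    (∀ i j, i ≠ j → Disjoint (B i) (B j)) ∧
    (∀ i j, i ≠ j → ∃ u ∈ B i, ∃ v ∈ B j, G.Adj u v)

namespace ZWC

section lists

variable {V : Type} {A : Type} [AddCommGroup A]

def linsum (γ : V → V → A) : List V → A
  | x :: y :: r => γ x y + linsum γ (y :: r)
  | _ => 0

@[simp] lemma linsum_nil (γ : V → V → A) : linsum γ [] = 0 := rfl

@[simp] lemma linsum_single (γ : V → V → A) (a : V) : linsum γ [a] = 0 := rfl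

lemma linsum_cons_cons (γ : V → V → A) (x y : V) (r : List V) :
    linsum γ (x :: y :: r) = γ x y + linsum γ (y :: r) := rfl

lemma linsum_append (γ : V → V → A) :
    ∀ (p r : List V) (hp : p ≠ []) (hr : r ≠ []),
      linsum γ (p ++ r) = linsum γ p + γ (p.getLast hp) (r.head hr) + linsum γ r
  | [], _, hp, _ => absurd rfl hp
  | [a], b :: r', _, _ => by
      simp [linsum_cons_cons]
  | a :: b :: p', r, _, hr => by
      show γ a b + linsum γ ((b :: p') ++ r) = _
      rw [linsum_append γ (b :: p') r (by simp) hr, linsum_cons_cons,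
        List.getLast_cons (by simp : (b :: p') ≠ [])]
      abel

def cycSum (γ : V → V → A) : List V → A
  | [] => 0
  | a :: r => linsum γ ((a :: r) ++ [a])

lemma cycSum_cons (γ : V → V → A) (a : V) (r : List V) :
    cycSum γ (a :: r) = linsum γ (a :: r) +
      γ ((a :: r).getLast (by simp)) a := by
  show linsum γ ((a :: r) ++ [a]) = _
  rw [linsum_append γ (a :: r) [a] (by simp) (by simp)]
  simp

lemma cycSum_eq (γ : V → V → A) {l : List V} {h0 e : V}
    (hh : l.head? = some h0) (hl : l.getLast? = some e) :
    cycSum γ l = linsum γ l + γ e h0 := by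
  cases l with
  | nil => simp at hh
  | cons a r =>
      have ha : a = h0 := by simpa using hh
      have he : (a :: r).getLast (by simp) = e := by
        rw [List.getLast?_eq_getLast_of_ne_nil (by simp : (a :: r) ≠ [])] at hl
        simpa using hl
      subst ha
      rw [cycSum_cons, he]

lemma linsum_add (f g : V → V → A) :
    ∀ l : List V, linsum (fun u v => f u v + g u v) l = linsum f l + linsum g l
  | [] => by simp
  | [a] => by simp
  | x :: y :: r => by
      rw [linsum_cons_cons, linsum_cons_cons, linsum_cons_cons, linsum_add f g (y :: r)]
      abel

lemma cycSum_add (f g : V → V → A) (l : List V) :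
    cycSum (fun u v => f u v + g u v) l = cycSum f l + cycSum g l := by
  cases l with
  | nil => simp [cycSum]
  | cons a r => show linsum _ _ = linsum _ _ + linsum _ _ ; rw [linsum_add]

lemma linsum_hom {A' : Type} [AddCommGroup A'] (F : A →+ A') (γ : V → V → A) :
    ∀ l : List V, linsum (fun u v => F (γ u v)) l = F (linsum γ l)
  | [] => by simp
  | [a] => by simp
  | x :: y :: r => by
      rw [linsum_cons_cons, linsum_cons_cons, linsum_hom F γ (y :: r), map_add]

lemma cycSum_hom {A' : Type} [AddCommGroup A'] (F : A →+ A') (γ : V → V → A) (l : List V) :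
    cycSum (fun u v => F (γ u v)) l = F (cycSum γ l) := by
  cases l with
  | nil => simp [cycSum]
  | cons a r => show linsum _ _ = F (linsum _ _); rw [linsum_hom]

lemma linsum_sub_fun (φ : V → A) :
    ∀ (l : List V) (h : l ≠ []),
      linsum (fun u v => φ u - φ v) l = φ (l.head h) - φ (l.getLast h)
  | [], h => absurd rfl h
  | [a], _ => by simp
  | x :: y :: r, _ => by
      rw [linsum_cons_cons, linsum_sub_fun φ (y :: r) (by simp),
        List.getLast_cons (by simp : (y :: r) ≠ [])]
      simp only [List.head_cons]
      abel

lemma cycSum_sub_fun (φ : V → A) (l : List V) :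
    cycSum (fun u v => φ u - φ v) l = 0 := by
  cases l with
  | nil => rfl
  | cons a r =>
      show linsum _ ((a :: r) ++ [a]) = 0
      rw [linsum_sub_fun φ ((a :: r) ++ [a]) (by simp)]
      simp

lemma linsum_congr {f g : V → V → A} :
    ∀ (l : List V), l.Chain' (· ≠ ·) →
      (∀ u v, u ∈ l → v ∈ l → u ≠ v → f u v = g u v) →
      linsum f l = linsum g l
  | [], _, _ => rfl
  | [a], _, _ => rfl
  | x :: y :: r, hch, hfg => by
      rw [linsum_cons_cons, linsum_cons_cons]
      have h1 := (List.isChain_cons_cons.mp hch).1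
      rw [hfg x y (by simp) (by simp) h1,
        linsum_congr (y :: r) (List.isChain_cons_cons.mp hch).2
          (fun u v hu hv huv => hfg u v (by simp [hu]) (by simp [hv]) huv)]

lemma cycSum_congr {f g : V → V → A} (l : List V) (h2 : 2 ≤ l.length) (hn : l.Nodup)
    (hfg : ∀ u v, u ∈ l → v ∈ l → u ≠ v → f u v = g u v) :
    cycSum f l = cycSum g l := by
  cases l with
  | nil => rfl
  | cons a r =>
      cases r with
      | nil => simp at h2
      | cons b r' =>
        have hmem : ∀ u, u ∈ (a :: b :: r') ++ [a] → u ∈ a :: b :: r' := by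
          intro u hu
          rcases List.mem_append.mp hu with h | h
          · exact h
          · simp at h; simp [h]
        show linsum f ((a :: b :: r') ++ [a]) = linsum g ((a :: b :: r') ++ [a])
        apply linsum_congr
        · apply List.isChain_append.mpr
          refine ⟨List.Pairwise.isChain hn, List.isChain_singleton a, ?_⟩
          intro x hx y hy
          simp only [List.head?_cons, Option.mem_def, Option.some.injEq] at hy
          subst hy
          rw [List.getLast?_eq_getLast_of_ne_nil (by simp : (a :: b :: r') ≠ [])] at hx
          simp only [Option.mem_def, Option.some.injEq] at hx
          have hx2 : x ∈ b :: r' := by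
            subst hx
            rw [List.getLast_cons (by simp : (b :: r') ≠ [])]
            exact List.getLast_mem _
          intro he
          subst he
          exact (List.nodup_cons.mp hn).1 hx2
        · intro u v hu hv huv
          exact hfg u v (hmem u hu) (hmem v hv) huv

lemma getLast_eq_of_getLast? {l : List V} {e : V} (h : l ≠ []) (he : l.getLast? = some e) :
    l.getLast h = e := by
  rw [List.getLast?_eq_getLast_of_ne_nil h] at he
  exact (Option.some_injective _ he)

lemma head_eq_of_head? {l : List V} {e : V} (h : l ≠ []) (he : l.head? = some e) :
    l.head h = e := by
  cases l with
  | nil => exact absurd rfl h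
  | cons a r => simpa using he

end lists

section graph

variable {V : Type} {G : SimpleGraph V}

def walkOfChain (G : SimpleGraph V) :
    ∀ (a : V) (l : List V), List.Chain G.Adj a l →
      G.Walk a ((a :: l).getLast (List.cons_ne_nil _ _))
  | _, [], _ => Walk.nil
  | a, b :: r, h =>
      Walk.cons (List.chain_cons.mp h).1
        ((walkOfChain G b r (List.chain_cons.mp h).2).copy rfl
          (List.getLast_cons (List.cons_ne_nil _ _)).symm)

lemma support_walkOfChain (G : SimpleGraph V) :
    ∀ (a : V) (l : List V) (h : List.Chain G.Adj a l),
      (walkOfChain G a l h).support = a :: l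
  | _, [], _ => rfl
  | a, b :: r, h => by
      show _ :: (Walk.copy _ _ _).support = _
      rw [Walk.support_copy]; exact congrArg (a :: ·) (support_walkOfChain G b r _)

lemma weight_walkOfChain {q : ℕ} (w : V → V → ZMod q) (G : SimpleGraph V) :
    ∀ (a : V) (l : List V) (h : List.Chain G.Adj a l),
      walkWeight w (walkOfChain G a l h) = linsum w (a :: l)
  | _, [], _ => rfl
  | a, b :: r, h => by
      show (List.map _ (Walk.darts (Walk.cons _ _))).sum = _
      rw [Walk.darts_cons, List.map_cons, List.sum_cons, Walk.darts_copy]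
      exact congrArg (w a b + ·) (weight_walkOfChain w G b r (List.chain_cons.mp h).2)

lemma length_eq_one_of_closing_edge :
    ∀ {a z : V} (p : G.Walk a z), p.IsPath → s(z, a) ∈ p.edges → p.length = 1 := by
  intro a z p
  induction p with
  | nil => intro _ h; simp at h
  | @cons u b z hadj q ih =>
      intro hp he
      rw [Walk.edges_cons, List.mem_cons] at he
      have hp2 := (Walk.cons_isPath_iff hadj q).mp hp
      rcases he with he | he
      · rw [Sym2.eq_iff] at he
        rcases he with ⟨h1, h2⟩ | ⟨h1, h2⟩
        · subst h1
          exact absurd q.end_mem_support hp2.2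
        · subst h1
          cases q with
          | nil => simp
          | cons hadj' q' =>
              have hq2 := (Walk.cons_isPath_iff hadj' q').mp hp2.1
              exact absurd q'.end_mem_support hq2.2
      · have : u ∈ q.support := Walk.fst_mem_support_of_mem_edges q (Sym2.eq_swap ▸ he)
        exact absurd this hp2.2

lemma exists_cycle_of_list {q : ℕ} (w : V → V → ZMod q) (G : SimpleGraph V)
    {l : List V} (hne : l ≠ []) (h3 : 3 ≤ l.length) (hnd : l.Nodup)
    (hch : l.Chain' G.Adj) (hcl : G.Adj (l.getLast hne) (l.head hne)) :
    ∃ (u : V) (c : G.Walk u u), c.IsCycle ∧ walkWeight w c = cycSum w l := by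
  cases l with
  | nil => exact absurd rfl hne
  | cons a r =>
      have hch' : List.Chain G.Adj a r := hch
      set z := (a :: r).getLast (by simp) with hz
      have hcl' : G.Adj z a := hcl
      let p := walkOfChain G a r hch'
      have hsupp : p.support = a :: r := support_walkOfChain G a r hch'
      have hp : p.IsPath := by rw [Walk.isPath_def, hsupp]; exact hnd
      have hlen : p.length = r.length := by
        have := congrArg List.length hsupp
        rw [Walk.length_support] at this
        simpa using this
      have he : s(z, a) ∉ p.edges := by
        intro hmem
        have := length_eq_one_of_closing_edge p hp hmem
        rw [hlen] at this
        simp at h3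
        omega
      refine ⟨z, Walk.cons hcl' p, ?_, ?_⟩
      · exact SimpleGraph.Path.cons_isCycle ⟨p, hp⟩ hcl' he
      · show (List.map _ (Walk.darts (Walk.cons _ _))).sum = _
        rw [Walk.darts_cons, List.map_cons, List.sum_cons]
        rw [cycSum_cons]
        have := weight_walkOfChain w G a r hch'
        rw [show walkWeight w p = (List.map (fun d => w d.toProd.1 d.toProd.2) p.darts).sum from rfl] at this
        rw [this]
        exact add_comm _ _

lemma support_getLast? : ∀ {u v : V} (p : G.Walk u v), p.support.getLast? = some v := by
  intro u v p
  induction p with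
  | nil => rfl
  | @cons u b v hadj q ih =>
      rw [Walk.support_cons,
        List.getLast?_eq_getLast_of_ne_nil (by simp : (u :: q.support) ≠ []),
        List.getLast_cons q.support_ne_nil,
        ← List.getLast?_eq_getLast_of_ne_nil q.support_ne_nil]
      exact ih

end graph

theorem zmain : ∀ (N : ℕ) (A : Type) [AddCommGroup A] [Fintype A], Fintype.card A = N →
    ∀ (V : Type) (γ : V → V → A) (T : Finset V), max 2 (4 * N - 5) ≤ T.card →
    ∃ l : List V, l.Nodup ∧ (∀ v ∈ l, v ∈ T) ∧ 2 ≤ l.length ∧ cycSum γ l = 0 := by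
  intro N
  induction N using Nat.strong_induction_on with
  | _ N ih =>
    intro A _ _ hcard V γ T hT
    classical
    by_cases hN1 : N ≤ 1
    · -- trivial group case
      have hsub : Subsingleton A := by
        apply Fintype.card_le_one_iff_subsingleton.mp; omega
      have hT2 : 2 ≤ T.card := le_trans (le_max_left _ _) hT
      obtain ⟨x, hx, y, hy, hxy⟩ := (Finset.one_lt_card (s := T)).mp (by omega)
      refine ⟨[x, y], by simp [hxy], by simp [hx, hy], by simp, ?_⟩
      show γ x y + (γ y x + 0) = 0
      rw [Subsingleton.elim (γ x y) 0, Subsingleton.elim (γ y x) 0]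
      simp
    push_neg at hN1
    have hN2 : 2 ≤ N := hN1
    have hT' : 4 * N - 5 ≤ T.card := le_trans (le_max_right _ _) hT
    have hTpos : 0 < T.card := by omega
    obtain ⟨s₀, hs₀⟩ := Finset.card_pos.mp hTpos
    have closeout : ∀ (e : V) (used : Finset V) (S : Finset A), used ⊆ T →
        (∀ a ∈ S, ∃ p : List V, p.head? = some s₀ ∧ p.getLast? = some e ∧ p.Nodup ∧
          (∀ v ∈ p, v ∈ used) ∧ linsum γ p = a) →
        (e = s₀ → S.card < N) → N ≤ S.card →
        ∃ l : List V, l.Nodup ∧ (∀ v ∈ l, v ∈ T) ∧ 2 ≤ l.length ∧ cycSum γ l = 0 := by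
      intro e used S hsub hpath hes hge
      have hes' : e ≠ s₀ := by
        intro h
        have := hes h; omega
      have h1 : S.card ≤ Fintype.card A := by
        simpa using Finset.card_le_univ S
      have hSuniv : S = Finset.univ := Finset.eq_univ_of_card S (by omega)
      obtain ⟨p, hph, hpl, hpn, hpm, hps⟩ := hpath (- γ e s₀) (hSuniv ▸ Finset.mem_univ _)
      refine ⟨p, hpn, fun v hv => hsub (hpm v hv), ?_, ?_⟩
      · rcases p with _ | ⟨z, _ | ⟨b, r⟩⟩
        · simp at hph
        · simp at hph hpl
          rw [← hph, ← hpl] at hes'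
          simp at hes'
        · simp
      · rw [cycSum_eq γ hph hpl, hps]; simp
    have inner : ∀ (j : ℕ) (e : V) (used : Finset V) (S : Finset A),
        e ∈ used → s₀ ∈ used → used ⊆ T → S.Nonempty →
        (∀ a ∈ S, ∃ p : List V, p.head? = some s₀ ∧ p.getLast? = some e ∧ p.Nodup ∧
          (∀ v ∈ p, v ∈ used) ∧ linsum γ p = a) →
        used.card ≤ 2 * S.card - 1 → (e = s₀ → S.card < N) → N ≤ S.card + j →
        ∃ l : List V, l.Nodup ∧ (∀ v ∈ l, v ∈ T) ∧ 2 ≤ l.length ∧ cycSum γ l = 0 := by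
      intro j
      induction j with
      | zero =>
          intro e used S he hs hsubT hne hpath hcard2 hes hj
          exact closeout e used S hsubT hpath hes (by omega)
      | succ j ihj =>
          intro e used S he hs hsubT hne hpath hcard2 hes hj
          by_cases hfull : N ≤ S.card
          · exact closeout e used S hsubT hpath hes hfull
          push_neg at hfull
          have hSpos : 1 ≤ S.card := Finset.card_pos.mpr hne
          have husedT : used.card ≤ T.card := Finset.card_le_card hsubT
          have hfc : 2 * N - 2 ≤ (T \ used).card := by
            rw [Finset.card_sdiff_of_subset hsubT]; omega
          by_cases hgrow : ∃ w₁ ∈ T \ used, ∃ w₂ ∈ T \ used, w₁ ≠ w₂ ∧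
              ∃ a ∈ S, a + (γ e w₁ + γ w₁ w₂ - γ e w₂) ∉ S
          · -- GROWTH STEP
            obtain ⟨w₁, hw₁, w₂, hw₂, hww, a₀, ha₀, hgrow'⟩ := hgrow
            obtain ⟨hw₁T, hw₁u⟩ := Finset.mem_sdiff.mp hw₁
            obtain ⟨hw₂T, hw₂u⟩ := Finset.mem_sdiff.mp hw₂
            have hpne : ∀ a ∈ S, ∀ p : List V, p.head? = some s₀ → p ≠ [] := by
              intro a _ p hph hpe; rw [hpe] at hph; simp at hph
            set S' := S.image (· + γ e w₂) ∪ S.image (· + (γ e w₁ + γ w₁ w₂)) with hS'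
            have hcardS' : S.card + 1 ≤ S'.card := by
              have h1 : S.image (· + γ e w₂) ⊆ S' := Finset.subset_union_left
              have h2 : a₀ + (γ e w₁ + γ w₁ w₂) ∈ S' :=
                Finset.mem_union_right _ (Finset.mem_image_of_mem _ ha₀)
              have h3 : a₀ + (γ e w₁ + γ w₁ w₂) ∉ S.image (· + γ e w₂) := by
                intro hmem
                obtain ⟨b, hb, hbe⟩ := Finset.mem_image.mp hmem
                apply hgrow'
                have hb2 : b = a₀ + (γ e w₁ + γ w₁ w₂ - γ e w₂) := by
                  have h := eq_sub_of_add_eq hbe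
                  rw [h]; abel
                rw [← hb2]; exact hb
              have hss : S.image (· + γ e w₂) ⊂ S' :=
                (Finset.ssubset_iff_of_subset h1).mpr ⟨_, h2, h3⟩
              have himg : (S.image (· + γ e w₂)).card = S.card :=
                Finset.card_image_of_injective _ (add_left_injective _)
              have := Finset.card_lt_card hss
              omega
            apply ihj w₂ (used ∪ {w₁, w₂}) S'
            · simp
            · exact Finset.mem_union_left _ hs
            · apply Finset.union_subset hsubT
              intro z hz
              simp at hz
              rcases hz with rfl | rfl
              · exact hw₁T
              · exact hw₂T
            · exact Finset.Nonempty.mono (Finset.subset_union_left) (hne.image _)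
            · -- paths
              intro b hb
              rcases Finset.mem_union.mp hb with hb | hb
              · obtain ⟨a, ha, rfl⟩ := Finset.mem_image.mp hb
                obtain ⟨p, hph, hpl, hpn, hpm, hps⟩ := hpath a ha
                have hpne' : p ≠ [] := hpne a ha p hph
                have hw₂p : w₂ ∉ p := fun hmem => hw₂u (hpm _ hmem)
                refine ⟨p ++ [w₂], ?_, ?_, ?_, ?_, ?_⟩
                · rw [List.head?_append_of_ne_nil _ hpne']; exact hph
                · rw [List.getLast?_append_of_ne_nil _ (by simp)]; rfl
                · rw [List.nodup_append']
                  exact ⟨hpn, by simp, by simpa using hw₂p⟩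
                · intro v hv
                  rcases List.mem_append.mp hv with hv | hv
                  · exact Finset.mem_union_left _ (hpm v hv)
                  · simp at hv; simp [hv]
                · rw [linsum_append γ p [w₂] hpne' (by simp)]
                  rw [getLast_eq_of_getLast? hpne' hpl]
                  simp [hps]
              · obtain ⟨a, ha, rfl⟩ := Finset.mem_image.mp hb
                obtain ⟨p, hph, hpl, hpn, hpm, hps⟩ := hpath a ha
                have hpne' : p ≠ [] := hpne a ha p hph
                have hw₁p : w₁ ∉ p := fun hmem => hw₁u (hpm _ hmem)
                have hw₂p : w₂ ∉ p := fun hmem => hw₂u (hpm _ hmem)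
                refine ⟨p ++ [w₁, w₂], ?_, ?_, ?_, ?_, ?_⟩
                · rw [List.head?_append_of_ne_nil _ hpne']; exact hph
                · rw [List.getLast?_append_of_ne_nil _ (by simp)]; rfl
                · rw [List.nodup_append']
                  refine ⟨hpn, by simp [hww], ?_⟩
                  intro v hv
                  simp only [List.mem_cons, List.mem_singleton]
                  rintro (rfl | rfl | h)
                  · exact hw₁p hv
                  · exact hw₂p hv
                  · simp at h
                · intro v hv
                  rcases List.mem_append.mp hv with hv | hv
                  · exact Finset.mem_union_left _ (hpm v hv)
                  · simp at hv
                    rcases hv with rfl | rfl <;> simp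
                · rw [linsum_append γ p [w₁, w₂] hpne' (by simp)]
                  rw [getLast_eq_of_getLast? hpne' hpl]
                  show linsum γ p + γ e w₁ + (γ w₁ w₂ + 0) = a + (γ e w₁ + γ w₁ w₂)
                  rw [hps]; abel
            · -- card bound
              have hcu : (used ∪ {w₁, w₂}).card ≤ used.card + 2 := by
                have := Finset.card_union_le used {w₁, w₂}
                have h2 : ({w₁, w₂} : Finset V).card ≤ 2 := by
                  have := Finset.card_insert_le w₁ ({w₂} : Finset V)
                  simpa using this
                omega
              omega
            · intro hw
              subst hw
              exact absurd hs hw₂u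
            · omega
          · -- STUCK: recurse into stabilizer subgroup
            push_neg at hgrow
            set H : AddSubgroup A :=
              { carrier := {g | ∀ a ∈ S, a + g ∈ S}
                add_mem' := by
                  intro g1 g2 h1 h2 a ha
                  rw [← add_assoc]
                  exact h2 _ (h1 a ha)
                zero_mem' := by
                  intro a ha
                  simpa using ha
                neg_mem' := by
                  intro g hg a ha
                  have himg : S.image (· + g) = S := by
                    apply Finset.eq_of_subset_of_card_le
                    · intro b hb
                      obtain ⟨c, hc, rfl⟩ := Finset.mem_image.mp hb
                      exact hg c hc
                    · rw [Finset.card_image_of_injective _ (add_left_injective g)]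
                  have hmem : a ∈ S.image (· + g) := by rw [himg]; exact ha
                  obtain ⟨c, hc, hce⟩ := Finset.mem_image.mp hmem
                  have hc2 : c = a + -g := by
                    have h := eq_sub_of_add_eq hce
                    rw [h]; abel
                  rw [← hc2]; exact hc } with hHdef
            have hmemH : ∀ g : A, g ∈ H ↔ ∀ a ∈ S, a + g ∈ S := fun g => Iff.rfl
            haveI : Fintype H := Fintype.ofFinite _
            have hinj : Function.Injective ((↑) : H → A) := Subtype.val_injective
            have hle : Fintype.card H ≤ N := by
              rw [← hcard]; exact Fintype.card_le_of_injective _ hinj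
            have hcardHne : Fintype.card H ≠ N := by
              intro hEq
              have hbij : Function.Bijective ((↑) : H → A) :=
                (Fintype.bijective_iff_injective_and_card _).mpr ⟨hinj, by rw [hEq, hcard]⟩
              obtain ⟨a₀, ha₀⟩ := hne
              obtain ⟨b, hb⟩ : ∃ b : A, b ∉ S := by
                by_contra hall
                push_neg at hall
                have : S = Finset.univ := Finset.eq_univ_iff_forall.mpr hall
                rw [this, Finset.card_univ, hcard] at hfull
                omega
              obtain ⟨⟨g, hg⟩, hgval⟩ := hbij.2 (b - a₀)
              have hmem := hg a₀ ha₀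
              have hgv : g = b - a₀ := hgval
              rw [hgv] at hmem
              have : a₀ + (b - a₀) = b := by abel
              rw [this] at hmem
              exact hb hmem
            have hdvd : Fintype.card H ∣ N := by
              have := AddSubgroup.card_addSubgroup_dvd_card H
              rwa [Nat.card_eq_fintype_card, Nat.card_eq_fintype_card, hcard] at this
            have hHpos : 1 ≤ Fintype.card H := Fintype.card_pos
            have h2h : 2 * Fintype.card H ≤ N := by
              obtain ⟨k, hk⟩ := hdvd
              have hk2 : 2 ≤ k := by
                rcases Nat.lt_or_ge k 2 with hk' | hk'
                · interval_cases k <;> omega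
                · exact hk'
              calc 2 * Fintype.card H = Fintype.card H * 2 := by ring
                _ ≤ Fintype.card H * k := Nat.mul_le_mul_left _ hk2
                _ = N := hk.symm
            obtain ⟨l, hlnd, hlmem, hllen, hlcyc⟩ := ih (Fintype.card H) (by omega) H rfl V
              (fun u v => if hin : (γ e u + γ u v - γ e v) ∈ H then (⟨_, hin⟩ : H) else 0)
              (T \ used) (by rw [max_le_iff]; omega)
            refine ⟨l, hlnd, fun v hv => (Finset.mem_sdiff.mp (hlmem v hv)).1, hllen, ?_⟩
            have hfeq : γ = fun u v => (γ e u + γ u v - γ e v) +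
                ((fun t => - γ e t) u - (fun t => - γ e t) v) := by
              funext u v
              show γ u v = (γ e u + γ u v - γ e v) + (- γ e u - - γ e v)
              abel
            have hstep1 : cycSum γ l = cycSum (fun u v => γ e u + γ u v - γ e v) l := by
              conv_lhs => rw [hfeq]
              rw [cycSum_add, cycSum_sub_fun]
              simp
            have hstep2 : cycSum (fun u v => γ e u + γ u v - γ e v) l =
                cycSum (fun u v =>
                  ((if hin : (γ e u + γ u v - γ e v) ∈ H then (⟨_, hin⟩ : H) else 0 : H) : A)) l := by
              apply cycSum_congr l hllen hlnd
              intro u v hu hv huv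
              have hH : (γ e u + γ u v - γ e v) ∈ H :=
                hgrow u (hlmem u hu) v (hlmem v hv) huv
              rw [dif_pos hH]
            have hstep3 : cycSum (fun u v =>
                  ((if hin : (γ e u + γ u v - γ e v) ∈ H then (⟨_, hin⟩ : H) else 0 : H) : A)) l
                = ((cycSum (fun u v => if hin : (γ e u + γ u v - γ e v) ∈ H then (⟨_, hin⟩ : H) else 0) l : H) : A) := by
              exact cycSum_hom H.subtype _ l
            rw [hstep1, hstep2, hstep3, hlcyc]
            simp
    apply inner N s₀ {s₀} {0}
    · simp
    · simp
    · simpa using hs₀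
    · exact ⟨0, by simp⟩
    · intro a ha
      refine ⟨[s₀], rfl, rfl, by simp, by simp, ?_⟩
      simp at ha
      simp [ha]
    · simp
    · intro _
      simp only [Finset.card_singleton]
      omega
    · simp only [Finset.card_singleton]
      omega


lemma lin_assembly {K V A : Type} [AddCommGroup A] (Adj : V → V → Prop) (D : K → Set V)
    (hD : ∀ k k', k ≠ k' → Disjoint (D k) (D k'))
    (seg : K → K → K → List V) (X E : K → K → V) (w : V → V → A) (a c : K → K → A)
    (h1 : ∀ p k l, seg p k l ≠ [])
    (h2 : ∀ p k l, (seg p k l).Nodup)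
    (h3 : ∀ p k l, ∀ v ∈ seg p k l, v ∈ D k)
    (h4 : ∀ p k l, (seg p k l).Chain' Adj)
    (h5 : ∀ p k l, (seg p k l).head? = some (E p k))
    (h6 : ∀ p k l, (seg p k l).getLast? = some (X k l))
    (h7 : ∀ k l, Adj (X k l) (E k l))
    (h8 : ∀ p k l, linsum w (seg p k l) = a p k + c k l - w (X k l) (E k l))
    (h9 : ∀ p k l, 2 ≤ (seg p k l).length) :
    ∀ (ks : List K) (hk : ks ≠ []), ks.Nodup → ∀ p s,
    ∃ L : List V, L ≠ [] ∧ L.Nodup ∧ (∀ v ∈ L, ∃ k ∈ ks, v ∈ D k) ∧ L.Chain' Adj ∧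
      L.head? = some (E p (ks.head hk)) ∧ L.getLast? = some (X (ks.getLast hk) s) ∧
      2 * ks.length ≤ L.length ∧
      linsum w L = a p (ks.head hk) + linsum (fun u v => c u v + a u v) ks +
        (c (ks.getLast hk) s - w (X (ks.getLast hk) s) (E (ks.getLast hk) s)) := by
  intro ks
  induction ks with
  | nil => intro hk; exact absurd rfl hk
  | cons k₁ rest ihr =>
    intro hk hnd p s
    cases rest with
    | nil =>
        refine ⟨seg p k₁ s, h1 p k₁ s, h2 p k₁ s, ?_, h4 p k₁ s, ?_, ?_, ?_, ?_⟩
        · intro v hv; exact ⟨k₁, by simp, h3 p k₁ s v hv⟩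
        · simpa using h5 p k₁ s
        · simpa using h6 p k₁ s
        · simpa using h9 p k₁ s
        · rw [h8 p k₁ s]
          show _ = _ + linsum _ [k₁] + _
          simp [linsum]
          abel
    | cons k₂ t =>
        obtain ⟨L', hL'ne, hL'nd, hL'mem, hL'ch, hL'h, hL'l, hL'len, hL'sum⟩ :=
          ihr (by simp) (List.Nodup.of_cons hnd) k₁ s
        have hk₁ : k₁ ∉ k₂ :: t := (List.nodup_cons.mp hnd).1
        refine ⟨seg p k₁ k₂ ++ L', by simp [h1], ?_, ?_, ?_, ?_, ?_, ?_, ?_⟩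
        · rw [List.nodup_append']
          refine ⟨h2 p k₁ k₂, hL'nd, ?_⟩
          intro v hv hv'
          obtain ⟨k', hk', hvk'⟩ := hL'mem v hv'
          have hvk₁ := h3 p k₁ k₂ v hv
          have hne : k₁ ≠ k' := fun h => hk₁ (h ▸ hk')
          exact (hD k₁ k' hne).le_bot ⟨hvk₁, hvk'⟩ |>.elim
        · intro v hv
          rcases List.mem_append.mp hv with hv | hv
          · exact ⟨k₁, by simp, h3 p k₁ k₂ v hv⟩
          · obtain ⟨k', hk', hvk'⟩ := hL'mem v hv
            exact ⟨k', by simp [hk'], hvk'⟩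
        · apply List.isChain_append.mpr
          refine ⟨h4 p k₁ k₂, hL'ch, ?_⟩
          intro x hx y hy
          rw [h6 p k₁ k₂] at hx
          rw [hL'h] at hy
          simp at hx hy
          rw [← hx, ← hy] at *
          simpa [hx, hy] using h7 k₁ k₂
        · rw [List.head?_append_of_ne_nil _ (h1 p k₁ k₂)]
          simpa using h5 p k₁ k₂
        · rw [List.getLast?_append_of_ne_nil _ hL'ne, hL'l]
          have : (k₂ :: t).getLast (by simp) = (k₁ :: k₂ :: t).getLast (by simp) := by
            rw [List.getLast_cons (by simp : (k₂ :: t) ≠ [])]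
          rw [this]
        · have := @List.length_append _ (seg p k₁ k₂) L'
          have h9' := h9 p k₁ k₂
          simp only [List.length_cons] at hL'len ⊢
          omega
        · rw [linsum_append w (seg p k₁ k₂) L' (h1 p k₁ k₂) hL'ne]
          rw [getLast_eq_of_getLast? (h1 p k₁ k₂) (h6 p k₁ k₂)]
          rw [head_eq_of_head? hL'ne hL'h]
          rw [h8 p k₁ k₂, hL'sum]
          have hlast : (k₂ :: t).getLast (by simp) = (k₁ :: k₂ :: t).getLast (by simp) := by
            rw [List.getLast_cons (by simp : (k₂ :: t) ≠ [])]
          rw [hlast]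
          show _ = _ + linsum (fun u v => c u v + a u v) (k₁ :: k₂ :: t) + _
          rw [show linsum (fun u v => c u v + a u v) (k₁ :: k₂ :: t) =
            (c k₁ k₂ + a k₁ k₂) + linsum (fun u v => c u v + a u v) (k₂ :: t) from rfl]
          simp only [List.head_cons]
          abel


lemma ceil_bound (q : ℕ) (hq : 2 ≤ q) :
    max 2 (4 * q - 5) ≤ ⌈2 * (q : ℝ) * Real.log q⌉₊ := by
  have key : ((4 * q - 6 : ℕ) : ℝ) < 2 * (q : ℝ) * Real.log q := by
    have hc : ((4 * q - 6 : ℕ) : ℝ) = 4 * (q : ℝ) - 6 := by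
      have h6 : 6 ≤ 4 * q := by omega
      push_cast [Nat.cast_sub h6]
      ring
    rw [hc]
    rcases Nat.lt_or_ge q 5 with h5 | h5
    · interval_cases q
      · -- q = 2
        have h2 : (0.6931471803 : ℝ) < Real.log 2 := Real.log_two_gt_d9
        push_cast
        nlinarith
      · -- q = 3
        have h3 : (1 : ℝ) < Real.log 3 := by
          rw [Real.lt_log_iff_exp_lt (by norm_num)]
          have h := Real.exp_one_lt_d9
          linarith
        push_cast
        nlinarith
      · -- q = 4
        have h2 : (0.6931471803 : ℝ) < Real.log 2 := Real.log_two_gt_d9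
        have h4 : Real.log 4 = 2 * Real.log 2 := by
          rw [show (4 : ℝ) = 2 ^ 2 by norm_num, Real.log_pow]
          push_cast; ring
        push_cast
        rw [h4]
        nlinarith
    · -- q ≥ 5
      have hq0 : (0 : ℝ) < q := by positivity
      have h1 : Real.log (Real.exp 2 / q) ≤ Real.exp 2 / q - 1 :=
        Real.log_le_sub_one_of_pos (by positivity)
      have h2 : Real.log (Real.exp 2 / q) = 2 - Real.log q := by
        rw [Real.log_div (Real.exp_ne_zero 2) (ne_of_gt hq0), Real.log_exp]
      have h3 : Real.log q ≥ 3 - Real.exp 2 / q := by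
        rw [h2] at h1
        linarith
      have he : Real.exp 2 < 7.39 := by
        have h := Real.exp_one_lt_d9
        have : Real.exp 2 = Real.exp 1 * Real.exp 1 := by
          rw [← Real.exp_add]; norm_num
        rw [this]
        nlinarith [Real.exp_pos 1]
      have hq5 : (5 : ℝ) ≤ q := by exact_mod_cast h5
      have h4 : 2 * (q:ℝ) * Real.log q ≥ 6 * q - 2 * Real.exp 2 := by
        have := mul_le_mul_of_nonneg_left h3 (by positivity : (0:ℝ) ≤ 2 * q)
        have hcancel : 2 * (q:ℝ) * (Real.exp 2 / q) = 2 * Real.exp 2 := by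
          field_simp
        nlinarith [this]
      nlinarith
  have h1 : 4 * q - 6 < ⌈2 * (q : ℝ) * Real.log q⌉₊ := Nat.lt_ceil.mpr key
  rw [max_le_iff]
  omega


end ZWC

/-- For every integer `q ≥ 2`, with `g = 2 * ⌈2 q ln q⌉`, every graph containing `K_g`
as a minor, with edges weighted by elements of `ℤ/q`, contains a cycle whose total
weight is `0` modulo `q`. -/
theorem zero_weight_cycle_of_clique_minor
    (q : ℕ) (hq : 2 ≤ q) (V : Type) [Fintype V] (G : SimpleGraph V)
    (w : V → V → ZMod q) (hw : ∀ u v : V, w u v = w v u)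
    (hG : HasCliqueMinor G (2 * ⌈2 * (q : ℝ) * Real.log q⌉₊)) :
    ∃ (u : V) (c : G.Walk u u), c.IsCycle ∧ walkWeight w c = 0 := by
  classical
  haveI : NeZero q := ⟨by omega⟩
  set m := ⌈2 * (q : ℝ) * Real.log q⌉₊ with hm
  have hmq : max 2 (4 * q - 5) ≤ m := ZWC.ceil_bound q hq
  have hm2 : 1 ≤ m := by
    have : (2:ℕ) ≤ max 2 (4*q-5) := le_max_left _ _
    omega
  obtain ⟨B, hBne, hBconn, hBdisj, hBadj⟩ := hG
  have h2m : ∀ k : Fin m, 2 * k.val < 2 * m := fun k => by have := k.isLt; omega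
  have h2m1 : ∀ k : Fin m, 2 * k.val + 1 < 2 * m := fun k => by have := k.isLt; omega
  set i0 : Fin m → Fin (2 * m) := fun k => ⟨2 * k.val, h2m k⟩ with hi0def
  set i1 : Fin m → Fin (2 * m) := fun k => ⟨2 * k.val + 1, h2m1 k⟩ with hi1def
  have hi01 : ∀ k l, i0 k ≠ i1 l := by
    intro k l h
    have := congrArg Fin.val h
    simp [hi0def, hi1def] at this
    omega
  have hi00 : ∀ k l, k ≠ l → i0 k ≠ i0 l := by
    intro k l hkl h
    have := congrArg Fin.val h
    simp [hi0def] at this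
    exact hkl (Fin.ext (by omega))
  have hi11 : ∀ k l, k ≠ l → i1 k ≠ i1 l := by
    intro k l hkl h
    have := congrArg Fin.val h
    simp [hi1def] at this
    exact hkl (Fin.ext (by omega))
  obtain ⟨v₀, _⟩ := hBne (i0 ⟨0, by omega⟩)
  have hFex : ∀ i j : Fin (2*m), ∃ pq : V × V, i ≠ j →
      pq.1 ∈ B i ∧ pq.2 ∈ B j ∧ G.Adj pq.1 pq.2 := by
    intro i j
    by_cases h : i ≠ j
    · obtain ⟨u, hu, v, hv, huv⟩ := hBadj i j h
      exact ⟨(u, v), fun _ => ⟨hu, hv, huv⟩⟩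
    · exact ⟨(v₀, v₀), fun h' => absurd h' h⟩
  choose F hF using hFex
  have hPex : ∀ (i : Fin (2*m)) (aa bb : V), ∃ L : List V, aa ∈ B i → bb ∈ B i →
      (L ≠ [] ∧ L.head? = some aa ∧ L.getLast? = some bb ∧ L.Chain' G.Adj ∧ L.Nodup ∧
        ∀ v ∈ L, v ∈ B i) := by
    intro i aa bb
    by_cases hab : aa ∈ B i ∧ bb ∈ B i
    · obtain ⟨ha, hb⟩ := hab
      obtain ⟨wk⟩ := (hBconn i).preconnected ⟨aa, ha⟩ ⟨bb, hb⟩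
      let pth := wk.toPath
      let f : G.induce (B i) →g G := ⟨Subtype.val, fun {x y} h => by simpa using h⟩
      have hfinj : Function.Injective f := Subtype.val_injective
      let mp := SimpleGraph.Walk.map f pth.val
      refine ⟨mp.support, fun _ _ => ⟨mp.support_ne_nil, ?_, ?_, ?_, ?_, ?_⟩⟩
      · rw [mp.support_eq_cons]; rfl
      · exact ZWC.support_getLast? mp
      · exact SimpleGraph.Walk.isChain_adj_support mp
      · exact (SimpleGraph.Walk.isPath_def _).mp
          (SimpleGraph.Walk.map_isPath_of_injective hfinj pth.2)
      · intro v hv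
        rw [SimpleGraph.Walk.support_map] at hv
        obtain ⟨⟨z, hz⟩, _, rfl⟩ := List.mem_map.mp hv
        exact hz
    · exact ⟨[], fun h1 h2 => absurd ⟨h1, h2⟩ hab⟩
  choose P hP using hPex
  set xF : Fin (2*m) → Fin (2*m) → V := fun i j => (F i j).1 with hxdef
  set yF : Fin (2*m) → Fin (2*m) → V := fun i j => (F i j).2 with hydef
  set bA : Fin m → V := fun k => xF (i0 k) (i1 k) with hbAdef
  set bC : Fin m → V := fun k => yF (i0 k) (i1 k) with hbCdef
  set XX : Fin m → Fin m → V := fun k l => xF (i1 k) (i0 l) with hXXdef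
  set EE : Fin m → Fin m → V := fun p k => yF (i1 p) (i0 k) with hEEdef
  have hbr : ∀ k : Fin m, bA k ∈ B (i0 k) ∧ bC k ∈ B (i1 k) ∧ G.Adj (bA k) (bC k) :=
    fun k => hF (i0 k) (i1 k) (hi01 k k)
  have harc : ∀ k l : Fin m, XX k l ∈ B (i1 k) ∧ EE k l ∈ B (i0 l) ∧
      G.Adj (XX k l) (EE k l) := fun k l => hF (i1 k) (i0 l) ((hi01 l k).symm)
  set LA : Fin m → Fin m → List V := fun p k => P (i0 k) (EE p k) (bA k) with hLAdef
  set LC : Fin m → Fin m → List V := fun k l => P (i1 k) (bC k) (XX k l) with hLCdef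
  have hLA : ∀ p k, (LA p k ≠ [] ∧ (LA p k).head? = some (EE p k) ∧
      (LA p k).getLast? = some (bA k) ∧ (LA p k).Chain' G.Adj ∧ (LA p k).Nodup ∧
      ∀ v ∈ LA p k, v ∈ B (i0 k)) :=
    fun p k => hP (i0 k) (EE p k) (bA k) (harc p k).2.1 (hbr k).1
  have hLC : ∀ k l, (LC k l ≠ [] ∧ (LC k l).head? = some (bC k) ∧
      (LC k l).getLast? = some (XX k l) ∧ (LC k l).Chain' G.Adj ∧ (LC k l).Nodup ∧
      ∀ v ∈ LC k l, v ∈ B (i1 k)) :=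
    fun k l => hP (i1 k) (bC k) (XX k l) (hbr k).2.1 (harc k l).1
  set seg : Fin m → Fin m → Fin m → List V := fun p k l => LA p k ++ LC k l with hsegdef
  set aF : Fin m → Fin m → ZMod q := fun p k => ZWC.linsum w (LA p k) + w (bA k) (bC k)
    with haFdef
  set cF : Fin m → Fin m → ZMod q := fun k l => ZWC.linsum w (LC k l) + w (XX k l) (EE k l)
    with hcFdef
  have hACdisj : ∀ k, Disjoint (B (i0 k)) (B (i1 k)) := fun k => hBdisj _ _ (hi01 k k)
  -- assembly
  have assembly := ZWC.lin_assembly G.Adj (fun k => B (i0 k) ∪ B (i1 k))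
    (by
      intro k k' hkk
      rw [Set.disjoint_union_left]
      constructor <;> rw [Set.disjoint_union_right] <;> constructor
      · exact hBdisj _ _ (hi00 _ _ hkk)
      · exact hBdisj _ _ (hi01 k k')
      · exact hBdisj _ _ ((hi01 k' k).symm)
      · exact hBdisj _ _ (hi11 _ _ hkk))
    seg XX EE w aF cF
    (by intro p k l; simp [hsegdef, (hLA p k).1])
    (by
      intro p k l
      rw [hsegdef]
      show (LA p k ++ LC k l).Nodup
      rw [List.nodup_append']
      refine ⟨(hLA p k).2.2.2.2.1, (hLC k l).2.2.2.2.1, ?_⟩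
      intro v hv hv'
      exact (hACdisj k).le_bot ⟨(hLA p k).2.2.2.2.2 v hv, (hLC k l).2.2.2.2.2 v hv'⟩ |>.elim)
    (by
      intro p k l v hv
      show v ∈ B (i0 k) ∪ B (i1 k)
      rcases List.mem_append.mp hv with hv | hv
      · exact Or.inl ((hLA p k).2.2.2.2.2 v hv)
      · exact Or.inr ((hLC k l).2.2.2.2.2 v hv))
    (by
      intro p k l
      show (LA p k ++ LC k l).Chain' G.Adj
      apply List.isChain_append.mpr
      refine ⟨(hLA p k).2.2.2.1, (hLC k l).2.2.2.1, ?_⟩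
      intro x hx y hy
      rw [(hLA p k).2.2.1] at hx
      rw [(hLC k l).2.1] at hy
      simp at hx hy
      rw [← hx, ← hy]
      exact (hbr k).2.2)
    (by
      intro p k l
      show (LA p k ++ LC k l).head? = some (EE p k)
      rw [List.head?_append_of_ne_nil _ (hLA p k).1]
      exact (hLA p k).2.1)
    (by
      intro p k l
      show (LA p k ++ LC k l).getLast? = some (XX k l)
      rw [List.getLast?_append_of_ne_nil _ (hLC k l).1]
      exact (hLC k l).2.2.1)
    (fun k l => (harc k l).2.2)
    (by
      intro p k l
      show ZWC.linsum w (LA p k ++ LC k l) = _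
      rw [ZWC.linsum_append w (LA p k) (LC k l) (hLA p k).1 (hLC k l).1]
      rw [ZWC.getLast_eq_of_getLast? (hLA p k).1 (hLA p k).2.2.1]
      rw [ZWC.head_eq_of_head? (hLC k l).1 (hLC k l).2.1]
      rw [haFdef, hcFdef]
      exact eq_sub_of_add_eq (by rw [add_assoc, add_assoc]))
    (by
      intro p k l
      show 2 ≤ (LA p k ++ LC k l).length
      rw [List.length_append]
      have h1 := List.length_pos_iff.mpr (hLA p k).1
      have h2 := List.length_pos_iff.mpr (hLC k l).1
      omega)
  -- apply the digraph theorem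
  obtain ⟨ks, hksnd, _, hkslen, hkscyc⟩ := ZWC.zmain q (ZMod q) (ZMod.card q) (Fin m)
    (fun k l => cF k l + aF k l) Finset.univ
    (by rw [Finset.card_univ, Fintype.card_fin]; exact hmq)
  have hksne : ks ≠ [] := by
    intro h; rw [h] at hkslen; simp at hkslen
  obtain ⟨L, hLne, hLnd, hLmem, hLch, hLh, hLl, hLlen, hLsum⟩ :=
    assembly ks hksne hksnd (ks.getLast hksne) (ks.head hksne)
  have hcl : G.Adj (L.getLast hLne) (L.head hLne) := by
    rw [ZWC.getLast_eq_of_getLast? hLne hLl, ZWC.head_eq_of_head? hLne hLh]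
    exact (harc _ _).2.2
  have hlen3 : 3 ≤ L.length := by omega
  obtain ⟨u, cyc, hcyc, hwt⟩ := ZWC.exists_cycle_of_list w G hLne hlen3 hLnd hLch hcl
  refine ⟨u, cyc, hcyc, ?_⟩
  rw [hwt]
  have e1 : ZWC.cycSum w L = ZWC.linsum w L +
      w (XX (ks.getLast hksne) (ks.head hksne)) (EE (ks.getLast hksne) (ks.head hksne)) :=
    ZWC.cycSum_eq w hLh hLl
  have e2 : ZWC.cycSum (fun k l => cF k l + aF k l) ks =
      ZWC.linsum (fun k l => cF k l + aF k l) ks +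
      (cF (ks.getLast hksne) (ks.head hksne) + aF (ks.getLast hksne) (ks.head hksne)) :=
    ZWC.cycSum_eq _ (List.head?_eq_head hksne) (List.getLast?_eq_getLast_of_ne_nil hksne)
  have hz : ZWC.linsum (fun k l => cF k l + aF k l) ks +
      (cF (ks.getLast hksne) (ks.head hksne) + aF (ks.getLast hksne) (ks.head hksne)) = 0 := by
    rw [← e2]; exact hkscyc
  rw [e1, hLsum]
  calc aF (ks.getLast hksne) (ks.head hksne) +
        ZWC.linsum (fun u v => cF u v + aF u v) ks +
        (cF (ks.getLast hksne) (ks.head hksne) -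
          w (XX (ks.getLast hksne) (ks.head hksne)) (EE (ks.getLast hksne) (ks.head hksne))) +
        w (XX (ks.getLast hksne) (ks.head hksne)) (EE (ks.getLast hksne) (ks.head hksne))
      = ZWC.linsum (fun k l => cF k l + aF k l) ks +
        (cF (ks.getLast hksne) (ks.head hksne) + aF (ks.getLast hksne) (ks.head hksne)) := by
        abel
    _ = 0 := hz
end
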